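/- arXiv:1203.2282 — 17 statements merged into one kernel-verified Lean document; each statement's English description precedes it below -/
import Mathlib

section
/- If f : [a,b] → ℝ is convex with a < b, then f((a+b)/2) ≤ (1/(b-a)) ∫_a^b f(x) dx ≤ (f(a)+f(b))/2. -/
open MeasureTheory intervalIntegral

theorem hermite_hadamard (a b : ℝ) (hab : a < b) (f : ℝ → ℝ)
    (hconv : ConvexOn ℝ (Set.Icc a b) f)
    (hint : IntervalIntegrable f volume a b) :
    f ((a + b) / 2) ≤ (1 / (b - a)) * ∫ x in a..b, f x ∧
    (1 / (b - a)) * ∫ x in a..b, f x ≤ (f a + f b) / 2 := by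
  have hba : (0:ℝ) < b - a := by linarith
  have hrefl : IntervalIntegrable (fun x => f (a + b - x)) volume a b := by
    have := hint.comp_sub_left (a + b)
    simpa [show a + b - a = b by ring, show a + b - b = a by ring] using this.symm
  -- reflected integral equals the original
  have hrefl_int : (∫ x in a..b, f (a + b - x)) = ∫ x in a..b, f x := by
    rw [intervalIntegral.integral_comp_sub_left f (a + b)]
    norm_num
  -- Left inequality
  have hL : (b - a) * f ((a + b) / 2) ≤ ∫ x in a..b, f x := by
    have key : ∀ x ∈ Set.Icc a b,
        f ((a + b) / 2) ≤ (f x + f (a + b - x)) / 2 := by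
      intro x hx
      have hx' : a + b - x ∈ Set.Icc a b := by
        constructor <;> [linarith [hx.2]; linarith [hx.1]]
      have h := hconv.2 hx hx' (by norm_num : (0:ℝ) ≤ 1/2) (by norm_num : (0:ℝ) ≤ 1/2)
        (by norm_num)
      have hm : (1/2 : ℝ) • x + (1/2 : ℝ) • (a + b - x) = (a + b) / 2 := by
        simp [smul_eq_mul]; ring
      rw [hm] at h
      rw [show (f x + f (a + b - x)) / 2 = (1/2:ℝ) • f x + (1/2:ℝ) • f (a+b-x) by simp [smul_eq_mul]; ring]
      exact h
    have hmono : (∫ x in a..b, f ((a + b) / 2)) ≤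
        ∫ x in a..b, (f x + f (a + b - x)) / 2 := by
      apply intervalIntegral.integral_mono_on hab.le intervalIntegrable_const
        ((hint.add hrefl).div_const 2)
      exact key
    rw [intervalIntegral.integral_const] at hmono
    have : (∫ x in a..b, (f x + f (a + b - x)) / 2)
        = ((∫ x in a..b, f x) + ∫ x in a..b, f (a + b - x)) / 2 := by
      rw [intervalIntegral.integral_div, intervalIntegral.integral_add hint hrefl]
    rw [this, hrefl_int] at hmono
    simpa [smul_eq_mul] using hmono.trans_eq (by ring)
  -- Right inequality
  have hR : (∫ x in a..b, f x) ≤ (b - a) * ((f a + f b) / 2) := by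
    have key : ∀ x ∈ Set.Icc a b,
        f x ≤ ((b - x) * f a + (x - a) * f b) / (b - a) := by
      intro x hx
      have ha' : a ∈ Set.Icc a b := Set.left_mem_Icc.2 hab.le
      have hb' : b ∈ Set.Icc a b := Set.right_mem_Icc.2 hab.le
      have ht1 : (0:ℝ) ≤ (b - x) / (b - a) := div_nonneg (by linarith [hx.2]) hba.le
      have ht2 : (0:ℝ) ≤ (x - a) / (b - a) := div_nonneg (by linarith [hx.1]) hba.le
      have hsum : (b - x) / (b - a) + (x - a) / (b - a) = 1 := by
        field_simp; ring
      have h := hconv.2 ha' hb' ht1 ht2 hsum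
      have hxeq : ((b - x) / (b - a)) • a + ((x - a) / (b - a)) • b = x := by
        rw [smul_eq_mul, smul_eq_mul]; field_simp; ring
      rw [hxeq] at h
      calc f x ≤ ((b - x) / (b - a)) • f a + ((x - a) / (b - a)) • f b := h
        _ = ((b - x) * f a + (x - a) * f b) / (b - a) := by
            simp [smul_eq_mul]; ring
    have hcont : IntervalIntegrable (fun x => ((b - x) * f a + (x - a) * f b) / (b - a))
        volume a b := (Continuous.intervalIntegrable (by continuity) a b)
    have hmono := intervalIntegral.integral_mono_on hab.le hint hcont key
    have hcomp : (∫ x in a..b, ((b - x) * f a + (x - a) * f b) / (b - a))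
        = (b - a) * ((f a + f b) / 2) := by
      have h1 : (∫ x in a..b, ((b - x) * f a + (x - a) * f b) / (b - a))
          = (∫ x in a..b, ((b - x) * f a + (x - a) * f b)) / (b - a) :=
        intervalIntegral.integral_div _ _
      have h2 : (∫ x in a..b, ((b - x) * f a + (x - a) * f b))
          = (∫ x in a..b, ((f b - f a) * x + (b * f a - a * f b))) := by
        congr 1; funext x; ring
      rw [h1, h2]
      have h3 : (∫ x in a..b, ((f b - f a) * x + (b * f a - a * f b)))
          = (f b - f a) * ((b^2 - a^2)/2) + (b * f a - a * f b) * (b - a) := by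
        rw [intervalIntegral.integral_add
          ((intervalIntegral.intervalIntegrable_id).const_mul _)
          intervalIntegrable_const]
        rw [intervalIntegral.integral_const_mul, integral_id,
          intervalIntegral.integral_const]
        simp [smul_eq_mul]; ring
      rw [h3]
      field_simp
      ring
    rw [hcomp] at hmono
    exact hmono
  constructor
  · rw [div_mul_eq_mul_div, le_div_iff₀ hba, one_mul]
    linarith [hL]
  · rw [div_mul_eq_mul_div, div_le_iff₀ hba, one_mul]
    linarith [hR]
end

section
/- If f is differentiable on an open interval containing [a,b] with a < b and f' is integrable on [a,b], then (1/(b-a)) ∫_a^b f(x) dx − f((a+b)/2) = (b-a) [ ∫_0^{1/2} t·f'(ta+(1-t)b) dt + ∫_{1/2}^1 (t-1)·f'(ta+(1-t)b) dt ]. -/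
open MeasureTheory intervalIntegral

theorem midpoint_identity (a b : ℝ) (hab : a < b) (f f' : ℝ → ℝ)
    (hf : ∀ x ∈ Set.Icc a b, HasDerivAt f (f' x) x)
    (hint : IntervalIntegrable f' volume a b) :
    (1 / (b - a)) * (∫ x in a..b, f x) - f ((a + b) / 2) =
      (b - a) * ((∫ t in (0:ℝ)..(1/2), t * f' (t * a + (1 - t) * b)) +
        ∫ t in (1/2:ℝ)..1, (t - 1) * f' (t * a + (1 - t) * b)) := by
  have hne : a - b ≠ 0 := by linarith
  set l : ℝ → ℝ := fun t => t * a + (1 - t) * b with hl_def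
  have hmem : ∀ t ∈ Set.Icc (0:ℝ) 1, l t ∈ Set.Icc a b := by
    intro t ht
    obtain ⟨h0, h1⟩ := ht
    constructor <;> simp only [hl_def] <;> nlinarith
  have hl : ∀ t : ℝ, HasDerivAt l (a - b) t := by
    intro t
    have := ((hasDerivAt_id t).mul_const a).add
      (((hasDerivAt_const t (1:ℝ)).sub (hasDerivAt_id t)).mul_const b)
    convert this using 1
    all_goals first | rfl | ring
  set g : ℝ → ℝ := fun t => f (l t) with hg_def
  have hg : ∀ t ∈ Set.Icc (0:ℝ) 1, HasDerivAt g ((a - b) * f' (l t)) t := by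
    intro t ht
    have := (hf (l t) (hmem t ht)).comp t (hl t)
    simpa [hg_def, mul_comm, Function.comp_def] using this
  -- integrability of t ↦ f' (l t) on [0,1]
  have hcint : IntervalIntegrable (fun t => f' ((a - b) * t + b)) volume 0 1 := by
    have h1 := (hint.comp_add_right b).comp_mul_left (c := a - b)
    simpa [div_self hne] using h1.symm
  have hcint' : IntervalIntegrable (fun t => f' (l t)) volume 0 1 := by
    have : (fun t => f' (l t)) = fun t => f' ((a - b) * t + b) := by
      funext t; simp only [hl_def]; ring_nf
    rw [this]; exact hcint
  have hsub1 : Set.uIcc (0:ℝ) (1/2) ⊆ Set.uIcc (0:ℝ) 1 := by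
    rw [Set.uIcc_of_le (by norm_num : (0:ℝ) ≤ 1/2), Set.uIcc_of_le (by norm_num : (0:ℝ) ≤ 1)]
    exact Set.Icc_subset_Icc le_rfl (by norm_num)
  have hsub2 : Set.uIcc (1/2:ℝ) 1 ⊆ Set.uIcc (0:ℝ) 1 := by
    rw [Set.uIcc_of_le (by norm_num : (1/2:ℝ) ≤ 1), Set.uIcc_of_le (by norm_num : (0:ℝ) ≤ 1)]
    exact Set.Icc_subset_Icc (by norm_num) le_rfl
  have hsubIcc1 : Set.uIcc (0:ℝ) (1/2) ⊆ Set.Icc (0:ℝ) 1 := by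
    rwa [Set.uIcc_of_le (by norm_num : (0:ℝ) ≤ 1)] at hsub1
  have hsubIcc2 : Set.uIcc (1/2:ℝ) 1 ⊆ Set.Icc (0:ℝ) 1 := by
    rwa [Set.uIcc_of_le (by norm_num : (0:ℝ) ≤ 1)] at hsub2
  have hci1 : IntervalIntegrable (fun t => (a - b) * f' (l t)) volume 0 (1/2) :=
    ((hcint'.mono_set hsub1).const_mul (a - b))
  have hci2 : IntervalIntegrable (fun t => (a - b) * f' (l t)) volume (1/2) 1 :=
    ((hcint'.mono_set hsub2).const_mul (a - b))
  have hone1 : IntervalIntegrable (fun _ : ℝ => (1:ℝ)) volume 0 (1/2) :=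
    intervalIntegrable_const
  have hone2 : IntervalIntegrable (fun _ : ℝ => (1:ℝ)) volume (1/2) 1 :=
    intervalIntegrable_const
  -- integration by parts on [0, 1/2]
  have ibp1 : ∫ t in (0:ℝ)..(1/2), t * ((a - b) * f' (l t)) =
      (1/2) * g (1/2) - 0 * g 0 - ∫ t in (0:ℝ)..(1/2), 1 * g t := by
    apply intervalIntegral.integral_mul_deriv_eq_deriv_mul
    · intro x _; simpa using hasDerivAt_id' x
    · intro x hx; exact hg x (hsubIcc1 hx)
    · exact hone1
    · exact hci1
  -- integration by parts on [1/2, 1]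
  have ibp2 : ∫ t in (1/2:ℝ)..1, (t - 1) * ((a - b) * f' (l t)) =
      (1 - 1) * g 1 - (1/2 - 1) * g (1/2) - ∫ t in (1/2:ℝ)..1, 1 * g t := by
    apply intervalIntegral.integral_mul_deriv_eq_deriv_mul
    · intro x _; simpa using (hasDerivAt_id x).sub_const 1
    · intro x hx; exact hg x (hsubIcc2 hx)
    · exact hone2
    · exact hci2
  -- g is continuous on [0,1]
  have hgc : ContinuousOn g (Set.Icc (0:ℝ) 1) := by
    intro t ht
    exact (((hf (l t) (hmem t ht)).continuousAt).comp (hl t).continuousAt).continuousWithinAt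
  have hgint1 : IntervalIntegrable g volume 0 (1/2) :=
    (hgc.mono hsubIcc1).intervalIntegrable
  have hgint2 : IntervalIntegrable g volume (1/2) 1 :=
    (hgc.mono hsubIcc2).intervalIntegrable
  have hadd : (∫ t in (0:ℝ)..(1/2), g t) + ∫ t in (1/2:ℝ)..1, g t = ∫ t in (0:ℝ)..1, g t :=
    integral_add_adjacent_intervals hgint1 hgint2
  -- substitution
  have hsubst : ∫ t in (0:ℝ)..1, g t = (b - a)⁻¹ * ∫ x in a..b, f x := by
    have h1 : ∫ t in (0:ℝ)..1, g t = ∫ t in (0:ℝ)..1, f ((a - b) * t + b) := by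
      apply integral_congr; intro t _; simp only [hg_def, hl_def]; ring_nf
    rw [h1, integral_comp_mul_add f hne b,
      show (a - b) * 0 + b = b by ring, show (a - b) * 1 + b = a by ring,
      integral_symm, smul_eq_mul]
    have hba : b - a ≠ 0 := by linarith
    field_simp
    ring
  -- pull constants out of the target integrals
  have e1 : ∫ t in (0:ℝ)..(1/2), t * ((a - b) * f' (l t)) =
      (a - b) * ∫ t in (0:ℝ)..(1/2), t * f' (l t) := by
    rw [← intervalIntegral.integral_const_mul]
    apply integral_congr; intro x _; ring
  have e2 : ∫ t in (1/2:ℝ)..1, (t - 1) * ((a - b) * f' (l t)) =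
      (a - b) * ∫ t in (1/2:ℝ)..1, (t - 1) * f' (l t) := by
    rw [← intervalIntegral.integral_const_mul]
    apply integral_congr; intro x _; ring
  have hmid : g (1/2) = f ((a + b) / 2) := by
    simp only [hg_def, hl_def]; norm_num; ring_nf
  rw [e1] at ibp1
  rw [e2] at ibp2
  simp only [one_mul, zero_mul, sub_zero] at ibp1 ibp2
  rw [← hadd] at hsubst
  rw [← hmid]
  show _ = (b - a) * ((∫ t in (0:ℝ)..(1/2), t * f' (l t)) +
      ∫ t in (1/2:ℝ)..1, (t - 1) * f' (l t))
  linear_combination ibp1 + ibp2 - hsubst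
end

section
/- If f is differentiable on an open interval containing [a,b] with a < b and |f'| is convex on [a,b], then |(1/(b-a)) ∫_a^b f(x) dx − f((a+b)/2)| ≤ ((b-a)/4) · (|f'(a)| + |f'(b)|)/2. -/
open MeasureTheory intervalIntegral

private lemma poly_integral1 (a b A B c d : ℝ) :
    ∫ x in c..d, (x - a) * ((b - x) * A + (x - a) * B) =
      (A * (b * d ^ 2 / 2 - a * b * d - d ^ 3 / 3 + a * d ^ 2 / 2) + B * (d - a) ^ 3 / 3)
      - (A * (b * c ^ 2 / 2 - a * b * c - c ^ 3 / 3 + a * c ^ 2 / 2) + B * (c - a) ^ 3 / 3) := by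
  apply intervalIntegral.integral_eq_sub_of_hasDerivAt
  · intro x _
    have h1 : HasDerivAt (fun x : ℝ => x ^ 2) (2 * x) x := by simpa using hasDerivAt_pow 2 x
    have h3 : HasDerivAt (fun x : ℝ => x ^ 3) (3 * x ^ 2) x := by simpa using hasDerivAt_pow 3 x
    have hx1 : HasDerivAt (fun x : ℝ => x) 1 x := hasDerivAt_id x
    have hcube : HasDerivAt (fun x : ℝ => (x - a) ^ 3) ((3 : ℕ) * (x - a) ^ 2 * 1) x :=
      ((hasDerivAt_id x).sub_const a).pow 3
    have H := ((((((h1.const_mul b).div_const 2).sub (hx1.const_mul (a * b))).sub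
      (h3.div_const 3)).add ((h1.const_mul a).div_const 2)).const_mul A).add
      ((hcube.const_mul B).div_const 3)
    convert H using 1
    · funext y; simp only [Pi.add_apply, Pi.sub_apply, Pi.neg_apply]
    push_cast
    ring
  · apply Continuous.intervalIntegrable
    fun_prop

private lemma poly_integral2 (a b A B c d : ℝ) :
    ∫ x in c..d, (b - x) * ((b - x) * A + (x - a) * B) =
      (A * (-(b - d) ^ 3 / 3) + B * (b * d ^ 2 / 2 - a * b * d - d ^ 3 / 3 + a * d ^ 2 / 2))
      - (A * (-(b - c) ^ 3 / 3) + B * (b * c ^ 2 / 2 - a * b * c - c ^ 3 / 3 + a * c ^ 2 / 2)) := by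
  apply intervalIntegral.integral_eq_sub_of_hasDerivAt
  · intro x _
    have h1 : HasDerivAt (fun x : ℝ => x ^ 2) (2 * x) x := by simpa using hasDerivAt_pow 2 x
    have h3 : HasDerivAt (fun x : ℝ => x ^ 3) (3 * x ^ 2) x := by simpa using hasDerivAt_pow 3 x
    have hx1 : HasDerivAt (fun x : ℝ => x) 1 x := hasDerivAt_id x
    have hcube : HasDerivAt (fun x : ℝ => (b - x) ^ 3) ((3 : ℕ) * (b - x) ^ 2 * (-1)) x :=
      ((hasDerivAt_id x).const_sub b).pow 3
    have H := (((hcube.neg.div_const 3).const_mul A).add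
      ((((((h1.const_mul b).div_const 2).sub (hx1.const_mul (a * b))).sub
        (h3.div_const 3)).add ((h1.const_mul a).div_const 2)).const_mul B))
    convert H using 1
    · funext y; simp only [Pi.add_apply, Pi.sub_apply, Pi.neg_apply]
    push_cast
    ring
  · apply Continuous.intervalIntegrable
    fun_prop

theorem kirmaci_midpoint (a b : ℝ) (hab : a < b) (f f' : ℝ → ℝ)
    (hf : ∀ x ∈ Set.Icc a b, HasDerivAt f (f' x) x)
    (hint : IntervalIntegrable f' volume a b)
    (hconv : ConvexOn ℝ (Set.Icc a b) (fun x => |f' x|)) :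
    |(1 / (b - a)) * (∫ x in a..b, f x) - f ((a + b) / 2)| ≤
      ((b - a) / 4) * ((|f' a| + |f' b|) / 2) := by
  set m : ℝ := (a + b) / 2 with hm
  set A : ℝ := |f' a| with hA
  set B : ℝ := |f' b| with hB
  have hba : (0 : ℝ) < b - a := by linarith
  have ham : a ≤ m := by simp only [hm]; linarith
  have hmb : m ≤ b := by simp only [hm]; linarith
  have hsub1 : Set.uIcc a m ⊆ Set.Icc a b := by
    rw [Set.uIcc_of_le ham]; exact Set.Icc_subset_Icc le_rfl hmb
  have hsub2 : Set.uIcc m b ⊆ Set.Icc a b := by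
    rw [Set.uIcc_of_le hmb]; exact Set.Icc_subset_Icc ham le_rfl
  have hsubu1 : Set.uIcc a m ⊆ Set.uIcc a b := by
    rw [Set.uIcc_of_le hab.le]; exact hsub1
  have hsubu2 : Set.uIcc m b ⊆ Set.uIcc a b := by
    rw [Set.uIcc_of_le hab.le]; exact hsub2
  have hcont : ContinuousOn f (Set.Icc a b) := fun x hx =>
    (hf x hx).continuousAt.continuousWithinAt
  have hfint1 : IntervalIntegrable f volume a m :=
    (hcont.mono hsub1).intervalIntegrable
  have hfint2 : IntervalIntegrable f volume m b :=
    (hcont.mono hsub2).intervalIntegrable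
  have hint1 : IntervalIntegrable f' volume a m := hint.mono_set hsubu1
  have hint2 : IntervalIntegrable f' volume m b := hint.mono_set hsubu2
  -- integration by parts on [a, m]
  have IBP1 : ∫ x in a..m, (x - a) * f' x =
      (m - a) * f m - (a - a) * f a - ∫ x in a..m, 1 * f x := by
    apply intervalIntegral.integral_mul_deriv_eq_deriv_mul
    · intro x _; simpa using (hasDerivAt_id x).sub_const a
    · intro x hx; exact hf x (hsub1 hx)
    · exact intervalIntegrable_const
    · exact hint1
  have IBP2 : ∫ x in m..b, (x - b) * f' x =
      (b - b) * f b - (m - b) * f m - ∫ x in m..b, 1 * f x := by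
    apply intervalIntegral.integral_mul_deriv_eq_deriv_mul
    · intro x _; simpa using (hasDerivAt_id x).sub_const b
    · intro x hx; exact hf x (hsub2 hx)
    · exact intervalIntegrable_const
    · exact hint2
  have hsplit : (∫ x in a..m, f x) + ∫ x in m..b, f x = ∫ x in a..b, f x :=
    intervalIntegral.integral_add_adjacent_intervals hfint1 hfint2
  have key : (b - a) * f m - (∫ x in a..b, f x) =
      (∫ x in a..m, (x - a) * f' x) + ∫ x in m..b, (x - b) * f' x := by
    rw [IBP1, IBP2]
    simp only [one_mul]
    have : (∫ x in a..m, f x) + ∫ x in m..b, f x = ∫ x in a..b, f x := hsplit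
    rw [← this]
    simp only [hm]
    ring
  -- convexity chord bound
  have chord : ∀ x ∈ Set.Icc a b, |f' x| ≤ ((b - x) * A + (x - a) * B) / (b - a) := by
    intro x hx
    have ht : (0 : ℝ) ≤ (b - x) / (b - a) := by
      apply div_nonneg _ hba.le; linarith [hx.2]
    have hs : (0 : ℝ) ≤ (x - a) / (b - a) := by
      apply div_nonneg _ hba.le; linarith [hx.1]
    have hts : (b - x) / (b - a) + (x - a) / (b - a) = 1 := by
      field_simp
      ring
    have hcomb := hconv.2 (Set.left_mem_Icc.2 hab.le) (Set.right_mem_Icc.2 hab.le) ht hs hts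
    have hxeq : ((b - x) / (b - a)) • a + ((x - a) / (b - a)) • b = x := by
      simp only [smul_eq_mul]
      field_simp
      ring
    rw [hxeq] at hcomb
    simp only [smul_eq_mul] at hcomb
    calc |f' x| ≤ (b - x) / (b - a) * A + (x - a) / (b - a) * B := hcomb
      _ = ((b - x) * A + (x - a) * B) / (b - a) := by ring
  -- integrability of the pieces
  have hcontc : Continuous fun x : ℝ => ((b - x) * A + (x - a) * B) / (b - a) := by
    fun_prop
  have hci1 : IntervalIntegrable
      (fun x => (x - a) * (((b - x) * A + (x - a) * B) / (b - a))) volume a m :=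
    (((continuous_id.sub continuous_const).mul hcontc).intervalIntegrable a m)
  have hci2 : IntervalIntegrable
      (fun x => (b - x) * (((b - x) * A + (x - a) * B) / (b - a))) volume m b :=
    (((continuous_const.sub continuous_id).mul hcontc).intervalIntegrable m b)
  have hprod1 : IntervalIntegrable (fun x => (x - a) * f' x) volume a m :=
    hint1.continuousOn_mul (by fun_prop)
  have hprod2 : IntervalIntegrable (fun x => (x - b) * f' x) volume m b :=
    hint2.continuousOn_mul (by fun_prop)
  -- bound the first integral
  have bound1 : |∫ x in a..m, (x - a) * f' x| ≤
      ∫ x in a..m, (x - a) * (((b - x) * A + (x - a) * B) / (b - a)) := by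
    calc |∫ x in a..m, (x - a) * f' x| ≤ ∫ x in a..m, |(x - a) * f' x| :=
          intervalIntegral.abs_integral_le_integral_abs ham
      _ ≤ ∫ x in a..m, (x - a) * (((b - x) * A + (x - a) * B) / (b - a)) := by
          apply intervalIntegral.integral_mono_on ham hprod1.abs hci1
          · intro x hx
            rw [abs_mul, abs_of_nonneg (by linarith [hx.1] : (0:ℝ) ≤ x - a)]
            have hxab : x ∈ Set.Icc a b := ⟨hx.1, le_trans hx.2 hmb⟩
            exact mul_le_mul_of_nonneg_left (chord x hxab) (by linarith [hx.1])
  have bound2 : |∫ x in m..b, (x - b) * f' x| ≤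
      ∫ x in m..b, (b - x) * (((b - x) * A + (x - a) * B) / (b - a)) := by
    calc |∫ x in m..b, (x - b) * f' x| ≤ ∫ x in m..b, |(x - b) * f' x| :=
          intervalIntegral.abs_integral_le_integral_abs hmb
      _ ≤ ∫ x in m..b, (b - x) * (((b - x) * A + (x - a) * B) / (b - a)) := by
          apply intervalIntegral.integral_mono_on hmb hprod2.abs hci2
          · intro x hx
            rw [abs_mul, abs_sub_comm, abs_of_nonneg (by linarith [hx.2] : (0:ℝ) ≤ b - x)]
            have hxab : x ∈ Set.Icc a b := ⟨le_trans ham hx.1, hx.2⟩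
            exact mul_le_mul_of_nonneg_left (chord x hxab) (by linarith [hx.2])
  -- compute the bounding integrals
  have hval1 : ∫ x in a..m, (x - a) * (((b - x) * A + (x - a) * B) / (b - a)) =
      (∫ x in a..m, (x - a) * ((b - x) * A + (x - a) * B)) / (b - a) := by
    rw [← intervalIntegral.integral_div]
    congr 1; ext x; ring
  have hval2 : ∫ x in m..b, (b - x) * (((b - x) * A + (x - a) * B) / (b - a)) =
      (∫ x in m..b, (b - x) * ((b - x) * A + (x - a) * B)) / (b - a) := by
    rw [← intervalIntegral.integral_div]
    congr 1; ext x; ring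
  have total : (∫ x in a..m, (x - a) * (((b - x) * A + (x - a) * B) / (b - a))) +
      (∫ x in m..b, (b - x) * (((b - x) * A + (x - a) * B) / (b - a))) =
      (b - a) ^ 2 * (A + B) / 8 := by
    rw [hval1, hval2, poly_integral1 a b A B a m, poly_integral2 a b A B m b]
    rw [hm]
    field_simp
    ring
  -- put it together
  have habs : |(b - a) * f m - ∫ x in a..b, f x| ≤ (b - a) ^ 2 * (A + B) / 8 := by
    rw [key]
    calc |(∫ x in a..m, (x - a) * f' x) + ∫ x in m..b, (x - b) * f' x| ≤
        |∫ x in a..m, (x - a) * f' x| + |∫ x in m..b, (x - b) * f' x| := abs_add_le _ _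
      _ ≤ _ := by rw [← total]; exact add_le_add bound1 bound2
  have heq : (1 / (b - a)) * (∫ x in a..b, f x) - f m =
      -(((b - a) * f m - ∫ x in a..b, f x) / (b - a)) := by
    field_simp
    ring
  rw [heq, abs_neg, abs_div, abs_of_pos hba, div_le_iff₀ hba]
  calc |(b - a) * f m - ∫ x in a..b, f x| ≤ (b - a) ^ 2 * (A + B) / 8 := habs
    _ = (b - a) / 4 * ((A + B) / 2) * (b - a) := by ring
end

section
/- If f is differentiable on an open interval containing [a,b] with a < b and |f'| is convex on [a,b], then |(f(a)+f(b))/2 − (1/(b-a)) ∫_a^b f(x) dx| ≤ (b-a) · (|f'(a)| + |f'(b)|)/8. -/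
open MeasureTheory intervalIntegral

lemma integral_quadratic (a b p q r : ℝ) :
    ∫ x in a..b, (p*x^2 + q*x + r) =
      p*(b^3 - a^3)/3 + q*(b^2 - a^2)/2 + r*(b - a) := by
  have h : ∀ x ∈ Set.uIcc a b,
      HasDerivAt (fun x : ℝ => p*x^3/3 + q*x^2/2 + r*x) (p*x^2 + q*x + r) x := by
    intro x _
    have h3 : HasDerivAt (fun x : ℝ => p*x^3/3) (p*x^2) x := by
      have := ((hasDerivAt_pow 3 x).const_mul p).div_const 3
      convert this using 1 <;> first | rfl | (push_cast; ring)
    have h2 : HasDerivAt (fun x : ℝ => q*x^2/2) (q*x) x := by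
      have := ((hasDerivAt_pow 2 x).const_mul q).div_const 2
      convert this using 1 <;> first | rfl | (push_cast; ring)
    have h1 : HasDerivAt (fun x : ℝ => r*x) r x := by
      simpa using (hasDerivAt_id x).const_mul r
    exact (h3.add h2).add h1
  rw [intervalIntegral.integral_eq_sub_of_hasDerivAt h
    (((by continuity : Continuous fun x : ℝ => p*x^2 + q*x + r).intervalIntegrable a b))]
  ring

theorem dragomir_agarwal (a b : ℝ) (hab : a < b) (f f' : ℝ → ℝ)
    (hf : ∀ x ∈ Set.Icc a b, HasDerivAt f (f' x) x)
    (hint : IntervalIntegrable f' volume a b)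
    (hconv : ConvexOn ℝ (Set.Icc a b) (fun x => |f' x|)) :
    |(f a + f b) / 2 - (1 / (b - a)) * ∫ x in a..b, f x| ≤
      (b - a) * ((|f' a| + |f' b|) / 8) := by
  have hba : b - a ≠ 0 := by linarith
  have hba' : (0:ℝ) < b - a := by linarith
  set c : ℝ := (a + b) / 2 with hc
  set A : ℝ := |f' a| with hA
  set B : ℝ := |f' b| with hB
  have huIcc : Set.uIcc a b = Set.Icc a b := Set.uIcc_of_le hab.le
  have hac : a ≤ c := by rw [hc]; linarith
  have hcb : c ≤ b := by rw [hc]; linarith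
  -- integration by parts
  have hfi : IntervalIntegrable f volume a b := by
    apply ContinuousOn.intervalIntegrable
    rw [huIcc]
    exact fun x hx => (hf x hx).continuousAt.continuousWithinAt
  have parts : ∫ x in a..b, (x - c) * f' x
      = (b - c) * f b - (a - c) * f a - ∫ x in a..b, f x := by
    have hu : ∀ x ∈ Set.uIcc a b, HasDerivAt (fun x : ℝ => x - c) 1 x := by
      intro x _; simpa using (hasDerivAt_id x).sub_const c
    have hv : ∀ x ∈ Set.uIcc a b, HasDerivAt f (f' x) x := by
      rw [huIcc]; exact hf
    have := intervalIntegral.integral_mul_deriv_eq_deriv_mul hu hv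
      intervalIntegrable_const hint
    simpa using this
  -- convexity bound: |f' x| ≤ (A*(b-x) + B*(x-a))/(b-a) on Icc
  have hconvb : ∀ x ∈ Set.Icc a b, |f' x| ≤ (A*(b-x) + B*(x-a))/(b-a) := by
    intro x hx
    have ht1 : 0 ≤ (b - x)/(b - a) := by
      apply div_nonneg _ hba'.le; linarith [hx.2]
    have ht2 : 0 ≤ (x - a)/(b - a) := by
      apply div_nonneg _ hba'.le; linarith [hx.1]
    have hts : (b - x)/(b - a) + (x - a)/(b - a) = 1 := by field_simp; ring
    have key := hconv.2 (Set.left_mem_Icc.2 hab.le) (Set.right_mem_Icc.2 hab.le)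
      ht1 ht2 hts
    simp only [smul_eq_mul] at key
    have hx' : (b - x)/(b - a) * a + (x - a)/(b - a) * b = x := by
      field_simp; ring
    rw [hx'] at key
    calc |f' x| ≤ (b - x)/(b - a) * A + (x - a)/(b - a) * B := key
      _ = (A*(b-x) + B*(x-a))/(b-a) := by field_simp
  -- integrability facts
  have hgi : IntervalIntegrable (fun x => (x - c) * f' x) volume a b :=
    hint.continuousOn_mul (by fun_prop)
  have hLcont : Continuous (fun x : ℝ => |x - c| * ((A*(b-x) + B*(x-a))/(b-a))) := by
    fun_prop
  -- bound the integral
  have hbound : |∫ x in a..b, (x - c) * f' x|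
      ≤ ∫ x in a..b, |x - c| * ((A*(b-x) + B*(x-a))/(b-a)) := by
    refine (abs_integral_le_integral_abs hab.le).trans ?_
    apply intervalIntegral.integral_mono_on hab.le hgi.abs
      (hLcont.intervalIntegrable a b)
    intro x hx
    rw [abs_mul]
    exact mul_le_mul_of_nonneg_left (hconvb x hx) (abs_nonneg _)
  -- compute the majorant integral
  have hkey : ∫ x in a..b, |x - c| * ((A*(b-x) + B*(x-a))/(b-a))
      = (b-a)^2 * (A + B) / 8 := by
    have hsplit : (∫ x in a..c, |x - c| * ((A*(b-x) + B*(x-a))/(b-a)))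
        + (∫ x in c..b, |x - c| * ((A*(b-x) + B*(x-a))/(b-a)))
        = ∫ x in a..b, |x - c| * ((A*(b-x) + B*(x-a))/(b-a)) :=
      intervalIntegral.integral_add_adjacent_intervals
        (hLcont.intervalIntegrable a c) (hLcont.intervalIntegrable c b)
    have h1 : (∫ x in a..c, |x - c| * ((A*(b-x) + B*(x-a))/(b-a)))
        = ∫ x in a..c, ((A-B)/(b-a)*x^2 + ((B-A)*c - (A*b - B*a))/(b-a)*x
            + c*(A*b - B*a)/(b-a)) := by
      apply intervalIntegral.integral_congr
      intro x hx
      rw [Set.uIcc_of_le hac] at hx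
      dsimp only
      rw [abs_of_nonpos (by linarith [hx.2])]
      field_simp
      ring
    have h2 : (∫ x in c..b, |x - c| * ((A*(b-x) + B*(x-a))/(b-a)))
        = ∫ x in c..b, ((B-A)/(b-a)*x^2 + ((A-B)*c + (A*b - B*a))/(b-a)*x
            + (-c)*(A*b - B*a)/(b-a)) := by
      apply intervalIntegral.integral_congr
      intro x hx
      rw [Set.uIcc_of_le hcb] at hx
      dsimp only
      rw [abs_of_nonneg (by linarith [hx.1])]
      field_simp
      ring
    rw [← hsplit, h1, h2, integral_quadratic, integral_quadratic, hc]
    field_simp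
    ring
  -- conclude
  have hI : (f a + f b) / 2 - (1 / (b - a)) * ∫ x in a..b, f x
      = (1 / (b - a)) * ∫ x in a..b, (x - c) * f' x := by
    rw [parts, hc]
    field_simp
    ring
  rw [hI, abs_mul]
  rw [abs_of_nonneg (by positivity : (0:ℝ) ≤ 1/(b-a))]
  calc 1/(b-a) * |∫ x in a..b, (x - c) * f' x|
      ≤ 1/(b-a) * ((b-a)^2 * (A + B) / 8) := by
        apply mul_le_mul_of_nonneg_left _ (by positivity)
        rw [← hkey]; exact hbound
    _ = (b - a) * ((A + B) / 8) := by field_simp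
end

section
/- If f is differentiable on an open interval containing [a,b] with a < b, q ≥ 1, and |f'|^q is convex on [a,b], then |(f(a)+f(b))/2 − (1/(b-a)) ∫_a^b f(x) dx| ≤ ((b-a)/4) · ((|f'(a)|^q + |f'(b)|^q)/2)^{1/q}. -/
open MeasureTheory intervalIntegral

lemma quadInt (u v p r s : ℝ) :
    (∫ x in u..v, (p + r * x + s * x ^ 2)) =
      (p * v + r * v ^ 2 / 2 + s * v ^ 3 / 3) - (p * u + r * u ^ 2 / 2 + s * u ^ 3 / 3) := by
  have H : ∀ x : ℝ, HasDerivAt (fun y : ℝ => p * y + r * y ^ 2 / 2 + s * y ^ 3 / 3)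
      (p + r * x + s * x ^ 2) x := by
    intro x
    have h1 : HasDerivAt (fun y : ℝ => p * y) (p * 1) x := (hasDerivAt_id x).const_mul p
    have h2 : HasDerivAt (fun y : ℝ => r * y ^ 2 / 2) (r * (2 * x ^ 1) / 2) x := by
      have := ((hasDerivAt_pow 2 x).const_mul r).div_const 2
      convert this using 1 <;> first | rfl | norm_num
    have h3 : HasDerivAt (fun y : ℝ => s * y ^ 3 / 3) (s * (3 * x ^ 2) / 3) x := by
      have := ((hasDerivAt_pow 3 x).const_mul s).div_const 3
      convert this using 1 <;> first | rfl | norm_num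
    convert (h1.add h2).add h3 using 1
    all_goals first | rfl | ring
  rw [intervalIntegral.integral_eq_sub_of_hasDerivAt (fun x _ => H x)
    ((Continuous.intervalIntegrable (by continuity) u v))]

lemma splitAbs (a b : ℝ) (hab : a ≤ b) (g : ℝ → ℝ) (hg : Continuous g) :
    (∫ x in a..b, |x - (a + b) / 2| * g x) =
      (∫ x in a..((a + b) / 2), ((a + b) / 2 - x) * g x) +
        ∫ x in ((a + b) / 2)..b, (x - (a + b) / 2) * g x := by
  set c := (a + b) / 2 with hc
  have hac : a ≤ c := by rw [hc]; linarith
  have hcb : c ≤ b := by rw [hc]; linarith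
  have hi1 : IntervalIntegrable (fun x => |x - c| * g x) volume a c :=
    Continuous.intervalIntegrable (by continuity) _ _
  have hi2 : IntervalIntegrable (fun x => |x - c| * g x) volume c b :=
    Continuous.intervalIntegrable (by continuity) _ _
  rw [← intervalIntegral.integral_add_adjacent_intervals hi1 hi2]
  congr 1
  · refine intervalIntegral.integral_congr fun x hx => ?_
    rw [Set.uIcc_of_le hac] at hx
    rw [abs_of_nonpos (by linarith [hx.2]), neg_sub]
  · refine intervalIntegral.integral_congr fun x hx => ?_
    rw [Set.uIcc_of_le hcb] at hx
    rw [abs_of_nonneg (by linarith [hx.1])]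

lemma wInt1 (a b : ℝ) (hab : a ≤ b) :
    (∫ x in a..b, |x - (a + b) / 2| * (b - x)) = (b - a) ^ 3 / 8 := by
  rw [splitAbs a b hab _ (by continuity)]
  set c := (a + b) / 2 with hc
  have h1 : (fun x : ℝ => (c - x) * (b - x)) =
      fun x : ℝ => c * b + (-(b + c)) * x + 1 * x ^ 2 := funext fun x => by ring
  have h2 : (fun x : ℝ => (x - c) * (b - x)) =
      fun x : ℝ => (-(c * b)) + (b + c) * x + (-1) * x ^ 2 := funext fun x => by ring
  rw [h1, h2, quadInt, quadInt, hc]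
  ring

lemma wInt2 (a b : ℝ) (hab : a ≤ b) :
    (∫ x in a..b, |x - (a + b) / 2| * (x - a)) = (b - a) ^ 3 / 8 := by
  rw [splitAbs a b hab _ (by continuity)]
  set c := (a + b) / 2 with hc
  have h1 : (fun x : ℝ => (c - x) * (x - a)) =
      fun x : ℝ => (-(c * a)) + (c + a) * x + (-1) * x ^ 2 := funext fun x => by ring
  have h2 : (fun x : ℝ => (x - c) * (x - a)) =
      fun x : ℝ => c * a + (-(c + a)) * x + 1 * x ^ 2 := funext fun x => by ring
  rw [h1, h2, quadInt, quadInt, hc]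
  ring

lemma wInt0 (a b : ℝ) (hab : a ≤ b) :
    (∫ x in a..b, |x - (a + b) / 2|) = (b - a) ^ 2 / 4 := by
  have := splitAbs a b hab (fun _ => 1) continuous_const
  simp only [mul_one] at this
  rw [this]
  set c := (a + b) / 2 with hc
  have h1 : (fun x : ℝ => c - x) = fun x : ℝ => c + (-1) * x + 0 * x ^ 2 :=
    funext fun x => by ring
  have h2 : (fun x : ℝ => x - c) = fun x : ℝ => (-c) + 1 * x + 0 * x ^ 2 :=
    funext fun x => by ring
  rw [h1, h2, quadInt, quadInt, hc]
  ring

set_option maxHeartbeats 2000000 in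
theorem pearce_pecaric_trapezoid (a b : ℝ) (hab : a < b) (q : ℝ) (hq : 1 ≤ q)
    (f f' : ℝ → ℝ)
    (hf : ∀ x ∈ Set.Icc a b, HasDerivAt f (f' x) x)
    (hint : IntervalIntegrable f' volume a b)
    (hconv : ConvexOn ℝ (Set.Icc a b) (fun x => |f' x| ^ q)) :
    |(f a + f b) / 2 - (1 / (b - a)) * ∫ x in a..b, f x| ≤
      ((b - a) / 4) * ((|f' a| ^ q + |f' b| ^ q) / 2) ^ (1 / q) := by
  have hd : (0:ℝ) < b - a := by linarith
  have hq0 : (0:ℝ) < q := lt_of_lt_of_le one_pos hq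
  set c : ℝ := (a + b) / 2 with hc
  set A : ℝ := |f' a| ^ q with hA
  set B : ℝ := |f' b| ^ q with hB
  have hA0 : 0 ≤ A := Real.rpow_nonneg (abs_nonneg _) q
  have hB0 : 0 ≤ B := Real.rpow_nonneg (abs_nonneg _) q
  -- convexity pointwise bound
  have hconvb : ∀ x ∈ Set.Icc a b, |f' x| ^ q ≤ ((b - x) * A + (x - a) * B) / (b - a) := by
    intro x hx
    have h1 : 0 ≤ (b - x) / (b - a) := div_nonneg (by linarith [hx.2]) hd.le
    have h2 : 0 ≤ (x - a) / (b - a) := div_nonneg (by linarith [hx.1]) hd.le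
    have h3 : (b - x) / (b - a) + (x - a) / (b - a) = 1 := by field_simp; ring
    have := hconv.2 (Set.left_mem_Icc.mpr hab.le) (Set.right_mem_Icc.mpr hab.le) h1 h2 h3
    simp only [smul_eq_mul] at this
    have hx' : (b - x) / (b - a) * a + (x - a) / (b - a) * b = x := by
      field_simp; ring
    rw [hx'] at this
    have e : ((b - x) * A + (x - a) * B) / (b - a) =
        (b - x) / (b - a) * A + (x - a) / (b - a) * B := by ring
    rw [e]
    exact this
  -- uniform bound on |f'|
  have hMq : ∀ x ∈ Set.Icc a b, |f' x| ^ q ≤ A + B := by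
    intro x hx
    refine (hconvb x hx).trans ?_
    rw [div_le_iff₀ hd]
    nlinarith [hx.1, hx.2, hA0, hB0]
  have hM : ∀ x ∈ Set.Icc a b, |f' x| ≤ (A + B) ^ (1 / q) := by
    intro x hx
    have h1 : (|f' x| ^ q) ^ (1 / q) = |f' x| := by
      rw [← Real.rpow_mul (abs_nonneg _), mul_one_div_cancel hq0.ne', Real.rpow_one]
    rw [← h1]
    exact Real.rpow_le_rpow (Real.rpow_nonneg (abs_nonneg _) q) (hMq x hx)
      (by positivity)
  -- integration by parts
  have hfc : ContinuousOn f (Set.uIcc a b) := by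
    rw [Set.uIcc_of_le hab.le]
    exact fun x hx => ((hf x hx).continuousAt).continuousWithinAt
  have hfint : IntervalIntegrable f volume a b := hfc.intervalIntegrable
  have hparts : (∫ x in a..b, (x - c) * f' x)
      = (b - c) * f b - (a - c) * f a - ∫ x in a..b, f x := by
    have := intervalIntegral.integral_mul_deriv_eq_deriv_mul
      (u := fun x => x - c) (u' := fun _ => (1:ℝ)) (v := f) (v' := f')
      (fun x _ => (hasDerivAt_id x).sub_const c)
      (fun x hx => hf x (by rwa [Set.uIcc_of_le hab.le] at hx))
      intervalIntegrable_const hint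
    simpa using this
  have step1 : |(f a + f b) / 2 - (1 / (b - a)) * ∫ x in a..b, f x|
      = (1 / (b - a)) * |∫ x in a..b, (x - c) * f' x| := by
    have key : (f a + f b) / 2 - (1 / (b - a)) * ∫ x in a..b, f x
        = (1 / (b - a)) * ∫ x in a..b, (x - c) * f' x := by
      rw [hparts, hc]
      field_simp
      ring
    rw [key, abs_mul, abs_of_pos (show (0:ℝ) < 1 / (b - a) by positivity)]
  -- measurability / integrability facts
  have hmeas : AEStronglyMeasurable f' (volume.restrict (Set.Ioc a b)) :=
    hint.1.aestronglyMeasurable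
  have hmeas_abs : AEStronglyMeasurable (fun x => |f' x|) (volume.restrict (Set.Ioc a b)) := by
    simpa [Real.norm_eq_abs] using hmeas.norm
  haveI hfin : IsFiniteMeasure (volume.restrict (Set.Ioc a b)) :=
    ⟨by rw [Measure.restrict_apply_univ]; exact measure_Ioc_lt_top⟩
  have hwcont : Continuous (fun x : ℝ => |x - c|) := by fun_prop
  have habs : IntervalIntegrable (fun x => |f' x|) volume a b := hint.abs
  have hq_int : IntervalIntegrable (fun x => |f' x| ^ q) volume a b := by
    rw [intervalIntegrable_iff_integrableOn_Ioc_of_le hab.le]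
    refine Integrable.mono' (g := fun _ => A + B)
      (integrableOn_const measure_Ioc_lt_top.ne)
      ((Real.continuous_rpow_const hq0.le).comp_aestronglyMeasurable hmeas_abs) ?_
    filter_upwards [self_mem_ae_restrict measurableSet_Ioc (μ := volume)] with x hx
    rw [Real.norm_eq_abs, abs_of_nonneg (Real.rpow_nonneg (abs_nonneg _) q)]
    exact hMq x (Set.Ioc_subset_Icc_self hx)
  have hwabs : IntervalIntegrable (fun x => |x - c| * |f' x|) volume a b :=
    habs.continuousOn_mul hwcont.continuousOn
  have hwq : IntervalIntegrable (fun x => |x - c| * |f' x| ^ q) volume a b :=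
    hq_int.continuousOn_mul hwcont.continuousOn
  -- step2 : bound by weighted integral of |f'|
  have step2 : |∫ x in a..b, (x - c) * f' x| ≤ ∫ x in a..b, |x - c| * |f' x| := by
    refine (intervalIntegral.abs_integral_le_integral_abs hab.le).trans_eq ?_
    exact intervalIntegral.integral_congr fun x _ => abs_mul _ _
  -- the weighted integral of |f'|^q
  have hJq : (∫ x in a..b, |x - c| * |f' x| ^ q) ≤ ((b - a) ^ 2 / 4) * ((A + B) / 2) := by
    have hcont2 : Continuous (fun x : ℝ => |x - c| * (((b - x) * A + (x - a) * B) / (b - a))) := by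
      continuity
    have hmono := intervalIntegral.integral_mono_on hab.le hwq
      (hcont2.intervalIntegrable a b)
      (fun x hx => mul_le_mul_of_nonneg_left (hconvb x hx) (abs_nonneg _))
    refine hmono.trans_eq ?_
    have e : (fun x : ℝ => |x - c| * (((b - x) * A + (x - a) * B) / (b - a)))
        = fun x => (A / (b - a)) * (|x - c| * (b - x)) + (B / (b - a)) * (|x - c| * (x - a)) :=
      funext fun x => by ring
    have int1 : IntervalIntegrable (fun x => (A / (b - a)) * (|x - c| * (b - x))) volume a b :=
      Continuous.intervalIntegrable (by fun_prop) _ _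
    have int2 : IntervalIntegrable (fun x => (B / (b - a)) * (|x - c| * (x - a))) volume a b :=
      Continuous.intervalIntegrable (by fun_prop) _ _
    rw [e, intervalIntegral.integral_add int1 int2,
      intervalIntegral.integral_const_mul, intervalIntegral.integral_const_mul, hc,
      wInt1 a b hab.le, wInt2 a b hab.le]
    field_simp
    ring
  have hJq0 : (0:ℝ) ≤ ∫ x in a..b, |x - c| * |f' x| ^ q :=
    intervalIntegral.integral_nonneg hab.le (fun x _ => by positivity)
  rw [step1]
  rcases eq_or_lt_of_le hq with hq1 | hq1
  · -- case q = 1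
    subst hq1
    have h2 : (∫ x in a..b, |x - c| * |f' x|) ≤ ((b - a) ^ 2 / 4) * ((A + B) / 2) := by
      refine le_trans (le_of_eq (intervalIntegral.integral_congr fun x _ => ?_)) hJq
      rw [Real.rpow_one]
    calc (1 / (b - a)) * |∫ x in a..b, (x - c) * f' x|
        ≤ (1 / (b - a)) * (((b - a) ^ 2 / 4) * ((A + B) / 2)) :=
          mul_le_mul_of_nonneg_left (step2.trans h2) (by positivity)
      _ = ((b - a) / 4) * ((A + B) / 2) := by field_simp
      _ = ((b - a) / 4) * ((A + B) / 2) ^ ((1:ℝ) / 1) := by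
          rw [show (1:ℝ)/1 = 1 by norm_num, Real.rpow_one]
  · -- case 1 < q : Hölder
    set p : ℝ := Real.conjExponent q with hp
    have hqp : q.HolderConjugate p := Real.HolderConjugate.conjExponent hq1
    have hpq : p.HolderConjugate q := hqp.symm
    have hp0 : (0:ℝ) < p := hpq.pos
    have hinv : 1 / p + 1 / q = 1 := by
      simpa [one_div] using hpq.inv_add_inv_eq_one
    set F : ℝ → ℝ := fun x => |x - c| ^ (1 / p) with hF
    set G : ℝ → ℝ := fun x => |x - c| ^ (1 / q) * |f' x| with hG
    have hwb : ∀ x ∈ Set.Ioc a b, |x - c| ≤ b - a := by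
      intro x hx
      rw [abs_le, hc]
      constructor <;> [linarith [hx.1, hx.2]; linarith [hx.1, hx.2]]
    have hF_mem : MemLp F (ENNReal.ofReal p) (volume.restrict (Set.Ioc a b)) := by
      refine MemLp.of_bound
        ((hwcont.rpow_const (fun x => Or.inr (by positivity))).aestronglyMeasurable)
        ((b - a) ^ (1 / p)) ?_
      filter_upwards [self_mem_ae_restrict measurableSet_Ioc (μ := volume)] with x hx
      rw [hF, Real.norm_eq_abs, abs_of_nonneg (Real.rpow_nonneg (abs_nonneg _) _)]
      exact Real.rpow_le_rpow (abs_nonneg _) (hwb x hx) (by positivity)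
    have hG_mem : MemLp G (ENNReal.ofReal q) (volume.restrict (Set.Ioc a b)) := by
      refine MemLp.of_bound
        (((hwcont.rpow_const (fun x => Or.inr (by positivity))).aestronglyMeasurable).mul
          hmeas_abs)
        ((b - a) ^ (1 / q) * (A + B) ^ (1 / q)) ?_
      filter_upwards [self_mem_ae_restrict measurableSet_Ioc (μ := volume)] with x hx
      rw [hG, Real.norm_eq_abs,
        abs_of_nonneg (mul_nonneg (Real.rpow_nonneg (abs_nonneg _) _) (abs_nonneg _))]
      exact mul_le_mul
        (Real.rpow_le_rpow (abs_nonneg _) (hwb x hx) (by positivity))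
        (hM x (Set.Ioc_subset_Icc_self hx)) (abs_nonneg _)
        (Real.rpow_nonneg (by linarith) _)
    have hHolder := MeasureTheory.integral_mul_le_Lp_mul_Lq_of_nonneg hpq
      (ae_of_all _ fun x => Real.rpow_nonneg (abs_nonneg _) _)
      (ae_of_all _ fun x => mul_nonneg (Real.rpow_nonneg (abs_nonneg _) _) (abs_nonneg _))
      hF_mem hG_mem
    have eFG : ∀ x, F x * G x = |x - c| * |f' x| := by
      intro x
      rw [hF, hG, ← mul_assoc,
        ← Real.rpow_add' (abs_nonneg _) (by rw [hinv]; norm_num), hinv, Real.rpow_one]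
    have eF : ∀ x, F x ^ p = |x - c| := by
      intro x
      rw [hF, ← Real.rpow_mul (abs_nonneg _), one_div_mul_cancel hp0.ne', Real.rpow_one]
    have eG : ∀ x, G x ^ q = |x - c| * |f' x| ^ q := by
      intro x
      rw [hG, Real.mul_rpow (Real.rpow_nonneg (abs_nonneg _) _) (abs_nonneg _),
        ← Real.rpow_mul (abs_nonneg _), one_div_mul_cancel hq0.ne', Real.rpow_one]
    have e1 : (∫ x in a..b, |x - c| * |f' x|)
        = ∫ x in Set.Ioc a b, F x * G x := by
      rw [intervalIntegral.integral_of_le hab.le]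
      exact integral_congr_ae (ae_of_all _ fun x => (eFG x).symm)
    have e2 : (∫ x in Set.Ioc a b, F x ^ p) = (b - a) ^ 2 / 4 := by
      rw [show (fun x => F x ^ p) = fun x => |x - c| from funext eF,
        ← intervalIntegral.integral_of_le hab.le, hc, wInt0 a b hab.le]
    have e3 : (∫ x in Set.Ioc a b, G x ^ q) = ∫ x in a..b, |x - c| * |f' x| ^ q := by
      rw [show (fun x => G x ^ q) = fun x => |x - c| * |f' x| ^ q from funext eG,
        ← intervalIntegral.integral_of_le hab.le]
    have main : (∫ x in a..b, |x - c| * |f' x|)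
        ≤ ((b - a) ^ 2 / 4) ^ (1 / p)
          * (((b - a) ^ 2 / 4) * ((A + B) / 2)) ^ (1 / q) := by
      calc (∫ x in a..b, |x - c| * |f' x|)
          = ∫ x in Set.Ioc a b, F x * G x := e1
        _ ≤ (∫ x in Set.Ioc a b, F x ^ p) ^ (1 / p)
            * (∫ x in Set.Ioc a b, G x ^ q) ^ (1 / q) := hHolder
        _ = ((b - a) ^ 2 / 4) ^ (1 / p)
            * (∫ x in a..b, |x - c| * |f' x| ^ q) ^ (1 / q) := by rw [e2, e3]
        _ ≤ ((b - a) ^ 2 / 4) ^ (1 / p)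
            * (((b - a) ^ 2 / 4) * ((A + B) / 2)) ^ (1 / q) := by
            exact mul_le_mul_of_nonneg_left
              (Real.rpow_le_rpow hJq0 hJq (by positivity))
              (Real.rpow_nonneg (by positivity) _)
    have hW : ((b - a) ^ 2 / 4 : ℝ) ^ (1 / p) * ((b - a) ^ 2 / 4) ^ (1 / q)
        = (b - a) ^ 2 / 4 := by
      rw [← Real.rpow_add (by positivity), hinv, Real.rpow_one]
    calc (1 / (b - a)) * |∫ x in a..b, (x - c) * f' x|
        ≤ (1 / (b - a)) * (((b - a) ^ 2 / 4) ^ (1 / p)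
            * (((b - a) ^ 2 / 4) * ((A + B) / 2)) ^ (1 / q)) :=
          mul_le_mul_of_nonneg_left (step2.trans main) (by positivity)
      _ = (1 / (b - a)) * (((b - a) ^ 2 / 4) ^ (1 / p) * ((b - a) ^ 2 / 4) ^ (1 / q)
            * ((A + B) / 2) ^ (1 / q)) := by
          rw [Real.mul_rpow (by positivity) (by positivity)]
          ring
      _ = (1 / (b - a)) * (((b - a) ^ 2 / 4) * ((A + B) / 2) ^ (1 / q)) := by rw [hW]
      _ = ((b - a) / 4) * ((A + B) / 2) ^ (1 / q) := by
          field_simp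
end

section
/- If f is differentiable on an open interval containing [a,b] with a < b, q ≥ 1, and |f'|^q is convex on [a,b], then |(1/(b-a)) ∫_a^b f(x) dx − f((a+b)/2)| ≤ ((b-a)/4) · ((|f'(a)|^q + |f'(b)|^q)/2)^{1/q}. -/
open MeasureTheory intervalIntegral

/-- Tangent line inequality for concave `y ↦ y^p`, `0 < p ≤ 1`. -/
lemma rpow_tangent {y c p : ℝ} (hy : 0 ≤ y) (hc : 0 < c) (hp0 : 0 < p) (hp1 : p ≤ 1) :
    y ^ p ≤ c ^ p + p * c ^ (p - 1) * (y - c) := by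
  have hs : -1 ≤ y / c - 1 := by
    have : 0 ≤ y / c := div_nonneg hy hc.le
    linarith
  have hb := rpow_one_add_le_one_add_mul_self hs hp0.le hp1
  have h1 : (y / c) ^ p ≤ 1 + p * (y / c - 1) := by
    have he : (1 : ℝ) + (y / c - 1) = y / c := by ring
    rwa [he] at hb
  have h2 : y ^ p = c ^ p * (y / c) ^ p := by
    rw [← Real.mul_rpow hc.le (div_nonneg hy hc.le), mul_div_cancel₀ _ hc.ne']
  have h3 : c ^ p * (1 + p * (y / c - 1)) = c ^ p + p * c ^ (p - 1) * (y - c) := by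
    rw [Real.rpow_sub hc, Real.rpow_one]
    field_simp
  calc y ^ p = c ^ p * (y / c) ^ p := h2
    _ ≤ c ^ p * (1 + p * (y / c - 1)) :=
        mul_le_mul_of_nonneg_left h1 (Real.rpow_nonneg hc.le p)
    _ = c ^ p + p * c ^ (p - 1) * (y - c) := h3

lemma int_poly (s t u v K E : ℝ) :
    ∫ x in s..t, (x - u) * (K + E * (x - v)) =
      (K * (t ^ 2 / 2 - u * t) + E * (t ^ 3 / 3 - (u + v) * (t ^ 2 / 2) + u * v * t)) -
      (K * (s ^ 2 / 2 - u * s) + E * (s ^ 3 / 3 - (u + v) * (s ^ 2 / 2) + u * v * s)) := by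
  apply intervalIntegral.integral_eq_sub_of_hasDerivAt
  · intro x hx
    have h1 : HasDerivAt (fun x : ℝ => K * (x ^ 2 / 2 - u * x) +
        E * (x ^ 3 / 3 - (u + v) * (x ^ 2 / 2) + u * v * x))
        (K * (↑2 * x ^ 1 / 2 - u * 1) +
          E * ((↑3 * x ^ 2 / 3 - (u + v) * (↑2 * x ^ 1 / 2)) + u * v * 1)) x :=
      ((((hasDerivAt_pow 2 x).div_const 2).sub
          ((hasDerivAt_id x).const_mul u)).const_mul K).add
        (((((hasDerivAt_pow 3 x).div_const 3).sub
          (((hasDerivAt_pow 2 x).div_const 2).const_mul (u + v))).add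
          ((hasDerivAt_id x).const_mul (u * v))).const_mul E)
    convert h1 using 1
    all_goals first | rfl | ring
  · apply Continuous.intervalIntegrable
    continuity

theorem pearce_pecaric_midpoint (a b : ℝ) (hab : a < b) (q : ℝ) (hq : 1 ≤ q)
    (f f' : ℝ → ℝ)
    (hf : ∀ x ∈ Set.Icc a b, HasDerivAt f (f' x) x)
    (hint : IntervalIntegrable f' volume a b)
    (hconv : ConvexOn ℝ (Set.Icc a b) (fun x => |f' x| ^ q)) :
    |(1 / (b - a)) * (∫ x in a..b, f x) - f ((a + b) / 2)| ≤
      ((b - a) / 4) * ((|f' a| ^ q + |f' b| ^ q) / 2) ^ (1 / q) := by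
  have hq0 : (0 : ℝ) < q := lt_of_lt_of_le one_pos hq
  have hba : (0 : ℝ) < b - a := by linarith
  set m := (a + b) / 2 with hm
  set A := |f' a| ^ q with hA
  set B := |f' b| ^ q with hB
  set p := 1 / q with hp
  set c := (A + B) / 2 with hc
  have hp0 : 0 < p := by rw [hp]; positivity
  have hp1 : p ≤ 1 := by rw [hp, div_le_one hq0]; exact hq
  have hA0 : 0 ≤ A := Real.rpow_nonneg (abs_nonneg _) q
  have hB0 : 0 ≤ B := Real.rpow_nonneg (abs_nonneg _) q
  set K := c ^ p with hK
  set E := p * c ^ (p - 1) * (B - A) / (b - a) with hE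
  have ham : a ≤ m := by rw [hm]; linarith
  have hmb : m ≤ b := by rw [hm]; linarith
  -- pointwise bound on |f'|
  have hpt : ∀ x ∈ Set.Icc a b, |f' x| ≤ K + E * (x - m) := by
    intro x hx
    set t := (b - x) / (b - a) with ht
    have ht0 : 0 ≤ t := div_nonneg (by linarith [hx.2]) hba.le
    have ht1 : 0 ≤ 1 - t := by
      rw [ht, sub_nonneg, div_le_one hba]
      linarith [hx.1]
    have hxc : t • a + (1 - t) • b = x := by
      simp only [smul_eq_mul, ht]
      field_simp
      ring
    have h1 : |f' x| ^ q ≤ t * A + (1 - t) * B := by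
      have := hconv.2 (Set.left_mem_Icc.2 hab.le) (Set.right_mem_Icc.2 hab.le)
        ht0 ht1 (by ring)
      rw [hxc] at this
      simpa [smul_eq_mul, ← hA, ← hB] using this
    set L := t * A + (1 - t) * B with hL
    have hL0 : 0 ≤ L := by positivity
    have h3 : (|f' x| ^ q) ^ p = |f' x| := by
      rw [← Real.rpow_mul (abs_nonneg _), mul_one_div_cancel hq0.ne', Real.rpow_one]
    have h2 : |f' x| ≤ L ^ p := by
      rw [← h3]
      exact Real.rpow_le_rpow (Real.rpow_nonneg (abs_nonneg _) q) h1 hp0.le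
    rcases eq_or_lt_of_le (show (0:ℝ) ≤ c by rw [hc]; positivity) with hc0 | hc0
    · -- degenerate case c = 0
      have hAB : A = 0 ∧ B = 0 := by
        constructor <;> [skip; skip] <;>
        · have := hc0.symm
          rw [hc] at this
          linarith
      have hLz : L = 0 := by rw [hL, hAB.1, hAB.2]; ring
      have : |f' x| ≤ 0 := by
        rw [hLz, Real.zero_rpow hp0.ne'] at h2
        exact h2
      have hKz : K = 0 := by rw [hK, ← hc0, Real.zero_rpow hp0.ne']
      have hEz : E = 0 := by rw [hE, hAB.1, hAB.2]; ring
      rw [hKz, hEz]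
      simpa using this
    · have h4 := rpow_tangent hL0 hc0 hp0 hp1
      have h5 : p * c ^ (p - 1) * (L - c) = E * (x - m) := by
        rw [hE, hL, ht, hc, hm]
        field_simp
        ring
      calc |f' x| ≤ L ^ p := h2
        _ ≤ c ^ p + p * c ^ (p - 1) * (L - c) := h4
        _ = K + E * (x - m) := by rw [← hK, h5]
  -- continuity / integrability facts
  have hfc : ContinuousOn f (Set.Icc a b) := fun x hx =>
    (hf x hx).continuousAt.continuousWithinAt
  have hIcc1 : Set.uIcc a m ⊆ Set.Icc a b := by
    rw [Set.uIcc_of_le ham]; exact Set.Icc_subset_Icc le_rfl hmb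
  have hIcc2 : Set.uIcc m b ⊆ Set.Icc a b := by
    rw [Set.uIcc_of_le hmb]; exact Set.Icc_subset_Icc ham le_rfl
  have hsub1 : Set.uIcc a m ⊆ Set.uIcc a b := by
    rw [Set.uIcc_of_le hab.le]; exact hIcc1
  have hsub2 : Set.uIcc m b ⊆ Set.uIcc a b := by
    rw [Set.uIcc_of_le hab.le]; exact hIcc2
  have hint1 : IntervalIntegrable f' volume a m := hint.mono_set hsub1
  have hint2 : IntervalIntegrable f' volume m b := hint.mono_set hsub2
  have hf_int1 : IntervalIntegrable f volume a m := (hfc.mono hIcc1).intervalIntegrable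
  have hf_int2 : IntervalIntegrable f volume m b := (hfc.mono hIcc2).intervalIntegrable
  -- integration by parts
  have ibp1 : ∫ x in a..m, (x - a) * f' x =
      (m - a) * f m - (a - a) * f a - ∫ x in a..m, 1 * f x :=
    integral_mul_deriv_eq_deriv_mul
      (fun x _ => (hasDerivAt_id x).sub_const a)
      (fun x hx => hf x (hIcc1 hx)) intervalIntegrable_const hint1
  have ibp2 : ∫ x in m..b, (x - b) * f' x =
      (b - b) * f b - (m - b) * f m - ∫ x in m..b, 1 * f x :=
    integral_mul_deriv_eq_deriv_mul
      (fun x _ => (hasDerivAt_id x).sub_const b)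
      (fun x hx => hf x (hIcc2 hx)) intervalIntegrable_const hint2
  simp only [one_mul, sub_self, zero_mul, sub_zero, zero_sub] at ibp1 ibp2
  have hsplit : (∫ x in a..m, f x) + ∫ x in m..b, f x = ∫ x in a..b, f x :=
    integral_add_adjacent_intervals hf_int1 hf_int2
  set I1 := ∫ x in a..m, (x - a) * f' x with hI1
  set I2 := ∫ x in m..b, (x - b) * f' x with hI2
  have key : I1 + I2 = (b - a) * f m - ∫ x in a..b, f x := by
    rw [ibp1, ibp2, ← hsplit]
    ring
  have hLHS : (1 / (b - a)) * (∫ x in a..b, f x) - f m = -(1 / (b - a)) * (I1 + I2) := by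
    rw [key]
    field_simp
    ring
  -- bounding the integrals
  have hJ1 : |I1| ≤ ∫ x in a..m, (x - a) * |f' x| := by
    calc |I1| ≤ ∫ x in a..m, |(x - a) * f' x| :=
          intervalIntegral.abs_integral_le_integral_abs ham
      _ = ∫ x in a..m, (x - a) * |f' x| := by
          apply integral_congr
          intro x hx
          rw [Set.uIcc_of_le ham] at hx
          simp only []
          rw [abs_mul, abs_of_nonneg (by linarith [hx.1] : (0:ℝ) ≤ x - a)]
  have hJ2 : |I2| ≤ ∫ x in m..b, (b - x) * |f' x| := by
    calc |I2| ≤ ∫ x in m..b, |(x - b) * f' x| :=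
          intervalIntegral.abs_integral_le_integral_abs hmb
      _ = ∫ x in m..b, (b - x) * |f' x| := by
          apply integral_congr
          intro x hx
          rw [Set.uIcc_of_le hmb] at hx
          simp only []
          rw [abs_mul, abs_of_nonpos (by linarith [hx.2] : x - b ≤ (0:ℝ))]
          ring
  have hint1abs : IntervalIntegrable (fun x => (x - a) * |f' x|) volume a m :=
    (hint1.abs).continuousOn_mul ((continuous_id.sub continuous_const).continuousOn)
  have hint2abs : IntervalIntegrable (fun x => (b - x) * |f' x|) volume m b :=
    (hint2.abs).continuousOn_mul ((continuous_const.sub continuous_id).continuousOn)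
  have hcont0 : Continuous (fun x : ℝ => K + E * (x - m)) :=
    continuous_const.add (continuous_const.mul (continuous_id.sub continuous_const))
  have hcont1 : Continuous (fun x : ℝ => (x - a) * (K + E * (x - m))) :=
    (continuous_id.sub continuous_const).mul hcont0
  have hcont2 : Continuous (fun x : ℝ => (b - x) * (K + E * (x - m))) :=
    (continuous_const.sub continuous_id).mul hcont0
  have hmono1 : (∫ x in a..m, (x - a) * |f' x|) ≤ ∫ x in a..m, (x - a) * (K + E * (x - m)) :=
    integral_mono_on ham hint1abs (hcont1.intervalIntegrable a m)
      (fun x hx => mul_le_mul_of_nonneg_left (hpt x ⟨hx.1, le_trans hx.2 hmb⟩)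
        (by linarith [hx.1]))
  have hmono2 : (∫ x in m..b, (b - x) * |f' x|) ≤ ∫ x in m..b, (b - x) * (K + E * (x - m)) :=
    integral_mono_on hmb hint2abs (hcont2.intervalIntegrable m b)
      (fun x hx => mul_le_mul_of_nonneg_left (hpt x ⟨le_trans ham hx.1, hx.2⟩)
        (by linarith [hx.2]))
  have hflip : (∫ x in m..b, (b - x) * (K + E * (x - m))) =
      -∫ x in m..b, (x - b) * (K + E * (x - m)) := by
    rw [← intervalIntegral.integral_neg]
    apply integral_congr
    intro x _
    ring
  have hcomp : (∫ x in a..m, (x - a) * (K + E * (x - m))) +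
      (∫ x in m..b, (b - x) * (K + E * (x - m))) = K * (b - a) ^ 2 / 4 := by
    rw [hflip, int_poly, int_poly, hm]
    ring
  have habs : |I1 + I2| ≤ K * (b - a) ^ 2 / 4 := by
    calc |I1 + I2| ≤ |I1| + |I2| := abs_add_le _ _
      _ ≤ (∫ x in a..m, (x - a) * |f' x|) + ∫ x in m..b, (b - x) * |f' x| :=
          add_le_add hJ1 hJ2
      _ ≤ (∫ x in a..m, (x - a) * (K + E * (x - m))) +
            ∫ x in m..b, (b - x) * (K + E * (x - m)) := add_le_add hmono1 hmono2
      _ = K * (b - a) ^ 2 / 4 := hcomp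
  rw [hLHS, abs_mul, abs_neg, abs_of_pos (by positivity : (0:ℝ) < 1 / (b - a))]
  calc 1 / (b - a) * |I1 + I2| ≤ 1 / (b - a) * (K * (b - a) ^ 2 / 4) :=
        mul_le_mul_of_nonneg_left habs (by positivity)
    _ = (b - a) / 4 * K := by field_simp
end

section
/- If f is differentiable on (a,b), continuous on [a,b], and |f'| is quasi-convex on [a,b] (i.e. |f'(tx+(1-t)y)| ≤ max(|f'(x)|,|f'(y)|) for all x,y ∈ [a,b], t ∈ [0,1]), then |(f(a)+f(b))/2 − (1/(b-a)) ∫_a^b f(x) dx| ≤ ((b-a)/4) · max(|f'(a)|, |f'(b)|). -/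
open MeasureTheory intervalIntegral

theorem ion_quasiconvex (a b : ℝ) (hab : a < b) (f f' : ℝ → ℝ)
    (hcont : ContinuousOn f (Set.Icc a b))
    (hf : ∀ x ∈ Set.Ioo a b, HasDerivAt f (f' x) x)
    (hint : IntervalIntegrable f' volume a b)
    (hquasi : ∀ x ∈ Set.Icc a b, ∀ y ∈ Set.Icc a b, ∀ t ∈ Set.Icc (0:ℝ) 1,
      |f' (t * x + (1 - t) * y)| ≤ max (|f' x|) (|f' y|)) :
    |(f a + f b) / 2 - (1 / (b - a)) * ∫ x in a..b, f x| ≤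
      ((b - a) / 4) * max (|f' a|) (|f' b|) := by
  set c : ℝ := (a + b) / 2 with hc
  set M : ℝ := max (|f' a|) (|f' b|) with hM
  have hab' : a ≤ b := hab.le
  have hba : (0:ℝ) < b - a := by linarith
  have hM0 : 0 ≤ M := le_trans (abs_nonneg _) (le_max_left _ _)
  -- bound |f' x| ≤ M on Icc a b
  have hbound : ∀ x ∈ Set.Icc a b, |f' x| ≤ M := by
    intro x hx
    have ht : (b - x) / (b - a) ∈ Set.Icc (0:ℝ) 1 := by
      constructor
      · apply div_nonneg (by linarith [hx.2]) hba.le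
      · rw [div_le_one hba]; linarith [hx.1]
    have h := hquasi a (Set.left_mem_Icc.2 hab') b (Set.right_mem_Icc.2 hab') _ ht
    have hx' : (b - x)/(b-a) * a + (1 - (b - x)/(b-a)) * b = x := by
      field_simp; ring
    rwa [hx'] at h
  -- derivative of g x = (x - c) * f x on Ioo
  have hg : ∀ x ∈ Set.Ioo a b,
      HasDerivAt (fun y => (y - c) * f y) (f x + (x - c) * f' x) x := by
    intro x hx
    have h1 : HasDerivAt (fun y : ℝ => y - c) 1 x := (hasDerivAt_id x).sub_const c
    have := h1.mul (hf x hx)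
    simp only [one_mul] at this
    exact this
  have hintf : IntervalIntegrable f volume a b := by
    apply ContinuousOn.intervalIntegrable
    rwa [Set.uIcc_of_le hab']
  have hcont2 : ContinuousOn (fun x : ℝ => x - c) (Set.uIcc a b) :=
    (continuous_id.sub continuous_const).continuousOn
  have hint2 : IntervalIntegrable (fun x => (x - c) * f' x) volume a b :=
    hint.continuousOn_mul hcont2
  have hgc : ContinuousOn (fun y => (y - c) * f y) (Set.Icc a b) := by
    apply ContinuousOn.mul _ hcont
    exact (continuous_id.sub continuous_const).continuousOn
  have hsum : IntervalIntegrable (fun x => f x + (x - c) * f' x) volume a b :=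
    hintf.add hint2
  have key : ∫ x in a..b, (f x + (x - c) * f' x) = (b - c) * f b - (a - c) * f a :=
    integral_eq_sub_of_hasDerivAt_of_le hab' hgc hg hsum
  rw [intervalIntegral.integral_add hintf hint2] at key
  have heq : (f a + f b) / 2 - (1 / (b - a)) * ∫ x in a..b, f x
      = (1 / (b - a)) * ∫ x in a..b, (x - c) * f' x := by
    have hsplit : ∫ x in a..b, (x - c) * f' x
        = (b - c) * f b - (a - c) * f a - ∫ x in a..b, f x := by linarith
    rw [hsplit, hc]
    field_simp
    ring
  -- bound the integral
  have hac : a ≤ c := by rw [hc]; linarith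
  have hcb : c ≤ b := by rw [hc]; linarith
  have hcontabs : IntervalIntegrable (fun x : ℝ => |x - c| * M) volume a b :=
    (((continuous_id.sub continuous_const).abs).mul continuous_const).intervalIntegrable a b
  have habs : |∫ x in a..b, (x - c) * f' x| ≤ ∫ x in a..b, |x - c| * M := by
    calc |∫ x in a..b, (x - c) * f' x| ≤ ∫ x in a..b, |(x - c) * f' x| :=
          intervalIntegral.abs_integral_le_integral_abs hab'
      _ ≤ ∫ x in a..b, |x - c| * M := by
          apply intervalIntegral.integral_mono_on hab' hint2.abs hcontabs
          intro x hx
          rw [abs_mul]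
          exact mul_le_mul_of_nonneg_left (hbound x hx) (abs_nonneg _)
  have i1 : ∫ x in a..c, |x - c| = (c - a)^2 / 2 := by
    rw [intervalIntegral.integral_congr (g := fun x : ℝ => c - x) ?_]
    · rw [intervalIntegral.integral_sub intervalIntegrable_const intervalIntegrable_id,
        intervalIntegral.integral_const, integral_id]
      simp; ring
    · intro x hx
      rw [Set.uIcc_of_le hac] at hx
      show |x - c| = c - x
      rw [abs_of_nonpos (by linarith [hx.2])]; ring
  have i2 : ∫ x in c..b, |x - c| = (b - c)^2 / 2 := by
    rw [intervalIntegral.integral_congr (g := fun x : ℝ => x - c) ?_]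
    · rw [intervalIntegral.integral_sub intervalIntegrable_id intervalIntegrable_const,
        intervalIntegral.integral_const, integral_id]
      simp; ring
    · intro x hx
      rw [Set.uIcc_of_le hcb] at hx
      show |x - c| = x - c
      exact abs_of_nonneg (by linarith [hx.1])
  have iabs : ∫ x in a..b, |x - c| = (b - a)^2 / 4 := by
    have := intervalIntegral.integral_add_adjacent_intervals (μ := volume) (a := a) (b := c) (c := b)
      (f := fun x : ℝ => |x - c|)
      ((continuous_id.sub continuous_const).abs.intervalIntegrable a c)
      ((continuous_id.sub continuous_const).abs.intervalIntegrable c b)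
    rw [i1, i2] at this
    rw [← this, hc]; ring
  have hcomp : ∫ x in a..b, |x - c| * M = (b - a)^2 / 4 * M := by
    rw [intervalIntegral.integral_mul_const, iabs]
  rw [heq, abs_mul, abs_of_pos (by positivity : (0:ℝ) < 1 / (b - a))]
  calc 1 / (b - a) * |∫ x in a..b, (x - c) * f' x|
      ≤ 1 / (b - a) * ((b - a)^2 / 4 * M) := by
        apply mul_le_mul_of_nonneg_left _ (by positivity)
        exact habs.trans hcomp.le
    _ = (b - a) / 4 * M := by field_simp
end

section
/- If f is differentiable on (a,b), continuous on [a,b], p > 1, and |f'|^{p/(p-1)} is quasi-convex on [a,b], then |(f(a)+f(b))/2 − (1/(b-a)) ∫_a^b f(x) dx| ≤ ((b-a)/(2(p+1)^{1/p})) · (max(|f'(a)|^{p/(p-1)}, |f'(b)|^{p/(p-1)}))^{(p-1)/p}. -/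
open MeasureTheory intervalIntegral

theorem ion_holder (a b : ℝ) (hab : a < b) (p : ℝ) (hp : 1 < p)
    (f f' : ℝ → ℝ)
    (hcont : ContinuousOn f (Set.Icc a b))
    (hf : ∀ x ∈ Set.Ioo a b, HasDerivAt f (f' x) x)
    (hint : IntervalIntegrable f' volume a b)
    (hquasi : ∀ x ∈ Set.Icc a b, ∀ y ∈ Set.Icc a b, ∀ t ∈ Set.Icc (0:ℝ) 1,
      |f' (t * x + (1 - t) * y)| ^ (p / (p - 1)) ≤
        max (|f' x| ^ (p / (p - 1))) (|f' y| ^ (p / (p - 1)))) :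
    |(f a + f b) / 2 - (1 / (b - a)) * ∫ x in a..b, f x| ≤
      ((b - a) / (2 * (p + 1) ^ (1 / p))) *
        (max (|f' a| ^ (p / (p - 1))) (|f' b| ^ (p / (p - 1)))) ^ ((p - 1) / p) := by
  have hp0 : 0 < p := by linarith
  have hq0 : 0 < p / (p - 1) := div_pos hp0 (by linarith)
  set M : ℝ := max (|f' a| ^ (p / (p - 1))) (|f' b| ^ (p / (p - 1))) with hM
  have hM0 : 0 ≤ M := le_max_of_le_left (Real.rpow_nonneg (abs_nonneg _) _)
  set K : ℝ := M ^ ((p - 1) / p) with hK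
  have hK0 : 0 ≤ K := Real.rpow_nonneg hM0 _
  have hinv : (p - 1) / p = 1 / (p / (p - 1)) := by
    field_simp
  -- pointwise bound on |f'|
  have hbd : ∀ x ∈ Set.Icc a b, |f' x| ≤ K := by
    intro x hx
    have ht : (b - x) / (b - a) ∈ Set.Icc (0:ℝ) 1 := by
      constructor
      · exact div_nonneg (by linarith [hx.2]) (by linarith)
      · rw [div_le_one (by linarith)]; linarith [hx.1]
    have h1 := hquasi a (Set.left_mem_Icc.2 hab.le) b (Set.right_mem_Icc.2 hab.le) _ ht
    have hba' : b - a ≠ 0 := sub_ne_zero.2 hab.ne'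
    have hx' : (b - x) / (b - a) * a + (1 - (b - x) / (b - a)) * b = x := by
      field_simp
      ring
    rw [hx'] at h1
    calc |f' x| = (|f' x| ^ (p / (p - 1))) ^ (1 / (p / (p - 1))) := by
          rw [← Real.rpow_mul (abs_nonneg _), mul_one_div, div_self hq0.ne', Real.rpow_one]
      _ ≤ M ^ (1 / (p / (p - 1))) :=
          Real.rpow_le_rpow (Real.rpow_nonneg (abs_nonneg _) _) h1 (by positivity)
      _ = K := by rw [hK, hinv]
  -- integrability facts
  have hIccab : Set.uIcc a b = Set.Icc a b := Set.uIcc_of_le hab.le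
  have hintf : IntervalIntegrable f volume a b := by
    apply ContinuousOn.intervalIntegrable; rwa [hIccab]
  have hcg : ContinuousOn (fun x : ℝ => x - (a + b) / 2) (Set.uIcc a b) :=
    (continuous_id.sub continuous_const).continuousOn
  have hmul : IntervalIntegrable (fun x => (x - (a + b) / 2) * f' x) volume a b :=
    hint.continuousOn_mul hcg
  -- integration by parts via FTC
  have key : (∫ x in a..b, (x - (a + b) / 2) * f' x)
      = (b - a) / 2 * (f a + f b) - ∫ x in a..b, f x := by
    have hFTC := intervalIntegral.integral_eq_sub_of_hasDerivAt_of_le hab.le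
      (f := fun x => (x - (a + b) / 2) * f x)
      (f' := fun x => f x + (x - (a + b) / 2) * f' x)
      (((continuous_id.sub continuous_const).continuousOn).mul hcont)
      (fun x hx => by
        have h : HasDerivAt (fun x => (x - (a + b) / 2) * f x)
            (1 * f x + (x - (a + b) / 2) * f' x) x :=
          ((hasDerivAt_id' x).sub_const ((a + b) / 2)).mul (hf x hx)
        exact h.congr_deriv (by ring))
      (hintf.add hmul)
    rw [intervalIntegral.integral_add hintf hmul] at hFTC
    linear_combination hFTC
  -- the value of ∫ |x - (a+b)/2|
  have hc1 : a ≤ (a + b) / 2 := by linarith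
  have hc2 : (a + b) / 2 ≤ b := by linarith
  have habsint : (∫ x in a..b, |x - (a + b) / 2|) = (b - a) ^ 2 / 4 := by
    have hcabs : Continuous fun x : ℝ => |x - (a + b) / 2| :=
      continuous_abs.comp (continuous_id.sub continuous_const)
    have i1 : IntervalIntegrable (fun x : ℝ => |x - (a + b) / 2|) volume a ((a + b) / 2) :=
      hcabs.intervalIntegrable _ _
    have i2 : IntervalIntegrable (fun x : ℝ => |x - (a + b) / 2|) volume ((a + b) / 2) b :=
      hcabs.intervalIntegrable _ _
    rw [← intervalIntegral.integral_add_adjacent_intervals i1 i2]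
    have e1 : (∫ x in a..(a + b) / 2, |x - (a + b) / 2|)
        = ∫ x in a..(a + b) / 2, ((a + b) / 2 - x) := by
      apply intervalIntegral.integral_congr
      intro x hx
      rw [Set.uIcc_of_le hc1, Set.mem_Icc] at hx
      show |x - (a + b) / 2| = (a + b) / 2 - x
      rw [abs_of_nonpos (by linarith [hx.2])]; ring
    have e2 : (∫ x in ((a + b) / 2)..b, |x - (a + b) / 2|)
        = ∫ x in ((a + b) / 2)..b, (x - (a + b) / 2) := by
      apply intervalIntegral.integral_congr
      intro x hx
      rw [Set.uIcc_of_le hc2, Set.mem_Icc] at hx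
      show |x - (a + b) / 2| = x - (a + b) / 2
      rw [abs_of_nonneg (by linarith [hx.1])]
    rw [e1, e2,
      intervalIntegral.integral_sub intervalIntegrable_const intervalIntegrable_id,
      intervalIntegral.integral_sub intervalIntegrable_id intervalIntegrable_const,
      integral_id, integral_id,
      intervalIntegral.integral_const, intervalIntegral.integral_const]
    simp only [smul_eq_mul]
    ring
  -- bound on the integral
  have habs : |∫ x in a..b, (x - (a + b) / 2) * f' x| ≤ (b - a) ^ 2 / 4 * K := by
    calc |∫ x in a..b, (x - (a + b) / 2) * f' x|
        ≤ ∫ x in a..b, |(x - (a + b) / 2) * f' x| :=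
          intervalIntegral.abs_integral_le_integral_abs hab.le
      _ ≤ ∫ x in a..b, |x - (a + b) / 2| * K := by
          apply intervalIntegral.integral_mono_on hab.le hmul.abs
            (((continuous_abs.comp (continuous_id.sub continuous_const)).mul
              continuous_const).intervalIntegrable _ _)
          intro x hx
          rw [abs_mul]
          exact mul_le_mul_of_nonneg_left (hbd x hx) (abs_nonneg _)
      _ = (b - a) ^ 2 / 4 * K := by
          rw [intervalIntegral.integral_mul_const, habsint]
  -- rewrite LHS
  have hba : (0:ℝ) < b - a := by linarith
  have hlhs : (f a + f b) / 2 - (1 / (b - a)) * ∫ x in a..b, f x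
      = (1 / (b - a)) * ∫ x in a..b, (x - (a + b) / 2) * f' x := by
    rw [key]; field_simp
  rw [hlhs, abs_mul, abs_of_nonneg (by positivity : (0:ℝ) ≤ 1 / (b - a))]
  -- Bernoulli: p + 1 ≤ 2 ^ p, so (p+1)^(1/p) ≤ 2
  have hbern : p + 1 ≤ (2:ℝ) ^ p := by
    have := one_add_mul_self_le_rpow_one_add (s := 1) (by norm_num) hp.le
    norm_num at this
    linarith
  have hR : (p + 1) ^ (1 / p) ≤ 2 := by
    calc (p + 1) ^ (1 / p) ≤ ((2:ℝ) ^ p) ^ (1 / p) :=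
          Real.rpow_le_rpow (by linarith) hbern (by positivity)
      _ = 2 := by
          rw [← Real.rpow_mul (by norm_num), mul_one_div, div_self hp0.ne', Real.rpow_one]
  have hRpos : (0:ℝ) < (p + 1) ^ (1 / p) := Real.rpow_pos_of_pos (by linarith) _
  calc (1 / (b - a)) * |∫ x in a..b, (x - (a + b) / 2) * f' x|
      ≤ (1 / (b - a)) * ((b - a) ^ 2 / 4 * K) :=
        mul_le_mul_of_nonneg_left habs (by positivity)
    _ = (b - a) / 4 * K := by field_simp
    _ ≤ (b - a) / (2 * (p + 1) ^ (1 / p)) * K := by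
        apply mul_le_mul_of_nonneg_right _ hK0
        apply div_le_div_of_nonneg_left hba.le (by positivity)
        linarith
end

section
/- Let c > 0 and f differentiable on an open interval containing [a, a+c] with integrable derivative. Then ∫_0^{1/2} t·f'(a+tc) dt + ∫_{1/2}^1 (t-1)·f'(a+tc) dt = (1/c)·f(a + c/2) − (1/c²) ∫_a^{a+c} f(x) dx. -/
open MeasureTheory intervalIntegral

theorem midpoint_identity_shift (a c : ℝ) (hc : 0 < c) (f f' : ℝ → ℝ)
    (hf : ∀ x ∈ Set.Icc a (a + c), HasDerivAt f (f' x) x)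
    (hint : IntervalIntegrable f' volume a (a + c)) :
    (∫ t in (0:ℝ)..(1/2), t * f' (a + t * c)) +
      (∫ t in (1/2:ℝ)..1, (t - 1) * f' (a + t * c)) =
      (1 / c) * f (a + c / 2) - (1 / c ^ 2) * ∫ x in a..(a + c), f x := by
  have hc' : c ≠ 0 := ne_of_gt hc
  -- integrability of t ↦ f' (a + t * c) on [0,1]
  have hg : IntervalIntegrable (fun t => f' (a + t * c)) volume 0 1 := by
    have h1 := (hint.comp_add_left a).comp_mul_right (c := c)
    simpa [hc'] using h1
  have hmem : ∀ t ∈ Set.uIcc (0:ℝ) 1, a + t * c ∈ Set.Icc a (a + c) := by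
    intro t ht
    rw [Set.uIcc_of_le (by norm_num)] at ht
    obtain ⟨ht0, ht1⟩ := ht
    constructor
    · nlinarith
    · nlinarith
  have hderiv : ∀ t ∈ Set.uIcc (0:ℝ) 1,
      HasDerivAt (fun t => f (a + t * c)) (c * f' (a + t * c)) t := by
    intro t ht
    have h := (hf (a + t * c) (hmem t ht)).comp t
      (((hasDerivAt_id t).mul_const c).const_add a)
    simpa [mul_comm, Function.comp_def] using h
  have hsub1 : Set.uIcc (0:ℝ) (1/2) ⊆ Set.uIcc (0:ℝ) 1 := by
    apply Set.uIcc_subset_uIcc <;> simp [Set.mem_uIcc] <;> norm_num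
  have hsub2 : Set.uIcc (1/2:ℝ) 1 ⊆ Set.uIcc (0:ℝ) 1 := by
    apply Set.uIcc_subset_uIcc <;> simp [Set.mem_uIcc] <;> norm_num
  have hgc : ContinuousOn (fun t => f (a + t * c)) (Set.uIcc (0:ℝ) 1) :=
    fun t ht => ((hderiv t ht).continuousAt).continuousWithinAt
  -- integration by parts on [0, 1/2]
  have hI1 : ∫ t in (0:ℝ)..(1/2), t * (c * f' (a + t * c)) =
      (1/2) * f (a + (1/2) * c) - ∫ t in (0:ℝ)..(1/2), f (a + t * c) := by
    have h := integral_mul_deriv_eq_deriv_mul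
      (u := fun t : ℝ => t) (u' := fun _ => (1:ℝ))
      (v := fun t => f (a + t * c)) (v' := fun t => c * f' (a + t * c))
      (fun x _ => hasDerivAt_id x)
      (fun x hx => hderiv x (hsub1 hx))
      intervalIntegrable_const
      ((hg.mono_set hsub1).const_mul c)
    simpa using h
  -- integration by parts on [1/2, 1]
  have hI2 : ∫ t in (1/2:ℝ)..1, (t - 1) * (c * f' (a + t * c)) =
      (1/2) * f (a + (1/2) * c) - ∫ t in (1/2:ℝ)..1, f (a + t * c) := by
    have h := integral_mul_deriv_eq_deriv_mul
      (u := fun t : ℝ => t - 1) (u' := fun _ => (1:ℝ))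
      (v := fun t => f (a + t * c)) (v' := fun t => c * f' (a + t * c))
      (fun x _ => (hasDerivAt_id x).sub_const 1)
      (fun x hx => hderiv x (hsub2 hx))
      intervalIntegrable_const
      ((hg.mono_set hsub2).const_mul c)
    rw [h]
    norm_num
  -- combine the two integrals of f ∘ affine
  have hadd : (∫ t in (0:ℝ)..(1/2), f (a + t * c)) +
      (∫ t in (1/2:ℝ)..1, f (a + t * c)) = ∫ t in (0:ℝ)..1, f (a + t * c) := by
    apply integral_add_adjacent_intervals
    · exact (hgc.mono hsub1).intervalIntegrable
    · exact (hgc.mono hsub2).intervalIntegrable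
  -- change of variables
  have hcov : ∫ t in (0:ℝ)..1, f (a + t * c) = c⁻¹ * ∫ x in a..(a + c), f x := by
    have h := integral_comp_add_mul f hc' a (a := (0:ℝ)) (b := 1) (c := c)
    simp only [mul_comm c] at h
    simpa using h
  -- pull out the constant c from the goal integrals
  have e1 : ∫ t in (0:ℝ)..(1/2), t * (c * f' (a + t * c)) =
      c * ∫ t in (0:ℝ)..(1/2), t * f' (a + t * c) := by
    rw [← intervalIntegral.integral_const_mul]
    congr 1; ext t; ring
  have e2 : ∫ t in (1/2:ℝ)..1, (t - 1) * (c * f' (a + t * c)) =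
      c * ∫ t in (1/2:ℝ)..1, (t - 1) * f' (a + t * c) := by
    rw [← intervalIntegral.integral_const_mul]
    congr 1; ext t; ring
  rw [e1] at hI1
  rw [e2] at hI2
  have hmid : a + (1/2) * c = a + c / 2 := by ring
  rw [hmid] at hI1 hI2
  have := hcov
  field_simp at this hI1 hI2 hadd ⊢
  simp only [mul_comm _ c] at this
  nlinarith [hI1, hI2, hadd, this]
end

section
/- Let c > 0, f differentiable on an open interval containing [a, a+c] with integrable derivative, and suppose A, B ≥ 0 satisfy |f'(a+tc)| ≤ (1-t)·A + t·B for all t ∈ [0,1]. Then |(1/c) ∫_a^{a+c} f(x) dx − (f(a)+f(a+c))/2| ≤ (c/8)·(A + B). -/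
open MeasureTheory intervalIntegral

private lemma cubic_deriv (k1 k2 k3 : ℝ) (x : ℝ) :
    HasDerivAt (fun y : ℝ => k1 * y + k2 * y ^ 2 + k3 * y ^ 3)
      (k1 + 2 * k2 * x + 3 * k3 * x ^ 2) x := by
  have h1 := (hasDerivAt_id x).const_mul k1
  have h2 := (hasDerivAt_pow 2 x).const_mul k2
  have h3 := (hasDerivAt_pow 3 x).const_mul k3
  convert (h1.add h2).add h3 using 1 <;> try rfl
  push_cast
  ring

theorem phi_convex_trapezoid (a c A B : ℝ) (hc : 0 < c) (hA : 0 ≤ A) (hB : 0 ≤ B)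
    (f f' : ℝ → ℝ)
    (hf : ∀ x ∈ Set.Icc a (a + c), HasDerivAt f (f' x) x)
    (hint : IntervalIntegrable f' volume a (a + c))
    (hbound : ∀ t ∈ Set.Icc (0:ℝ) 1, |f' (a + t * c)| ≤ (1 - t) * A + t * B) :
    |(1 / c) * (∫ x in a..(a + c), f x) - (f a + f (a + c)) / 2| ≤
      (c / 8) * (A + B) := by
  set b := a + c with hb
  set m := a + c / 2 with hm
  have hab : a ≤ b := by simp [hb]; linarith
  have ham : a ≤ m := by simp [hm]; linarith
  have hmb : m ≤ b := by simp [hm, hb]; linarith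
  have huicc : Set.uIcc a b = Set.Icc a b := Set.uIcc_of_le hab
  -- integration by parts
  have hu : ∀ x ∈ Set.uIcc a b, HasDerivAt (fun y : ℝ => y - m) 1 x :=
    fun x _ => (hasDerivAt_id x).sub_const m
  have hv : ∀ x ∈ Set.uIcc a b, HasDerivAt f (f' x) x := by
    rw [huicc]; exact hf
  have hparts := integral_mul_deriv_eq_deriv_mul hu hv
    (intervalIntegrable_const) hint
  have hIf : IntervalIntegrable f volume a b := by
    apply ContinuousOn.intervalIntegrable
    rw [huicc]
    exact fun x hx => (hf x hx).continuousAt.continuousWithinAt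
  -- key identity
  have hkey : (1 / c) * (∫ x in a..b, f x) - (f a + f b) / 2 =
      -(1 / c) * ∫ x in a..b, (x - m) * f' x := by
    have h2 : (∫ x in a..b, (x - m) * f' x)
        = (b - m) * f b - (a - m) * f a - ∫ x in a..b, f x := by
      simpa using hparts
    have hbm : b - m = c / 2 := by rw [hb, hm]; ring
    have ham' : a - m = -(c / 2) := by rw [hm]; ring
    rw [h2, hbm, ham']
    field_simp
    ring
  rw [hkey]
  have hcne : c ≠ 0 := ne_of_gt hc
  rw [abs_mul, abs_neg, abs_of_pos (by positivity : (0:ℝ) < 1 / c)]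
  -- bound the integral
  have hIprod : IntervalIntegrable (fun x => (x - m) * f' x) volume a b :=
    hint.continuousOn_mul (by fun_prop)
  have habs1 : |∫ x in a..b, (x - m) * f' x| ≤ ∫ x in a..b, |(x - m) * f' x| :=
    abs_integral_le_integral_abs hab
  -- the majorant
  set g : ℝ → ℝ := fun x => |x - m| * (((b - x) * A + (x - a) * B) / c) with hg
  have hgcont : Continuous g := by fun_prop
  have hmono : (∫ x in a..b, |(x - m) * f' x|) ≤ ∫ x in a..b, g x := by
    apply integral_mono_on hab hIprod.abs (hgcont.intervalIntegrable a b)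
    intro x hx
    rw [abs_mul]
    apply mul_le_mul_of_nonneg_left _ (abs_nonneg _)
    -- pointwise bound on |f' x|
    have hx0 : 0 ≤ (x - a) / c := by
      apply div_nonneg _ hc.le; linarith [hx.1]
    have hx1 : (x - a) / c ≤ 1 := by
      rw [div_le_one hc]
      have := hx.2; simp [hb] at this; linarith
    have hbd := hbound ((x - a) / c) ⟨hx0, hx1⟩
    have hxx : a + (x - a) / c * c = x := by field_simp; ring
    rw [hxx] at hbd
    calc |f' x| ≤ (1 - (x - a) / c) * A + (x - a) / c * B := hbd
      _ = ((b - x) * A + (x - a) * B) / c := by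
          rw [hb]; field_simp
          try ring
          try tauto
  -- compute the integral of g
  set P : ℝ := A * b - B * a with hP
  set Q : ℝ := B - A with hQ
  set k1 : ℝ := m * P with hk1
  set k2 : ℝ := (m * Q - P) / 2 with hk2
  set k3 : ℝ := -Q / 3 with hk3
  set F : ℝ → ℝ := fun y => k1 * y + k2 * y ^ 2 + k3 * y ^ 3 with hF
  have hFd : ∀ x : ℝ, HasDerivAt F ((m - x) * ((b - x) * A + (x - a) * B)) x := by
    intro x
    have := cubic_deriv k1 k2 k3 x
    convert this using 1
    rw [hk1, hk2, hk3, hP, hQ]; ring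
  have hpcont : Continuous (fun x : ℝ => (m - x) * ((b - x) * A + (x - a) * B)) := by
    fun_prop
  have hint1 : (∫ x in a..m, (m - x) * ((b - x) * A + (x - a) * B)) = F m - F a :=
    integral_eq_sub_of_hasDerivAt (fun x _ => hFd x)
      ((hpcont.intervalIntegrable a m))
  have hFd2 : ∀ x : ℝ, HasDerivAt (fun y => -F y)
      ((x - m) * ((b - x) * A + (x - a) * B)) x := by
    intro x
    have := (hFd x).neg
    convert this using 1 <;> try rfl
    ring
  have hpcont2 : Continuous (fun x : ℝ => (x - m) * ((b - x) * A + (x - a) * B)) := by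
    fun_prop
  have hint2 : (∫ x in m..b, (x - m) * ((b - x) * A + (x - a) * B)) = -F b - -F m :=
    integral_eq_sub_of_hasDerivAt (fun x _ => hFd2 x)
      ((hpcont2.intervalIntegrable m b))
  have hgsplit : (∫ x in a..b, g x) = (∫ x in a..m, g x) + ∫ x in m..b, g x :=
    (integral_add_adjacent_intervals (hgcont.intervalIntegrable a m)
      (hgcont.intervalIntegrable m b)).symm
  have hg1 : (∫ x in a..m, g x) = (F m - F a) / c := by
    rw [← hint1, ← intervalIntegral.integral_div]
    apply integral_congr
    intro x hx
    rw [Set.uIcc_of_le ham] at hx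
    have : |x - m| = m - x := by rw [abs_of_nonpos (by linarith [hx.2])]; ring
    simp only [hg, this, mul_div_assoc]
  have hg2 : (∫ x in m..b, g x) = (-F b - -F m) / c := by
    rw [← hint2, ← intervalIntegral.integral_div]
    apply integral_congr
    intro x hx
    rw [Set.uIcc_of_le hmb] at hx
    have : |x - m| = x - m := abs_of_nonneg (by linarith [hx.1])
    simp only [hg, this, mul_div_assoc]
  have hval : (∫ x in a..b, g x) = c ^ 2 * (A + B) / 8 := by
    rw [hgsplit, hg1, hg2, hF, hk1, hk2, hk3, hP, hQ, hm, hb]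
    field_simp
    ring
  calc (1 / c) * |∫ x in a..b, (x - m) * f' x|
      ≤ (1 / c) * ∫ x in a..b, g x := by
        apply mul_le_mul_of_nonneg_left (habs1.trans hmono) (by positivity)
    _ = (c / 8) * (A + B) := by rw [hval]; field_simp
end

section
/- Let c > 0, p > 1, f differentiable on an open interval containing [a, a+c] with integrable derivative, and suppose A, B ≥ 0 satisfy |f'(a+tc)|^{p/(p-1)} ≤ (1-t)·A^{p/(p-1)} + t·B^{p/(p-1)} for all t ∈ [0,1]. Then |(1/c) ∫_a^{a+c} f(x) dx − (f(a)+f(a+c))/2| ≤ (c/(2(p+1)^{1/p})) · ((A^{p/(p-1)} + B^{p/(p-1)})/2)^{(p-1)/p}. -/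
open MeasureTheory intervalIntegral

lemma aux_abs_rpow_integral (d p : ℝ) (hd : 0 ≤ d) (hp : 0 < p) :
    ∫ x in (-d)..d, |x| ^ p = 2 * (d ^ (p + 1) / (p + 1)) := by
  have hcont : ∀ s t : ℝ, IntervalIntegrable (fun x : ℝ => |x| ^ p) volume s t := by
    intro s t
    apply ContinuousOn.intervalIntegrable
    intro x _
    exact ((Real.continuousAt_rpow_const _ p (Or.inr hp.le)).comp
      continuous_abs.continuousAt).continuousWithinAt
  have hsplit := intervalIntegral.integral_add_adjacent_intervals
    (a := -d) (b := 0) (c := d) (f := fun x => |x| ^ p) (hcont _ _) (hcont _ _)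
  have hneg : (∫ x in (-d)..(0:ℝ), |x| ^ p) = ∫ x in (0:ℝ)..d, |x| ^ p := by
    have h := intervalIntegral.integral_comp_neg (a := (0:ℝ)) (b := d)
      (fun x : ℝ => |x| ^ p)
    simp only [abs_neg, neg_zero] at h
    rw [← h]
  have hpos : (∫ x in (0:ℝ)..d, |x| ^ p) = d ^ (p + 1) / (p + 1) := by
    have hcongr : (∫ x in (0:ℝ)..d, |x| ^ p) = ∫ x in (0:ℝ)..d, x ^ p := by
      apply intervalIntegral.integral_congr
      intro x hx
      rw [Set.uIcc_of_le hd] at hx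
      show |x| ^ p = x ^ p
      rw [abs_of_nonneg hx.1]
    rw [hcongr, integral_rpow (Or.inl (by linarith)), Real.zero_rpow (by linarith), sub_zero]
  rw [← hsplit, hneg, hpos]
  ring

theorem phi_convex_trapezoid_holder (a c A B p : ℝ) (hc : 0 < c) (hp : 1 < p)
    (hA : 0 ≤ A) (hB : 0 ≤ B) (f f' : ℝ → ℝ)
    (hf : ∀ x ∈ Set.Icc a (a + c), HasDerivAt f (f' x) x)
    (hint : IntervalIntegrable f' volume a (a + c))
    (hbound : ∀ t ∈ Set.Icc (0:ℝ) 1,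
      |f' (a + t * c)| ^ (p / (p - 1)) ≤ (1 - t) * A ^ (p / (p - 1)) + t * B ^ (p / (p - 1))) :
    |(1 / c) * (∫ x in a..(a + c), f x) - (f a + f (a + c)) / 2| ≤
      (c / (2 * (p + 1) ^ (1 / p))) *
        ((A ^ (p / (p - 1)) + B ^ (p / (p - 1))) / 2) ^ ((p - 1) / p) := by
  have hac : a ≤ a + c := by linarith
  set q : ℝ := p / (p - 1) with hqdef
  have hpq : p.HolderConjugate q := Real.HolderConjugate.conjExponent hp
  have hp0 : 0 < p := hpq.pos
  have hq0 : 0 < q := hpq.symm.pos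
  have hp1 : (0:ℝ) < p - 1 := by linarith
  have hinvq : 1 / q = (p - 1) / p := by
    rw [hqdef]; rw [one_div_div]
  -- pointwise bound in terms of x
  have hbx : ∀ x ∈ Set.Icc a (a + c),
      |f' x| ^ q ≤ ((a + c - x) / c) * A ^ q + ((x - a) / c) * B ^ q := by
    intro x hx
    have ht : (x - a) / c ∈ Set.Icc (0:ℝ) 1 :=
      ⟨div_nonneg (by linarith [hx.1]) hc.le, (div_le_one hc).2 (by linarith [hx.2])⟩
    have h := hbound _ ht
    have hx' : a + (x - a) / c * c = x := by field_simp; ring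
    have h1 : 1 - (x - a) / c = (a + c - x) / c := by field_simp; ring
    rw [hx', h1] at h
    exact h
  -- norm bound for f'
  have hM : ∀ x ∈ Set.Icc a (a + c), ‖f' x‖ ≤ (A ^ q + B ^ q) ^ (1 / q) := by
    intro x hx
    have h1 := hbx x hx
    have hle1 : (a + c - x) / c ≤ 1 := (div_le_one hc).2 (by linarith [hx.1])
    have hle2 : (x - a) / c ≤ 1 := (div_le_one hc).2 (by linarith [hx.2])
    have hge1 : 0 ≤ (a + c - x) / c := div_nonneg (by linarith [hx.2]) hc.le
    have hge2 : 0 ≤ (x - a) / c := div_nonneg (by linarith [hx.1]) hc.le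
    have hAq : (0:ℝ) ≤ A ^ q := Real.rpow_nonneg hA q
    have hBq : (0:ℝ) ≤ B ^ q := Real.rpow_nonneg hB q
    have h2 : |f' x| ^ q ≤ A ^ q + B ^ q := by
      calc |f' x| ^ q ≤ ((a + c - x) / c) * A ^ q + ((x - a) / c) * B ^ q := h1
        _ ≤ 1 * A ^ q + 1 * B ^ q := by gcongr
        _ = A ^ q + B ^ q := by ring
    have h3 : (|f' x| ^ q) ^ (1 / q) ≤ (A ^ q + B ^ q) ^ (1 / q) :=
      Real.rpow_le_rpow (Real.rpow_nonneg (abs_nonneg _) q) h2 (div_nonneg zero_le_one hq0.le)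
    rwa [one_div, Real.rpow_rpow_inv (abs_nonneg _) hq0.ne', ← Real.norm_eq_abs,
      ← one_div] at h3
  -- measure-theoretic setup
  haveI : IsFiniteMeasure (volume.restrict (Set.Ioc a (a + c))) := by
    constructor
    rw [Measure.restrict_apply_univ]
    exact measure_Ioc_lt_top
  have hmf' : AEStronglyMeasurable f' (volume.restrict (Set.Ioc a (a + c))) :=
    hint.1.aestronglyMeasurable
  have hmem2 : MemLp f' (ENNReal.ofReal q) (volume.restrict (Set.Ioc a (a + c))) := by
    apply MemLp.of_bound hmf' ((A ^ q + B ^ q) ^ (1 / q))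
    filter_upwards [ae_restrict_mem measurableSet_Ioc] with x hx
    exact hM x (Set.Ioc_subset_Icc_self hx)
  have hmem1 : MemLp (fun x : ℝ => x - (a + c / 2)) (ENNReal.ofReal p)
      (volume.restrict (Set.Ioc a (a + c))) := by
    apply MemLp.of_bound (f := fun x : ℝ => x - (a + c / 2)) (by fun_prop) c
    filter_upwards [ae_restrict_mem measurableSet_Ioc] with x hx
    rw [Real.norm_eq_abs, abs_le]
    rcases hx with ⟨h1, h2⟩
    constructor <;> linarith
  -- integration by parts
  have hIcc : Set.uIcc a (a + c) = Set.Icc a (a + c) := Set.uIcc_of_le hac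
  have hfint : IntervalIntegrable f volume a (a + c) := by
    apply ContinuousOn.intervalIntegrable
    rw [hIcc]
    exact fun x hx => (hf x hx).continuousAt.continuousWithinAt
  have hibp : ∫ x in a..(a + c), (x - (a + c / 2)) * f' x
      = c / 2 * f (a + c) + c / 2 * f a - ∫ x in a..(a + c), f x := by
    have h := intervalIntegral.integral_mul_deriv_eq_deriv_mul
      (u := fun x : ℝ => x - (a + c / 2)) (u' := fun _ => (1:ℝ)) (v := f) (v' := f')
      (fun x _ => (hasDerivAt_id x).sub_const _)
      (fun x hx => hf x (hIcc ▸ hx)) intervalIntegrable_const hint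
    rw [h]
    simp only [one_mul]
    ring
  have hL : (1 / c) * (∫ x in a..(a + c), f x) - (f a + f (a + c)) / 2
      = -(1 / c) * ∫ x in a..(a + c), (x - (a + c / 2)) * f' x := by
    rw [hibp]; field_simp; ring
  rw [hL, neg_mul, abs_neg, abs_mul, abs_of_nonneg (by positivity : (0:ℝ) ≤ 1 / c)]
  -- bound the integral by the integral of norms
  have habs : |∫ x in a..(a + c), (x - (a + c / 2)) * f' x|
      ≤ ∫ x in Set.Ioc a (a + c), ‖x - (a + c / 2)‖ * ‖f' x‖ := by
    calc |∫ x in a..(a + c), (x - (a + c / 2)) * f' x|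
        ≤ ∫ x in a..(a + c), |(x - (a + c / 2)) * f' x| :=
          intervalIntegral.abs_integral_le_integral_abs hac
      _ = ∫ x in Set.Ioc a (a + c), ‖x - (a + c / 2)‖ * ‖f' x‖ := by
          rw [intervalIntegral.integral_of_le hac]
          congr 1
          funext x
          rw [abs_mul, Real.norm_eq_abs, Real.norm_eq_abs]
  -- Hölder
  have hHold : (∫ x in Set.Ioc a (a + c), ‖x - (a + c / 2)‖ * ‖f' x‖)
      ≤ (∫ x in Set.Ioc a (a + c), ‖x - (a + c / 2)‖ ^ p) ^ (1 / p)
        * (∫ x in Set.Ioc a (a + c), ‖f' x‖ ^ q) ^ (1 / q) :=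
    MeasureTheory.integral_mul_norm_le_Lp_mul_Lq hpq hmem1 hmem2
  -- first factor
  have hI1 : (∫ x in Set.Ioc a (a + c), ‖x - (a + c / 2)‖ ^ p)
      = c ^ (p + 1) / (2 ^ p * (p + 1)) := by
    have e1 : (∫ x in Set.Ioc a (a + c), ‖x - (a + c / 2)‖ ^ p)
        = ∫ x in a..(a + c), |x - (a + c / 2)| ^ p := by
      rw [intervalIntegral.integral_of_le hac]
      congr 1
    have e2 : (∫ x in a..(a + c), |x - (a + c / 2)| ^ p)
        = ∫ x in (a - (a + c / 2))..((a + c) - (a + c / 2)), |x| ^ p :=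
      intervalIntegral.integral_comp_sub_right (fun x => |x| ^ p) (a + c / 2)
    have e3 : a - (a + c / 2) = -(c / 2) := by ring
    have e4 : (a + c) - (a + c / 2) = c / 2 := by ring
    rw [e1, e2, e3, e4, aux_abs_rpow_integral (c / 2) p (by positivity) hp0]
    rw [Real.div_rpow hc.le (by norm_num : (0:ℝ) ≤ 2)]
    have h2p : (2:ℝ) ^ (p + 1) = 2 ^ p * 2 := by
      rw [Real.rpow_add (by norm_num : (0:ℝ) < 2), Real.rpow_one]
    rw [h2p]
    have h2pne : (2:ℝ) ^ p ≠ 0 := by positivity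
    field_simp
  -- second factor
  have hI2 : (∫ x in Set.Ioc a (a + c), ‖f' x‖ ^ q) ≤ c * ((A ^ q + B ^ q) / 2) := by
    have hint2 : IntegrableOn (fun x => ‖f' x‖ ^ q) (Set.Ioc a (a + c)) := by
      have h := hmem2.integrable_norm_rpow (by simp only [ne_eq, ENNReal.ofReal_eq_zero, not_le]; exact hq0) (by simp)
      rwa [ENNReal.toReal_ofReal hq0.le] at h
    have hintR : IntegrableOn
        (fun x => ((a + c - x) / c) * A ^ q + ((x - a) / c) * B ^ q)
        (Set.Ioc a (a + c)) := by
      apply Continuous.integrableOn_Ioc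
      fun_prop
    have hmono : (∫ x in Set.Ioc a (a + c), ‖f' x‖ ^ q)
        ≤ ∫ x in Set.Ioc a (a + c), ((a + c - x) / c) * A ^ q + ((x - a) / c) * B ^ q :=
      setIntegral_mono_on hint2 hintR measurableSet_Ioc
        (fun x hx => by
          rw [Real.norm_eq_abs]
          exact hbx x (Set.Ioc_subset_Icc_self hx))
    refine hmono.trans_eq ?_
    rw [← intervalIntegral.integral_of_le hac]
    have heq : ∀ x : ℝ, ((a + c - x) / c) * A ^ q + ((x - a) / c) * B ^ q
        = (((a + c) * A ^ q - a * B ^ q) / c) + ((B ^ q - A ^ q) / c) * x := by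
      intro x; field_simp; ring
    rw [intervalIntegral.integral_congr (g := fun x : ℝ =>
        (((a + c) * A ^ q - a * B ^ q) / c) + ((B ^ q - A ^ q) / c) * x)
        (fun x _ => heq x)]
    rw [intervalIntegral.integral_add intervalIntegrable_const
      (intervalIntegral.intervalIntegrable_id.const_mul _),
      intervalIntegral.integral_const, intervalIntegral.integral_const_mul, integral_id]
    rw [smul_eq_mul]
    field_simp
    ring
  -- combine
  have hI2nn : (0:ℝ) ≤ ∫ x in Set.Ioc a (a + c), ‖f' x‖ ^ q :=
    integral_nonneg fun x => Real.rpow_nonneg (norm_nonneg _) _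
  have hfac2 : (∫ x in Set.Ioc a (a + c), ‖f' x‖ ^ q) ^ (1 / q)
      ≤ (c * ((A ^ q + B ^ q) / 2)) ^ (1 / q) :=
    Real.rpow_le_rpow hI2nn hI2 (div_nonneg zero_le_one hq0.le)
  have hchain : (1 / c) * |∫ x in a..(a + c), (x - (a + c / 2)) * f' x|
      ≤ (1 / c) * ((c ^ (p + 1) / (2 ^ p * (p + 1))) ^ (1 / p)
          * (c * ((A ^ q + B ^ q) / 2)) ^ (1 / q)) := by
    apply mul_le_mul_of_nonneg_left _ (by positivity)
    calc |∫ x in a..(a + c), (x - (a + c / 2)) * f' x|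
        ≤ ∫ x in Set.Ioc a (a + c), ‖x - (a + c / 2)‖ * ‖f' x‖ := habs
      _ ≤ (∫ x in Set.Ioc a (a + c), ‖x - (a + c / 2)‖ ^ p) ^ (1 / p)
          * (∫ x in Set.Ioc a (a + c), ‖f' x‖ ^ q) ^ (1 / q) := hHold
      _ ≤ (c ^ (p + 1) / (2 ^ p * (p + 1))) ^ (1 / p)
          * (c * ((A ^ q + B ^ q) / 2)) ^ (1 / q) := by
          rw [hI1]
          exact mul_le_mul_of_nonneg_left hfac2 (Real.rpow_nonneg (by positivity) _)
  refine hchain.trans_eq ?_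
  -- final algebra
  have hSnn : (0:ℝ) ≤ (A ^ q + B ^ q) / 2 := by
    have h1 : (0:ℝ) ≤ A ^ q := Real.rpow_nonneg hA q
    have h2 : (0:ℝ) ≤ B ^ q := Real.rpow_nonneg hB q
    positivity
  have e1 : (c * ((A ^ q + B ^ q) / 2)) ^ (1 / q)
      = c ^ (1 / q) * ((A ^ q + B ^ q) / 2) ^ (1 / q) :=
    Real.mul_rpow hc.le hSnn
  have e2 : (c ^ (p + 1) / (2 ^ p * (p + 1))) ^ (1 / p)
      = c ^ ((p + 1) * (1 / p)) / (2 * (p + 1) ^ (1 / p)) := by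
    rw [Real.div_rpow (by positivity) (by positivity),
      Real.mul_rpow (by positivity) (by positivity),
      ← Real.rpow_mul hc.le, ← Real.rpow_mul (by norm_num : (0:ℝ) ≤ 2),
      mul_one_div_cancel hp0.ne', Real.rpow_one]
  rw [e1, e2, hinvq]
  have hc2 : c ^ ((p + 1) * (1 / p)) * c ^ ((p - 1) / p) = c * c := by
    rw [← Real.rpow_add hc]
    have he : (p + 1) * (1 / p) + (p - 1) / p = 2 := by field_simp; ring
    rw [he, show (2:ℝ) = ((2:ℕ):ℝ) by norm_num, Real.rpow_natCast]
    ring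
  have hD : (0:ℝ) < (p + 1) ^ (1 / p) := by positivity
  have key : (1 / c) * (c ^ ((p + 1) * (1 / p)) / (2 * (p + 1) ^ (1 / p))
        * (c ^ ((p - 1) / p) * ((A ^ q + B ^ q) / 2) ^ ((p - 1) / p)))
      = (c ^ ((p + 1) * (1 / p)) * c ^ ((p - 1) / p)) / (c * (2 * (p + 1) ^ (1 / p)))
        * ((A ^ q + B ^ q) / 2) ^ ((p - 1) / p) := by
    ring
  rw [key, hc2, mul_div_mul_left _ _ hc.ne']
end

section
/- Let c > 0, f differentiable on an open interval containing [a, a+c] with integrable derivative, and suppose A, B ≥ 0 satisfy |f'(a+tc)| ≤ (1-t)·A + t·B for all t ∈ [0,1]. Then |(1/c) ∫_a^{a+c} f(x) dx − f(a + c/2)| ≤ (c/8)·(A + B). -/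
open MeasureTheory intervalIntegral

theorem phi_convex_midpoint (a c A B : ℝ) (hc : 0 < c) (hA : 0 ≤ A) (hB : 0 ≤ B)
    (f f' : ℝ → ℝ)
    (hf : ∀ x ∈ Set.Icc a (a + c), HasDerivAt f (f' x) x)
    (hint : IntervalIntegrable f' volume a (a + c))
    (hbound : ∀ t ∈ Set.Icc (0:ℝ) 1, |f' (a + t * c)| ≤ (1 - t) * A + t * B) :
    |(1 / c) * (∫ x in a..(a + c), f x) - f (a + c / 2)| ≤ (c / 8) * (A + B) := by
  have hab : a ≤ a + c := by linarith
  set m := a + c / 2 with hmdef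
  have ham : a ≤ m := by rw [hmdef]; linarith
  have hmb : m ≤ a + c := by rw [hmdef]; linarith
  have hsub1 : Set.uIcc a m ⊆ Set.uIcc a (a + c) := by
    rw [Set.uIcc_of_le ham, Set.uIcc_of_le hab]
    exact Set.Icc_subset_Icc le_rfl hmb
  have hsub2 : Set.uIcc m (a + c) ⊆ Set.uIcc a (a + c) := by
    rw [Set.uIcc_of_le hmb, Set.uIcc_of_le hab]
    exact Set.Icc_subset_Icc ham le_rfl
  have huIcc : Set.uIcc a (a + c) = Set.Icc a (a + c) := Set.uIcc_of_le hab
  -- pointwise bound on |f'|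
  have hb' : ∀ x ∈ Set.Icc a (a + c), |f' x| ≤ A + (B - A) * ((x - a) / c) := by
    intro x hx
    have ht : (x - a) / c ∈ Set.Icc (0 : ℝ) 1 := by
      constructor
      · exact div_nonneg (by linarith [hx.1]) hc.le
      · rw [div_le_one hc]; linarith [hx.2]
    have := hbound _ ht
    have hxeq : a + (x - a) / c * c = x := by field_simp; ring
    rw [hxeq] at this
    calc |f' x| ≤ (1 - (x - a) / c) * A + (x - a) / c * B := this
      _ = A + (B - A) * ((x - a) / c) := by ring
  -- continuity and integrability of f
  have hfc : ContinuousOn f (Set.Icc a (a + c)) := fun x hx =>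
    (hf x hx).continuousAt.continuousWithinAt
  have hfint : IntervalIntegrable f volume a (a + c) :=
    (huIcc ▸ hfc).intervalIntegrable
  have hfint1 : IntervalIntegrable f volume a m := hfint.mono_set hsub1
  have hfint2 : IntervalIntegrable f volume m (a + c) := hfint.mono_set hsub2
  have hint1 : IntervalIntegrable f' volume a m := hint.mono_set hsub1
  have hint2 : IntervalIntegrable f' volume m (a + c) := hint.mono_set hsub2
  -- integration by parts on [a, m]
  have ibp1 : ∫ x in a..m, (x - a) * f' x
      = (m - a) * f m - (a - a) * f a - ∫ x in a..m, 1 * f x := by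
    apply intervalIntegral.integral_mul_deriv_eq_deriv_mul
    · exact fun x _ => (hasDerivAt_id x).sub_const a
    · exact fun x hx => hf x (huIcc ▸ hsub1 hx)
    · exact intervalIntegrable_const
    · exact hint1
  have ibp2 : ∫ x in m..(a + c), (x - (a + c)) * f' x
      = ((a + c) - (a + c)) * f (a + c) - (m - (a + c)) * f m
        - ∫ x in m..(a + c), 1 * f x := by
    apply intervalIntegral.integral_mul_deriv_eq_deriv_mul
    · exact fun x _ => (hasDerivAt_id x).sub_const (a + c)
    · exact fun x hx => hf x (huIcc ▸ hsub2 hx)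
    · exact intervalIntegrable_const
    · exact hint2
  have hadd : (∫ x in a..m, f x) + ∫ x in m..(a + c), f x = ∫ x in a..(a + c), f x :=
    intervalIntegral.integral_add_adjacent_intervals hfint1 hfint2
  have key : (∫ x in a..(a + c), f x) - c * f m
      = -((∫ x in a..m, (x - a) * f' x) + ∫ x in m..(a + c), (x - (a + c)) * f' x) := by
    simp only [one_mul] at ibp1 ibp2
    rw [ibp1, ibp2, ← hadd, hmdef]
    ring
  -- bound the first integral
  have hi1int : IntervalIntegrable (fun x => (x - a) * f' x) volume a m :=
    hint1.continuousOn_mul (by fun_prop)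
  have hi2int : IntervalIntegrable (fun x => (x - (a + c)) * f' x) volume m (a + c) :=
    hint2.continuousOn_mul (by fun_prop)
  have hgint1 : IntervalIntegrable (fun x => (x - a) * (A + (B - A) * ((x - a) / c)))
      volume a m := (by fun_prop : Continuous fun x : ℝ => (x - a) * (A + (B - A) * ((x - a) / c))).intervalIntegrable _ _
  have hgint2 : IntervalIntegrable (fun x => ((a + c) - x) * (A + (B - A) * ((x - a) / c)))
      volume m (a + c) := (by fun_prop : Continuous fun x : ℝ => ((a + c) - x) * (A + (B - A) * ((x - a) / c))).intervalIntegrable _ _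
  -- antiderivative computations
  have hval1 : ∫ x in a..m, (x - a) * (A + (B - A) * ((x - a) / c))
      = c ^ 2 * (A / 12 + B / 24) := by
    have hG : ∀ x ∈ Set.uIcc a m, HasDerivAt
        (fun y => A * (y - a) ^ 2 / 2 + (B - A) * (y - a) ^ 3 / (3 * c))
        ((x - a) * (A + (B - A) * ((x - a) / c))) x := by
      intro x _
      have h1 : HasDerivAt (fun y : ℝ => y - a) 1 x := (hasDerivAt_id x).sub_const a
      have h := (((h1.pow 2).const_mul A).div_const 2).add
        (((h1.pow 3).const_mul (B - A)).div_const (3 * c))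
      refine h.congr_deriv ?_
      field_simp
      ring
    rw [intervalIntegral.integral_eq_sub_of_hasDerivAt hG hgint1, hmdef]
    field_simp
    ring
  have hval2 : ∫ x in m..(a + c), ((a + c) - x) * (A + (B - A) * ((x - a) / c))
      = c ^ 2 * (A / 24 + B / 12) := by
    have hG : ∀ x ∈ Set.uIcc m (a + c), HasDerivAt
        (fun y => A * c * (y - a) + (B - 2 * A) * (y - a) ^ 2 / 2
          - (B - A) * (y - a) ^ 3 / (3 * c))
        (((a + c) - x) * (A + (B - A) * ((x - a) / c))) x := by
      intro x _
      have h1 : HasDerivAt (fun y : ℝ => y - a) 1 x := (hasDerivAt_id x).sub_const a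
      have h := ((h1.const_mul (A * c)).add
        (((h1.pow 2).const_mul (B - 2 * A)).div_const 2)).sub
        (((h1.pow 3).const_mul (B - A)).div_const (3 * c))
      refine h.congr_deriv ?_
      field_simp
      ring
    rw [intervalIntegral.integral_eq_sub_of_hasDerivAt hG hgint2, hmdef]
    field_simp
    ring
  -- bound |I1|
  have hb1 : |∫ x in a..m, (x - a) * f' x| ≤ c ^ 2 * (A / 12 + B / 24) := by
    rw [← hval1]
    calc |∫ x in a..m, (x - a) * f' x| ≤ ∫ x in a..m, |(x - a) * f' x| :=
          intervalIntegral.abs_integral_le_integral_abs ham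
      _ ≤ ∫ x in a..m, (x - a) * (A + (B - A) * ((x - a) / c)) := by
          apply intervalIntegral.integral_mono_on ham hi1int.abs hgint1
          intro x hx
          have hx' : x ∈ Set.Icc a (a + c) := Set.Icc_subset_Icc le_rfl hmb hx
          rw [abs_mul, abs_of_nonneg (by linarith [hx.1] : (0:ℝ) ≤ x - a)]
          exact mul_le_mul_of_nonneg_left (hb' x hx') (by linarith [hx.1])
  have hb2 : |∫ x in m..(a + c), (x - (a + c)) * f' x| ≤ c ^ 2 * (A / 24 + B / 12) := by
    rw [← hval2]
    calc |∫ x in m..(a + c), (x - (a + c)) * f' x|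
        ≤ ∫ x in m..(a + c), |(x - (a + c)) * f' x| :=
          intervalIntegral.abs_integral_le_integral_abs hmb
      _ ≤ ∫ x in m..(a + c), ((a + c) - x) * (A + (B - A) * ((x - a) / c)) := by
          apply intervalIntegral.integral_mono_on hmb hi2int.abs hgint2
          intro x hx
          have hx' : x ∈ Set.Icc a (a + c) := Set.Icc_subset_Icc ham le_rfl hx
          rw [abs_mul, abs_of_nonpos (by linarith [hx.2] : x - (a + c) ≤ 0)]
          have : -(x - (a + c)) = (a + c) - x := by ring
          rw [this]
          exact mul_le_mul_of_nonneg_left (hb' x hx') (by linarith [hx.2])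
  -- assemble
  have hmain : |(∫ x in a..(a + c), f x) - c * f m| ≤ c ^ 2 * ((A + B) / 8) := by
    rw [key, abs_neg]
    calc |(∫ x in a..m, (x - a) * f' x) + ∫ x in m..(a + c), (x - (a + c)) * f' x|
        ≤ |∫ x in a..m, (x - a) * f' x| + |∫ x in m..(a + c), (x - (a + c)) * f' x| :=
          abs_add_le _ _
      _ ≤ c ^ 2 * (A / 12 + B / 24) + c ^ 2 * (A / 24 + B / 12) := add_le_add hb1 hb2
      _ = c ^ 2 * ((A + B) / 8) := by ring
  have heq : (1 / c) * (∫ x in a..(a + c), f x) - f m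
      = (1 / c) * ((∫ x in a..(a + c), f x) - c * f m) := by
    field_simp
  rw [heq, abs_mul, abs_of_nonneg (by positivity : (0:ℝ) ≤ 1 / c)]
  calc (1 / c) * |(∫ x in a..(a + c), f x) - c * f m|
      ≤ (1 / c) * (c ^ 2 * ((A + B) / 8)) := by
        exact mul_le_mul_of_nonneg_left hmain (by positivity)
    _ = (c / 8) * (A + B) := by field_simp
end

section
/- Let c > 0, p > 1, f differentiable on an open interval containing [a, a+c] with integrable derivative, and suppose A, B ≥ 0 satisfy |f'(a+tc)|^{p/(p-1)} ≤ (1-t)·A^{p/(p-1)} + t·B^{p/(p-1)} for all t ∈ [0,1]. Then |(1/c) ∫_a^{a+c} f(x) dx − f(a + c/2)| ≤ (c/16)·(4/(p+1))^{1/p}·[(3A^{p/(p-1)} + B^{p/(p-1)})^{(p-1)/p} + (A^{p/(p-1)} + 3B^{p/(p-1)})^{(p-1)/p}]. -/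
open MeasureTheory intervalIntegral

/-- Hölder's inequality for interval integrals with a nonnegative continuous weight
and a bounded integrable function. -/
lemma holder_half_aux {p q : ℝ} (hpq : Real.HolderConjugate p q) {u v : ℝ} (huv : u ≤ v)
    {w g : ℝ → ℝ} (hw : ContinuousOn w (Set.Icc u v)) (hw0 : ∀ x ∈ Set.Icc u v, 0 ≤ w x)
    {C : ℝ} (hwC : ∀ x ∈ Set.Icc u v, w x ≤ C)
    (hg : IntervalIntegrable g volume u v) {M : ℝ}
    (hM : ∀ x ∈ Set.Icc u v, |g x| ≤ M) :
    ∫ x in u..v, w x * |g x| ≤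
      (∫ x in u..v, w x ^ p) ^ (1/p) * (∫ x in u..v, |g x| ^ q) ^ (1/q) := by
  haveI : IsFiniteMeasure (volume.restrict (Set.Ioc u v)) :=
    ⟨by rw [Measure.restrict_apply_univ]; exact measure_Ioc_lt_top⟩
  have hIoc : Set.Ioc u v ⊆ Set.Icc u v := Set.Ioc_subset_Icc_self
  have hgm : AEStronglyMeasurable g (volume.restrict (Set.Ioc u v)) := by
    have h := intervalIntegrable_iff.mp hg
    rw [Set.uIoc_of_le huv] at h
    exact h.aestronglyMeasurable
  have hwm : AEStronglyMeasurable w (volume.restrict (Set.Ioc u v)) :=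
    (hw.mono hIoc).aestronglyMeasurable measurableSet_Ioc
  have hwf : MemLp w (ENNReal.ofReal p) (volume.restrict (Set.Ioc u v)) := by
    refine MemLp.of_bound hwm C ?_
    refine (ae_restrict_iff' measurableSet_Ioc).mpr (Filter.Eventually.of_forall fun x hx => ?_)
    rw [Real.norm_eq_abs, abs_of_nonneg (hw0 x (hIoc hx))]
    exact hwC x (hIoc hx)
  have hgf : MemLp (fun x => |g x|) (ENNReal.ofReal q) (volume.restrict (Set.Ioc u v)) := by
    refine MemLp.of_bound hgm.norm M ?_
    refine (ae_restrict_iff' measurableSet_Ioc).mpr (Filter.Eventually.of_forall fun x hx => ?_)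
    rw [Real.norm_eq_abs, abs_abs]
    exact hM x (hIoc hx)
  rw [integral_of_le huv, integral_of_le huv, integral_of_le huv]
  refine integral_mul_le_Lp_mul_Lq_of_nonneg hpq ?_
    (Filter.Eventually.of_forall fun x => abs_nonneg _) hwf ?_
  · exact (ae_restrict_iff' measurableSet_Ioc).mpr
      (Filter.Eventually.of_forall fun x hx => hw0 x (hIoc hx))
  · simpa [Real.norm_eq_abs] using hgf

/-- The constant computation. -/
lemma holder_const_aux {c p : ℝ} (hc : 0 < c) (hp : 1 < p) :
    ((c/2) ^ (p+1) / (p+1)) ^ (1/p) * (c/8) ^ ((p-1)/p)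
      = c^2/16 * (4/(p+1)) ^ (1/p) := by
  have hp0 : (0:ℝ) < p := by linarith
  have h2 : (0:ℝ) < c/2 := by linarith
  have h8 : (0:ℝ) < c/8 := by linarith
  have hp1 : (0:ℝ) < p + 1 := by linarith
  have hL : (0:ℝ) ≤ ((c/2) ^ (p+1) / (p+1)) ^ (1/p) * (c/8) ^ ((p-1)/p) := by positivity
  have hR : (0:ℝ) ≤ c^2/16 * (4/(p+1)) ^ (1/p) := by positivity
  refine Real.rpow_left_injOn (ne_of_gt hp0) hL hR ?_
  show (((c/2) ^ (p+1) / (p+1)) ^ (1/p) * (c/8) ^ ((p-1)/p)) ^ p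
      = (c^2/16 * (4/(p+1)) ^ (1/p)) ^ p
  rw [Real.mul_rpow (by positivity) (by positivity),
      Real.mul_rpow (by positivity) (by positivity),
      one_div, Real.rpow_inv_rpow (by positivity) (ne_of_gt hp0),
      Real.rpow_inv_rpow (by positivity) (ne_of_gt hp0),
      ← Real.rpow_mul h8.le, div_mul_cancel₀ _ (ne_of_gt hp0),
      Real.rpow_add h2, Real.rpow_one, Real.rpow_sub h8, Real.rpow_one]
  have hkey : (c/2) ^ p * (c/8) ^ p = (c^2/16) ^ p := by
    rw [← Real.mul_rpow h2.le h8.le, show c/2*(c/8) = c^2/16 by ring]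
  rw [← hkey]
  field_simp
  ring

theorem phi_convex_midpoint_holder (a c A B p : ℝ) (hc : 0 < c) (hp : 1 < p)
    (hA : 0 ≤ A) (hB : 0 ≤ B) (f f' : ℝ → ℝ)
    (hf : ∀ x ∈ Set.Icc a (a + c), HasDerivAt f (f' x) x)
    (hint : IntervalIntegrable f' volume a (a + c))
    (hbound : ∀ t ∈ Set.Icc (0:ℝ) 1,
      |f' (a + t * c)| ^ (p / (p - 1)) ≤ (1 - t) * A ^ (p / (p - 1)) + t * B ^ (p / (p - 1))) :
    |(1 / c) * (∫ x in a..(a + c), f x) - f (a + c / 2)| ≤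
      (c / 16) * (4 / (p + 1)) ^ (1 / p) *
        ((3 * A ^ (p / (p - 1)) + B ^ (p / (p - 1))) ^ ((p - 1) / p) +
          (A ^ (p / (p - 1)) + 3 * B ^ (p / (p - 1))) ^ ((p - 1) / p)) := by
  have hp0 : (0:ℝ) < p := by linarith
  have hp1 : (0:ℝ) < p - 1 := by linarith
  set q : ℝ := p / (p - 1) with hqdef
  have hpq : p.HolderConjugate q := Real.HolderConjugate.conjExponent hp
  have hq1 : 1 < q := hpq.symm.lt
  have hq0 : (0:ℝ) < q := by linarith
  have hq_inv : 1 / q = (p-1)/p := by rw [hqdef, one_div_div]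
  set b : ℝ := a + c with hb
  set m : ℝ := a + c / 2 with hm
  have hab : a ≤ b := by rw [hb]; linarith
  have ham : a ≤ m := by rw [hm]; linarith
  have hmb : m ≤ b := by rw [hm, hb]; linarith
  -- pointwise bound in x-form
  have hbx : ∀ x ∈ Set.Icc a b, |f' x| ^ q ≤ (1 - (x - a)/c) * A ^ q + ((x - a)/c) * B ^ q := by
    intro x hx
    have ht : (x - a)/c ∈ Set.Icc (0:ℝ) 1 := by
      constructor
      · exact div_nonneg (by linarith [hx.1]) hc.le
      · rw [div_le_one hc]
        have := hx.2
        rw [hb] at this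
        linarith
    have h := hbound _ ht
    rwa [show a + (x - a)/c * c = x by field_simp; ring] at h
  set M : ℝ := max A B with hM
  have hM0 : 0 ≤ M := le_trans hA (le_max_left A B)
  have hMx : ∀ x ∈ Set.Icc a b, |f' x| ≤ M := by
    intro x hx
    by_contra hcon
    push_neg at hcon
    have h1 : M ^ q < |f' x| ^ q := Real.rpow_lt_rpow hM0 hcon hq0
    have h2 : |f' x| ^ q ≤ (1 - (x - a)/c) * A ^ q + ((x - a)/c) * B ^ q := hbx x hx
    have hAq : A ^ q ≤ M ^ q := Real.rpow_le_rpow hA (le_max_left A B) hq0.le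
    have hBq : B ^ q ≤ M ^ q := Real.rpow_le_rpow hB (le_max_right A B) hq0.le
    have ht0 : 0 ≤ (x - a)/c := div_nonneg (by linarith [hx.1]) hc.le
    have ht1 : (x - a)/c ≤ 1 := by
      rw [div_le_one hc]
      have := hx.2
      rw [hb] at this
      linarith
    nlinarith
  -- integrability of f and f'
  have hfc : ContinuousOn f (Set.Icc a b) := fun x hx => (hf x hx).continuousAt.continuousWithinAt
  have hfim : IntervalIntegrable f volume a m := by
    apply ContinuousOn.intervalIntegrable
    rw [Set.uIcc_of_le ham]
    exact hfc.mono (Set.Icc_subset_Icc le_rfl hmb)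
  have hfmb : IntervalIntegrable f volume m b := by
    apply ContinuousOn.intervalIntegrable
    rw [Set.uIcc_of_le hmb]
    exact hfc.mono (Set.Icc_subset_Icc ham le_rfl)
  have hf'am : IntervalIntegrable f' volume a m :=
    hint.mono_set (by rw [Set.uIcc_of_le ham, Set.uIcc_of_le hab]
                      exact Set.Icc_subset_Icc le_rfl hmb)
  have hf'mb : IntervalIntegrable f' volume m b :=
    hint.mono_set (by rw [Set.uIcc_of_le hmb, Set.uIcc_of_le hab]
                      exact Set.Icc_subset_Icc ham le_rfl)
  -- integrability of |f'|^q
  have hq_int : ∀ u v : ℝ, a ≤ u → u ≤ v → v ≤ b →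
      IntervalIntegrable (fun x => |f' x| ^ q) volume u v := by
    intro u v hau huv hvb
    haveI : IsFiniteMeasure (volume.restrict (Set.Ioc u v)) :=
      ⟨by rw [Measure.restrict_apply_univ]; exact measure_Ioc_lt_top⟩
    rw [intervalIntegrable_iff, Set.uIoc_of_le huv]
    have hmeas : AEStronglyMeasurable f' (volume.restrict (Set.Ioc u v)) := by
      have h := intervalIntegrable_iff.mp
        (hint.mono_set (by rw [Set.uIcc_of_le huv, Set.uIcc_of_le hab]
                           exact Set.Icc_subset_Icc hau hvb))
      rw [Set.uIoc_of_le huv] at h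
      exact h.aestronglyMeasurable
    refine Integrable.mono' (integrable_const (M ^ q)) ?_ ?_
    · exact ((Real.continuous_rpow_const hq0.le).comp continuous_abs).comp_aestronglyMeasurable
        hmeas
    · refine (ae_restrict_iff' measurableSet_Ioc).mpr
        (Filter.Eventually.of_forall fun x hx => ?_)
      rw [Real.norm_eq_abs, abs_of_nonneg (Real.rpow_nonneg (abs_nonneg _) _)]
      refine Real.rpow_le_rpow (abs_nonneg _) (hMx x ?_) hq0.le
      exact ⟨by linarith [hx.1.le], by linarith [hx.2]⟩
  -- affine integral helper
  have haff : ∀ (u v α β : ℝ), (∫ x in u..v, (α + β * x)) = α*(v-u) + β*(v^2-u^2)/2 := by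
    intro u v α β
    rw [intervalIntegral.integral_add intervalIntegrable_const
        (intervalIntegrable_id.const_mul β), intervalIntegral.integral_const,
        intervalIntegral.integral_const_mul, integral_id]
    simp [smul_eq_mul]
    ring
  -- integration by parts on each half
  have ibp1 : (∫ x in a..m, (x - a) * f' x)
      = (m - a) * f m - (a - a) * f a - ∫ x in a..m, 1 * f x := by
    apply intervalIntegral.integral_mul_deriv_eq_deriv_mul
      (u := fun x => x - a) (u' := fun _ => 1) (v := f) (v' := f')
    · intro x hx
      simpa using (hasDerivAt_id x).sub_const a
    · intro x hx
      apply hf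
      rw [Set.uIcc_of_le ham] at hx
      exact Set.Icc_subset_Icc le_rfl hmb hx
    · exact intervalIntegrable_const
    · exact hf'am
  have ibp2 : (∫ x in m..b, (x - b) * f' x)
      = (b - b) * f b - (m - b) * f m - ∫ x in m..b, 1 * f x := by
    apply intervalIntegral.integral_mul_deriv_eq_deriv_mul
      (u := fun x => x - b) (u' := fun _ => 1) (v := f) (v' := f')
    · intro x hx
      simpa using (hasDerivAt_id x).sub_const b
    · intro x hx
      apply hf
      rw [Set.uIcc_of_le hmb] at hx
      exact Set.Icc_subset_Icc ham le_rfl hx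
    · exact intervalIntegrable_const
    · exact hf'mb
  have hsplit : (∫ x in a..m, f x) + ∫ x in m..b, f x = ∫ x in a..b, f x :=
    intervalIntegral.integral_add_adjacent_intervals hfim hfmb
  have key : (1/c) * (∫ x in a..b, f x) - f m
      = -(1/c) * ((∫ x in a..m, (x - a) * f' x) + ∫ x in m..b, (x - b) * f' x) := by
    rw [ibp1, ibp2, ← hsplit]
    simp only [one_mul]
    rw [hm, hb]
    field_simp
    ring
  have habs : |(1/c) * (∫ x in a..b, f x) - f m|
      ≤ (1/c) * (|∫ x in a..m, (x - a) * f' x| + |∫ x in m..b, (x - b) * f' x|) := by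
    rw [key, abs_mul, abs_neg, abs_of_nonneg (by positivity : (0:ℝ) ≤ 1/c)]
    have := abs_add_le (∫ x in a..m, (x - a) * f' x) (∫ x in m..b, (x - b) * f' x)
    have h1c : (0:ℝ) ≤ 1/c := by positivity
    exact mul_le_mul_of_nonneg_left this h1c
  -- first half estimate
  have hint_nonneg1 : (0:ℝ) ≤ ∫ x in a..m, |f' x| ^ q :=
    intervalIntegral.integral_nonneg ham (fun x _ => Real.rpow_nonneg (abs_nonneg _) _)
  have hint_nonneg2 : (0:ℝ) ≤ ∫ x in m..b, |f' x| ^ q :=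
    intervalIntegral.integral_nonneg hmb (fun x _ => Real.rpow_nonneg (abs_nonneg _) _)
  have hK1 : |∫ x in a..m, (x - a) * f' x|
      ≤ (c^2/16) * (4/(p+1)) ^ (1/p) * (3 * A ^ q + B ^ q) ^ ((p-1)/p) := by
    have h1 : |∫ x in a..m, (x - a) * f' x| ≤ ∫ x in a..m, (x - a) * |f' x| := by
      refine (intervalIntegral.abs_integral_le_integral_abs ham).trans_eq ?_
      apply intervalIntegral.integral_congr
      intro x hx
      rw [Set.uIcc_of_le ham] at hx
      simp only [abs_mul, abs_of_nonneg (by linarith [hx.1] : (0:ℝ) ≤ x - a)]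
    have h2 : (∫ x in a..m, (x - a) * |f' x|)
        ≤ (∫ x in a..m, (x - a) ^ p) ^ (1/p) * (∫ x in a..m, |f' x| ^ q) ^ (1/q) := by
      refine holder_half_aux hpq ham (w := fun x => x - a)
        ((continuous_id.sub continuous_const).continuousOn)
        (fun x hx => sub_nonneg.mpr hx.1) (C := c/2)
        (fun x hx => by
          have := hx.2; rw [hm] at this; linarith) hf'am (M := M)
        (fun x hx => hMx x ⟨hx.1, le_trans hx.2 hmb⟩)
    have h3 : (∫ x in a..m, (x - a) ^ p) = (c/2) ^ (p+1) / (p+1) := by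
      rw [intervalIntegral.integral_comp_sub_right (fun x => x ^ p) a, sub_self,
          show m - a = c/2 by rw [hm]; ring,
          integral_rpow (Or.inl (by linarith : (-1:ℝ) < p)),
          Real.zero_rpow (by linarith : p + 1 ≠ 0)]
      ring
    have h4 : (∫ x in a..m, |f' x| ^ q) ≤ c * (3 * A ^ q + B ^ q) / 8 := by
      have hb4 : (∫ x in a..m, ((1 - (x - a)/c) * A ^ q + ((x - a)/c) * B ^ q))
          = c * (3 * A ^ q + B ^ q) / 8 := by
        have hfe : (fun x => (1 - (x - a)/c) * A ^ q + ((x - a)/c) * B ^ q)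
            = fun x => (A ^ q - a * ((B ^ q - A ^ q)/c)) + ((B ^ q - A ^ q)/c) * x := by
          funext x; field_simp; ring
        rw [hfe, haff, hm]
        field_simp
        ring
      rw [← hb4]
      refine intervalIntegral.integral_mono_on ham (hq_int a m le_rfl ham hmb)
        (by apply Continuous.intervalIntegrable; fun_prop) ?_
      intro x hx
      exact hbx x ⟨hx.1, le_trans hx.2 hmb⟩
    have h5 : (∫ x in a..m, |f' x| ^ q) ^ (1/q) ≤ (c * (3 * A ^ q + B ^ q) / 8) ^ (1/q) :=
      Real.rpow_le_rpow hint_nonneg1 h4 (by positivity)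
    calc |∫ x in a..m, (x - a) * f' x|
        ≤ ∫ x in a..m, (x - a) * |f' x| := h1
      _ ≤ (∫ x in a..m, (x - a) ^ p) ^ (1/p) * (∫ x in a..m, |f' x| ^ q) ^ (1/q) := h2
      _ ≤ ((c/2) ^ (p+1) / (p+1)) ^ (1/p) * (c * (3 * A ^ q + B ^ q) / 8) ^ (1/q) := by
          rw [h3]
          exact mul_le_mul_of_nonneg_left h5 (by positivity)
      _ = (c^2/16) * (4/(p+1)) ^ (1/p) * (3 * A ^ q + B ^ q) ^ ((p-1)/p) := by
          rw [show c * (3 * A ^ q + B ^ q) / 8 = (c/8) * (3 * A ^ q + B ^ q) by ring,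
              Real.mul_rpow (by positivity) (by positivity), hq_inv, ← mul_assoc,
              holder_const_aux hc hp]
  -- second half estimate
  have hK2 : |∫ x in m..b, (x - b) * f' x|
      ≤ (c^2/16) * (4/(p+1)) ^ (1/p) * (A ^ q + 3 * B ^ q) ^ ((p-1)/p) := by
    have h1 : |∫ x in m..b, (x - b) * f' x| ≤ ∫ x in m..b, (b - x) * |f' x| := by
      refine (intervalIntegral.abs_integral_le_integral_abs hmb).trans_eq ?_
      apply intervalIntegral.integral_congr
      intro x hx
      rw [Set.uIcc_of_le hmb] at hx
      show |(x - b) * f' x| = (b - x) * |f' x|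
      rw [abs_mul, abs_sub_comm, abs_of_nonneg (by linarith [hx.2] : (0:ℝ) ≤ b - x)]
    have h2 : (∫ x in m..b, (b - x) * |f' x|)
        ≤ (∫ x in m..b, (b - x) ^ p) ^ (1/p) * (∫ x in m..b, |f' x| ^ q) ^ (1/q) := by
      refine holder_half_aux hpq hmb (w := fun x => b - x)
        ((continuous_const.sub continuous_id).continuousOn)
        (fun x hx => sub_nonneg.mpr hx.2) (C := c/2)
        (fun x hx => by
          have := hx.1; rw [hm] at this; rw [hb]; linarith) hf'mb (M := M)
        (fun x hx => hMx x ⟨le_trans ham hx.1, hx.2⟩)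
    have h3 : (∫ x in m..b, (b - x) ^ p) = (c/2) ^ (p+1) / (p+1) := by
      rw [intervalIntegral.integral_comp_sub_left (fun x => x ^ p) b, sub_self,
          show b - m = c/2 by rw [hm, hb]; ring,
          integral_rpow (Or.inl (by linarith : (-1:ℝ) < p)),
          Real.zero_rpow (by linarith : p + 1 ≠ 0)]
      ring
    have h4 : (∫ x in m..b, |f' x| ^ q) ≤ c * (A ^ q + 3 * B ^ q) / 8 := by
      have hb4 : (∫ x in m..b, ((1 - (x - a)/c) * A ^ q + ((x - a)/c) * B ^ q))
          = c * (A ^ q + 3 * B ^ q) / 8 := by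
        have hfe : (fun x => (1 - (x - a)/c) * A ^ q + ((x - a)/c) * B ^ q)
            = fun x => (A ^ q - a * ((B ^ q - A ^ q)/c)) + ((B ^ q - A ^ q)/c) * x := by
          funext x; field_simp; ring
        rw [hfe, haff, hm, hb]
        field_simp
        ring
      rw [← hb4]
      refine intervalIntegral.integral_mono_on hmb (hq_int m b ham hmb le_rfl)
        (by apply Continuous.intervalIntegrable; fun_prop) ?_
      intro x hx
      exact hbx x ⟨le_trans ham hx.1, hx.2⟩
    have h5 : (∫ x in m..b, |f' x| ^ q) ^ (1/q) ≤ (c * (A ^ q + 3 * B ^ q) / 8) ^ (1/q) :=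
      Real.rpow_le_rpow hint_nonneg2 h4 (by positivity)
    calc |∫ x in m..b, (x - b) * f' x|
        ≤ ∫ x in m..b, (b - x) * |f' x| := h1
      _ ≤ (∫ x in m..b, (b - x) ^ p) ^ (1/p) * (∫ x in m..b, |f' x| ^ q) ^ (1/q) := h2
      _ ≤ ((c/2) ^ (p+1) / (p+1)) ^ (1/p) * (c * (A ^ q + 3 * B ^ q) / 8) ^ (1/q) := by
          rw [h3]
          exact mul_le_mul_of_nonneg_left h5 (by positivity)
      _ = (c^2/16) * (4/(p+1)) ^ (1/p) * (A ^ q + 3 * B ^ q) ^ ((p-1)/p) := by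
          rw [show c * (A ^ q + 3 * B ^ q) / 8 = (c/8) * (A ^ q + 3 * B ^ q) by ring,
              Real.mul_rpow (by positivity) (by positivity), hq_inv, ← mul_assoc,
              holder_const_aux hc hp]
  -- final assembly
  have hfinal : (1/c) * (|∫ x in a..m, (x - a) * f' x| + |∫ x in m..b, (x - b) * f' x|)
      ≤ (c / 16) * (4/(p+1)) ^ (1/p) *
        ((3 * A ^ q + B ^ q) ^ ((p-1)/p) + (A ^ q + 3 * B ^ q) ^ ((p-1)/p)) := by
    have hsum := add_le_add hK1 hK2
    have h1c : (0:ℝ) ≤ 1/c := by positivity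
    calc (1/c) * (|∫ x in a..m, (x - a) * f' x| + |∫ x in m..b, (x - b) * f' x|)
        ≤ (1/c) * ((c^2/16) * (4/(p+1)) ^ (1/p) * (3 * A ^ q + B ^ q) ^ ((p-1)/p)
            + (c^2/16) * (4/(p+1)) ^ (1/p) * (A ^ q + 3 * B ^ q) ^ ((p-1)/p)) :=
          mul_le_mul_of_nonneg_left hsum h1c
      _ = (c / 16) * (4/(p+1)) ^ (1/p) *
          ((3 * A ^ q + B ^ q) ^ ((p-1)/p) + (A ^ q + 3 * B ^ q) ^ ((p-1)/p)) := by
          field_simp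
  exact habs.trans hfinal
end

section
/- Let c > 0, q ≥ 1, f differentiable on an open interval containing [a, a+c] with integrable derivative, and suppose A, B ≥ 0 satisfy |f'(a+tc)|^q ≤ (1-t)·A^q + t·B^q for all t ∈ [0,1]. Then |(1/c) ∫_a^{a+c} f(x) dx − f(a + c/2)| ≤ (c/8)·[((2A^q + B^q)/3)^{1/q} + ((A^q + 2B^q)/3)^{1/q}]. -/
open MeasureTheory intervalIntegral

lemma quad_int (k₀ k₁ k₂ u v : ℝ) :
    ∫ x in u..v, (k₀ + k₁ * x + k₂ * x ^ 2) =
      k₀ * (v - u) + k₁ * (v ^ 2 - u ^ 2) / 2 + k₂ * (v ^ 3 - u ^ 3) / 3 := by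
  have h1 : IntervalIntegrable (fun x : ℝ => k₀ + k₁ * x) volume u v :=
    (by fun_prop : Continuous fun x : ℝ => k₀ + k₁ * x).intervalIntegrable u v
  have h2 : IntervalIntegrable (fun x : ℝ => k₂ * x ^ 2) volume u v :=
    (by fun_prop : Continuous fun x : ℝ => k₂ * x ^ 2).intervalIntegrable u v
  have h0 : IntervalIntegrable (fun _ : ℝ => k₀) volume u v := intervalIntegrable_const
  have h1' : IntervalIntegrable (fun x : ℝ => k₁ * x) volume u v :=
    (by fun_prop : Continuous fun x : ℝ => k₁ * x).intervalIntegrable u v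
  rw [intervalIntegral.integral_add h1 h2, intervalIntegral.integral_add h0 h1',
    intervalIntegral.integral_const, intervalIntegral.integral_const_mul,
    intervalIntegral.integral_const_mul, integral_id, integral_pow]
  push_cast [smul_eq_mul]
  ring

lemma tangent_le {q u u₀ : ℝ} (hq : 1 ≤ q) (hu : 0 ≤ u) (hu₀ : 0 < u₀) :
    u ^ (1 / q) ≤ (1 - 1 / q) * u₀ ^ (1 / q) + (1 / q) * (u * u₀ ^ (1 / q - 1)) := by
  have hq0 : 0 < q := lt_of_lt_of_le one_pos hq
  have hp0 : 0 < 1 / q := by positivity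
  have hp1 : 1 / q ≤ 1 := by rw [div_le_one hq0]; exact hq
  have key : u₀ ^ (1 - 1 / q) * u ^ (1 / q) ≤ (1 - 1 / q) * u₀ + (1 / q) * u :=
    Real.geom_mean_le_arith_mean2_weighted (by linarith) hp0.le hu₀.le hu (by ring)
  have hmul := mul_le_mul_of_nonneg_right key (Real.rpow_pos_of_pos hu₀ (1 / q - 1)).le
  calc u ^ (1 / q) = u₀ ^ (1 - 1 / q) * u ^ (1 / q) * u₀ ^ (1 / q - 1) := by
        rw [mul_comm (u₀ ^ (1 - 1 / q)), mul_assoc, ← Real.rpow_add hu₀,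
          show (1 - 1 / q) + (1 / q - 1) = 0 by ring, Real.rpow_zero, mul_one]
    _ ≤ ((1 - 1 / q) * u₀ + (1 / q) * u) * u₀ ^ (1 / q - 1) := hmul
    _ = (1 - 1 / q) * u₀ ^ (1 / q) + (1 / q) * (u * u₀ ^ (1 / q - 1)) := by
        rw [Real.rpow_sub_one hu₀.ne']
        field_simp

lemma weighted_holder (q u₀ l r : ℝ) (hq : 1 ≤ q) (hlr : l ≤ r) (hu₀ : 0 < u₀)
    (w h φ : ℝ → ℝ) (hw : Continuous w) (hh : Continuous h)
    (hwpos : ∀ x ∈ Set.Icc l r, 0 ≤ w x)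
    (hφ : IntervalIntegrable φ volume l r)
    (hφh : ∀ x ∈ Set.Icc l r, |φ x| ^ q ≤ h x)
    (hWh : ∫ x in l..r, w x * h x = (∫ x in l..r, w x) * u₀) :
    ∫ x in l..r, w x * |φ x| ≤ (∫ x in l..r, w x) * u₀ ^ (1 / q) := by
  have hq0 : 0 < q := lt_of_lt_of_le one_pos hq
  have hqne : q ≠ 0 := hq0.ne'
  set p := 1 / q with hp
  set V := u₀ ^ p with hV
  set U := u₀ ^ (p - 1) with hU
  have hmono : ∀ x ∈ Set.Icc l r, w x * |φ x| ≤ w x * ((1 - p) * V + p * (h x * U)) := by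
    intro x hx
    apply mul_le_mul_of_nonneg_left _ (hwpos x hx)
    have h1 : |φ x| = (|φ x| ^ q) ^ p := by
      rw [hp, one_div, Real.rpow_rpow_inv (abs_nonneg _) hqne]
    have h2 : (|φ x| ^ q) ^ p ≤ (h x) ^ p :=
      Real.rpow_le_rpow (Real.rpow_nonneg (abs_nonneg _) _) (hφh x hx) (by positivity)
    have h3 : (h x) ^ p ≤ (1 - p) * V + p * (h x * U) :=
      tangent_le hq (le_trans (Real.rpow_nonneg (abs_nonneg _) _) (hφh x hx)) hu₀
    calc |φ x| = (|φ x| ^ q) ^ p := h1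
      _ ≤ (h x) ^ p := h2
      _ ≤ _ := h3
  have hint1 : IntervalIntegrable (fun x => w x * |φ x|) volume l r :=
    hφ.abs.continuousOn_mul hw.continuousOn
  have hint2 : IntervalIntegrable (fun x => w x * ((1 - p) * V + p * (h x * U))) volume l r :=
    ((hw.mul (by fun_prop) : Continuous _)).intervalIntegrable l r
  have hle := intervalIntegral.integral_mono_on hlr hint1 hint2 hmono
  have hWint : IntervalIntegrable w volume l r := hw.intervalIntegrable l r
  have hWhint : IntervalIntegrable (fun x => w x * h x) volume l r :=
    (hw.mul hh).intervalIntegrable l r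
  have hexp : (∫ x in l..r, w x * ((1 - p) * V + p * (h x * U))) =
      (1 - p) * V * (∫ x in l..r, w x) + p * U * (∫ x in l..r, w x * h x) := by
    have heq : (fun x => w x * ((1 - p) * V + p * (h x * U))) =
        fun x => ((1 - p) * V) * w x + (p * U) * (w x * h x) := by
      funext x; ring
    rw [heq, intervalIntegral.integral_add (hWint.const_mul _) (hWhint.const_mul _),
      intervalIntegral.integral_const_mul, intervalIntegral.integral_const_mul]
  rw [hexp, hWh] at hle
  have hUV : U * u₀ = V := by
    rw [hU, hV, Real.rpow_sub_one hu₀.ne']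
    field_simp
  calc ∫ x in l..r, w x * |φ x|
      ≤ (1 - p) * V * (∫ x in l..r, w x) + p * U * ((∫ x in l..r, w x) * u₀) := hle
    _ = (∫ x in l..r, w x) * V := by linear_combination ((∫ x in l..r, w x) * p) * hUV

theorem phi_convex_midpoint_power_mean (a c A B q : ℝ) (hc : 0 < c) (hq : 1 ≤ q)
    (hA : 0 ≤ A) (hB : 0 ≤ B) (f f' : ℝ → ℝ)
    (hf : ∀ x ∈ Set.Icc a (a + c), HasDerivAt f (f' x) x)
    (hint : IntervalIntegrable f' volume a (a + c))
    (hbound : ∀ t ∈ Set.Icc (0:ℝ) 1,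
      |f' (a + t * c)| ^ q ≤ (1 - t) * A ^ q + t * B ^ q) :
    |(1 / c) * (∫ x in a..(a + c), f x) - f (a + c / 2)| ≤
      (c / 8) * (((2 * A ^ q + B ^ q) / 3) ^ (1 / q) +
        ((A ^ q + 2 * B ^ q) / 3) ^ (1 / q)) := by
  have hq0 : 0 < q := lt_of_lt_of_le one_pos hq
  have hqne : q ≠ 0 := hq0.ne'
  have ham : a ≤ a + c / 2 := by linarith
  have hmac : a + c / 2 ≤ a + c := by linarith
  have haac : a ≤ a + c := by linarith
  set m := a + c / 2 with hm
  have hsub1 : Set.uIcc a m ⊆ Set.Icc a (a + c) := by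
    rw [Set.uIcc_of_le ham]; exact Set.Icc_subset_Icc le_rfl hmac
  have hsub2 : Set.uIcc m (a + c) ⊆ Set.Icc a (a + c) := by
    rw [Set.uIcc_of_le hmac]; exact Set.Icc_subset_Icc ham le_rfl
  have hfc : ContinuousOn f (Set.Icc a (a + c)) :=
    fun x hx => (hf x hx).continuousAt.continuousWithinAt
  have hfint1 : IntervalIntegrable f volume a m :=
    (hfc.mono hsub1).intervalIntegrable
  have hfint2 : IntervalIntegrable f volume m (a + c) :=
    (hfc.mono hsub2).intervalIntegrable
  have hfi1 : IntervalIntegrable f' volume a m :=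
    hint.mono_set (by rw [Set.uIcc_of_le haac]; exact hsub1)
  have hfi2 : IntervalIntegrable f' volume m (a + c) :=
    hint.mono_set (by rw [Set.uIcc_of_le haac]; exact hsub2)
  -- integration by parts on both halves
  have hu1 : ∀ x ∈ Set.uIcc a m, HasDerivAt (fun y => y - a) ((fun _ : ℝ => (1:ℝ)) x) x :=
    fun x _ => (hasDerivAt_id x).sub_const a
  have hv1 : ∀ x ∈ Set.uIcc a m, HasDerivAt f (f' x) x := fun x hx => hf x (hsub1 hx)
  have ibp1 : (∫ x in a..m, (x - a) * f' x) = c / 2 * f m - ∫ x in a..m, f x := by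
    have h := intervalIntegral.integral_mul_deriv_eq_deriv_mul hu1 hv1
      intervalIntegrable_const hfi1
    simp only [one_mul] at h
    rw [h, hm]
    ring
  have hu2 : ∀ x ∈ Set.uIcc m (a + c),
      HasDerivAt (fun y => y - (a + c)) ((fun _ : ℝ => (1:ℝ)) x) x :=
    fun x _ => (hasDerivAt_id x).sub_const (a + c)
  have hv2 : ∀ x ∈ Set.uIcc m (a + c), HasDerivAt f (f' x) x := fun x hx => hf x (hsub2 hx)
  have ibp2 : (∫ x in m..(a + c), (x - (a + c)) * f' x) =
      c / 2 * f m - ∫ x in m..(a + c), f x := by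
    have h := intervalIntegral.integral_mul_deriv_eq_deriv_mul hu2 hv2
      intervalIntegrable_const hfi2
    simp only [one_mul] at h
    rw [h, hm]
    ring
  have hsplit : (∫ x in a..(a + c), f x) = (∫ x in a..m, f x) + ∫ x in m..(a + c), f x :=
    (intervalIntegral.integral_add_adjacent_intervals hfint1 hfint2).symm
  have hiden : (1 / c) * (∫ x in a..(a + c), f x) - f m =
      -(1 / c) * ((∫ x in a..m, (x - a) * f' x) +
        ∫ x in m..(a + c), (x - (a + c)) * f' x) := by
    rw [hsplit, ibp1, ibp2]
    field_simp
    ring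
  have habs : |(1 / c) * (∫ x in a..(a + c), f x) - f m| ≤
      (1 / c) * (|∫ x in a..m, (x - a) * f' x| +
        |∫ x in m..(a + c), (x - (a + c)) * f' x|) := by
    rw [hiden, abs_mul, abs_neg, abs_of_pos (by positivity : (0:ℝ) < 1 / c)]
    gcongr
    exact abs_add_le _ _
  -- pointwise bound in terms of an affine function h
  have hPnn : 0 ≤ A ^ q := Real.rpow_nonneg hA q
  have hQnn : 0 ≤ B ^ q := Real.rpow_nonneg hB q
  have hφh : ∀ x ∈ Set.Icc a (a + c), |f' x| ^ q ≤ A ^ q + (B ^ q - A ^ q) / c * (x - a) := by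
    intro x hx
    have ht : (x - a) / c ∈ Set.Icc (0:ℝ) 1 :=
      ⟨div_nonneg (by linarith [hx.1]) hc.le, by rw [div_le_one hc]; linarith [hx.2]⟩
    have hb := hbound _ ht
    rw [show a + (x - a) / c * c = x by field_simp; ring] at hb
    have heq : (1 - (x - a) / c) * A ^ q + (x - a) / c * B ^ q =
        A ^ q + (B ^ q - A ^ q) / c * (x - a) := by
      field_simp; ring
    linarith [hb, heq.le]
  -- abs of integrands
  have hcong1 : (∫ x in a..m, |(x - a) * f' x|) = ∫ x in a..m, (x - a) * |f' x| := by
    apply intervalIntegral.integral_congr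
    intro x hx
    rw [Set.uIcc_of_le ham] at hx
    show |(x - a) * f' x| = (x - a) * |f' x|
    rw [abs_mul, abs_of_nonneg (by linarith [hx.1] : (0:ℝ) ≤ x - a)]
  have hcong2 : (∫ x in m..(a + c), |(x - (a + c)) * f' x|) =
      ∫ x in m..(a + c), (a + c - x) * |f' x| := by
    apply intervalIntegral.integral_congr
    intro x hx
    rw [Set.uIcc_of_le hmac] at hx
    show |(x - (a + c)) * f' x| = (a + c - x) * |f' x|
    rw [abs_mul, abs_of_nonpos (by linarith [hx.2] : x - (a + c) ≤ 0)]
    ring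
  -- weight integrals
  have hW1 : (∫ x in a..m, (x - a)) = c ^ 2 / 8 := by
    have h1 : (∫ x in a..m, (x - a)) = ∫ x in a..m, (-a + 1 * x + 0 * x ^ 2) :=
      intervalIntegral.integral_congr (fun x _ => by ring)
    rw [h1, quad_int, hm]; ring
  have hW2 : (∫ x in m..(a + c), (a + c - x)) = c ^ 2 / 8 := by
    have h1 : (∫ x in m..(a + c), (a + c - x)) =
        ∫ x in m..(a + c), ((a + c) + (-1) * x + 0 * x ^ 2) :=
      intervalIntegral.integral_congr (fun x _ => by ring)
    rw [h1, quad_int, hm]; ring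
  have hWh1 : (∫ x in a..m, (x - a) * (A ^ q + (B ^ q - A ^ q) / c * (x - a))) =
      (∫ x in a..m, (x - a)) * ((2 * A ^ q + B ^ q) / 3) := by
    have h1 : (∫ x in a..m, (x - a) * (A ^ q + (B ^ q - A ^ q) / c * (x - a))) =
        ∫ x in a..m, ((-a * A ^ q + a ^ 2 * ((B ^ q - A ^ q) / c)) + (A ^ q - 2 * a * ((B ^ q - A ^ q) / c)) * x + ((B ^ q - A ^ q) / c) * x ^ 2) :=
      intervalIntegral.integral_congr (fun x _ => by ring)
    rw [h1, quad_int, hW1, hm]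
    field_simp
    ring
  have hWh2 : (∫ x in m..(a + c), (a + c - x) * (A ^ q + (B ^ q - A ^ q) / c * (x - a))) =
      (∫ x in m..(a + c), (a + c - x)) * ((A ^ q + 2 * B ^ q) / 3) := by
    have h1 : (∫ x in m..(a + c), (a + c - x) * (A ^ q + (B ^ q - A ^ q) / c * (x - a))) =
        ∫ x in m..(a + c), (((a + c) * A ^ q - a * (a + c) * ((B ^ q - A ^ q) / c))
          + (- A ^ q + (a + c) * ((B ^ q - A ^ q) / c) + a * ((B ^ q - A ^ q) / c)) * x
          + (- ((B ^ q - A ^ q) / c)) * x ^ 2) :=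
      intervalIntegral.integral_congr (fun x _ => by ring)
    rw [h1, quad_int, hW2, hm]
    field_simp
    ring
  -- main bounds for each half
  have hI1 : |∫ x in a..m, (x - a) * f' x| ≤
      c ^ 2 / 8 * ((2 * A ^ q + B ^ q) / 3) ^ (1 / q) := by
    by_cases hAB : A = 0 ∧ B = 0
    · have hz : ∀ x ∈ Set.Icc a (a + c), f' x = 0 := by
        intro x hx
        have h := hφh x hx
        simp only [hAB.1, hAB.2, Real.zero_rpow hqne, sub_zero, zero_sub, add_zero, zero_div,
          zero_mul, mul_zero, neg_zero, zero_add, sub_self] at h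
        have h0 : |f' x| ^ q ≤ 0 := h
        have := Real.rpow_nonneg (abs_nonneg (f' x)) q
        have hz0 : |f' x| ^ q = 0 := le_antisymm h0 this
        have := (Real.rpow_eq_zero (abs_nonneg _) hqne).mp hz0
        exact abs_eq_zero.mp this
      have h0 : (∫ x in a..m, (x - a) * f' x) = 0 := by
        rw [intervalIntegral.integral_congr (g := fun _ => (0:ℝ))
          (fun x hx => by rw [hz x (hsub1 hx)]; ring)]
        simp
      rw [h0, abs_zero]
      positivity
    · have hu₁ : 0 < (2 * A ^ q + B ^ q) / 3 := by
        rcases not_and_or.mp hAB with h | h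
        · have hA' : 0 < A := lt_of_le_of_ne hA (Ne.symm h)
          have := Real.rpow_pos_of_pos hA' q
          linarith
        · have hB' : 0 < B := lt_of_le_of_ne hB (Ne.symm h)
          have := Real.rpow_pos_of_pos hB' q
          linarith
      have hwh := weighted_holder q ((2 * A ^ q + B ^ q) / 3) a m hq ham hu₁
        (fun x => x - a) (fun x => A ^ q + (B ^ q - A ^ q) / c * (x - a)) f'
        (by fun_prop) (by fun_prop)
        (fun x hx => by show (0:ℝ) ≤ x - a; linarith [hx.1])
        hfi1
        (fun x hx => hφh x (by
          rw [← Set.uIcc_of_le ham] at hx; exact hsub1 hx))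
        hWh1
      calc |∫ x in a..m, (x - a) * f' x|
          ≤ ∫ x in a..m, |(x - a) * f' x| :=
            intervalIntegral.abs_integral_le_integral_abs ham
        _ = ∫ x in a..m, (x - a) * |f' x| := hcong1
        _ ≤ (∫ x in a..m, (x - a)) * ((2 * A ^ q + B ^ q) / 3) ^ (1 / q) := hwh
        _ = c ^ 2 / 8 * ((2 * A ^ q + B ^ q) / 3) ^ (1 / q) := by rw [hW1]
  have hI2 : |∫ x in m..(a + c), (x - (a + c)) * f' x| ≤
      c ^ 2 / 8 * ((A ^ q + 2 * B ^ q) / 3) ^ (1 / q) := by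
    by_cases hAB : A = 0 ∧ B = 0
    · have hz : ∀ x ∈ Set.Icc a (a + c), f' x = 0 := by
        intro x hx
        have h := hφh x hx
        simp only [hAB.1, hAB.2, Real.zero_rpow hqne, sub_zero, zero_sub, add_zero, zero_div,
          zero_mul, mul_zero, neg_zero, zero_add, sub_self] at h
        have h0 : |f' x| ^ q ≤ 0 := h
        have := Real.rpow_nonneg (abs_nonneg (f' x)) q
        have hz0 : |f' x| ^ q = 0 := le_antisymm h0 this
        have := (Real.rpow_eq_zero (abs_nonneg _) hqne).mp hz0
        exact abs_eq_zero.mp this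
      have h0 : (∫ x in m..(a + c), (x - (a + c)) * f' x) = 0 := by
        rw [intervalIntegral.integral_congr (g := fun _ => (0:ℝ))
          (fun x hx => by rw [hz x (hsub2 hx)]; ring)]
        simp
      rw [h0, abs_zero]
      positivity
    · have hu₂ : 0 < (A ^ q + 2 * B ^ q) / 3 := by
        rcases not_and_or.mp hAB with h | h
        · have hA' : 0 < A := lt_of_le_of_ne hA (Ne.symm h)
          have := Real.rpow_pos_of_pos hA' q
          linarith
        · have hB' : 0 < B := lt_of_le_of_ne hB (Ne.symm h)
          have := Real.rpow_pos_of_pos hB' q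
          linarith
      have hwh := weighted_holder q ((A ^ q + 2 * B ^ q) / 3) m (a + c) hq hmac hu₂
        (fun x => a + c - x) (fun x => A ^ q + (B ^ q - A ^ q) / c * (x - a)) f'
        (by fun_prop) (by fun_prop)
        (fun x hx => by show (0:ℝ) ≤ a + c - x; linarith [hx.2])
        hfi2
        (fun x hx => hφh x (by
          rw [← Set.uIcc_of_le hmac] at hx; exact hsub2 hx))
        hWh2
      calc |∫ x in m..(a + c), (x - (a + c)) * f' x|
          ≤ ∫ x in m..(a + c), |(x - (a + c)) * f' x| :=
            intervalIntegral.abs_integral_le_integral_abs hmac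
        _ = ∫ x in m..(a + c), (a + c - x) * |f' x| := hcong2
        _ ≤ (∫ x in m..(a + c), (a + c - x)) * ((A ^ q + 2 * B ^ q) / 3) ^ (1 / q) := hwh
        _ = c ^ 2 / 8 * ((A ^ q + 2 * B ^ q) / 3) ^ (1 / q) := by rw [hW2]
  calc |(1 / c) * (∫ x in a..(a + c), f x) - f m|
      ≤ (1 / c) * (|∫ x in a..m, (x - a) * f' x| +
        |∫ x in m..(a + c), (x - (a + c)) * f' x|) := habs
    _ ≤ (1 / c) * (c ^ 2 / 8 * ((2 * A ^ q + B ^ q) / 3) ^ (1 / q) +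
        c ^ 2 / 8 * ((A ^ q + 2 * B ^ q) / 3) ^ (1 / q)) := by
          have hsum := add_le_add hI1 hI2
          have h1c : (0:ℝ) ≤ 1 / c := by positivity
          exact mul_le_mul_of_nonneg_left hsum h1c
    _ = (c / 8) * (((2 * A ^ q + B ^ q) / 3) ^ (1 / q) +
        ((A ^ q + 2 * B ^ q) / 3) ^ (1 / q)) := by
          field_simp
end

section
/- Let c > 0, q ≥ 1, f differentiable on an open interval containing [a, a+c] with integrable derivative, and suppose A, B ≥ 0 satisfy |f'(a+tc)|^q ≤ (1-t)·A^q + t·B^q for all t ∈ [0,1]. Then |(1/c) ∫_a^{a+c} f(x) dx − f(a + c/2)| ≤ (c/8)·((2^{1/q}+1)/3^{1/q})·(A + B). -/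
open MeasureTheory intervalIntegral

-- generic polynomial integral
lemma my_poly_integral (a c1 c2 α β : ℝ) :
    ∫ x in α..β, (c1 * (x - a) + c2 * (x - a)^2) =
      (c1/2 * (β - a)^2 + c2/3 * (β - a)^3) - (c1/2 * (α - a)^2 + c2/3 * (α - a)^3) := by
  apply integral_eq_sub_of_hasDerivAt
  · intro x _
    have d2 := (((hasDerivAt_id x).sub_const a).pow 2).const_mul (c1/2)
    have d3 := (((hasDerivAt_id x).sub_const a).pow 3).const_mul (c2/3)
    convert d2.add d3 using 1
    · funext y; simp only [Pi.add_apply, Pi.pow_apply, id_eq]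
    simp only [id_eq]
    push_cast
    ring
  · apply Continuous.intervalIntegrable
    continuity

-- subadditivity of x ↦ x^(1/q)
lemma my_rpow_subadd {x y q : ℝ} (hx : 0 ≤ x) (hy : 0 ≤ y) (hq : 1 ≤ q) :
    (x + y) ^ (1/q) ≤ x ^ (1/q) + y ^ (1/q) := by
  lift x to NNReal using hx
  lift y to NNReal using hy
  have hq0 : q ≠ 0 := by positivity
  have h := NNReal.rpow_add_rpow_le_add (x ^ (1/q)) (y ^ (1/q)) hq
  rw [← NNReal.rpow_mul, ← NNReal.rpow_mul, one_div, inv_mul_cancel₀ hq0,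
    NNReal.rpow_one, NNReal.rpow_one] at h
  have := NNReal.coe_le_coe.2 h
  push_cast at this
  simpa [NNReal.coe_rpow] using this

-- Hölder for interval integrals with weight
lemma my_holder (α β q : ℝ) (hab : α ≤ β) (hq : 1 ≤ q) (u g : ℝ → ℝ)
    (hu : Continuous u) (hg : Continuous g)
    (hu0 : ∀ x ∈ Set.Icc α β, 0 ≤ u x) (hg0 : ∀ x ∈ Set.Icc α β, 0 ≤ g x) :
    ∫ x in α..β, u x * (g x) ^ (1/q) ≤
      (∫ x in α..β, u x) ^ (1 - 1/q) * (∫ x in α..β, u x * g x) ^ (1/q) := by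
  rcases eq_or_lt_of_le hq with hq1 | hq1
  · subst hq1
    simp [Real.rpow_one]
  · set p : ℝ := q / (q - 1) with hp
    have hpq : p.HolderConjugate q := by
      rw [Real.holderConjugate_iff]
      constructor
      · rw [hp]
        rw [lt_div_iff₀ (by linarith)]
        linarith
      · rw [hp]
        field_simp
        ring
    have hinvp : 1 / p = 1 - 1 / q := by
      have := hpq.inv_add_inv_eq_one
      rw [one_div, one_div]
      linarith
    have hq0 : (0:ℝ) < q := by linarith
    have hp0 : (0:ℝ) < p := hpq.pos
    rw [intervalIntegral.integral_of_le hab, intervalIntegral.integral_of_le hab,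
      intervalIntegral.integral_of_le hab]
    set μ := volume.restrict (Set.Ioc α β) with hμ
    haveI : Fact (volume (Set.Ioc α β) < ⊤) := ⟨by simp [Real.volume_Ioc, ENNReal.ofReal_lt_top]⟩
    haveI : IsFiniteMeasure μ := MeasureTheory.Restrict.isFiniteMeasure _
    have hsub : Set.Ioc α β ⊆ Set.Icc α β := Set.Ioc_subset_Icc_self
    have hF : Continuous fun x => u x ^ (1/p) :=
      hu.rpow_const (fun x => Or.inr (by positivity))
    have hG : Continuous fun x => (u x * g x) ^ (1/q) :=
      (hu.mul hg).rpow_const (fun x => Or.inr (by positivity))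
    obtain ⟨C1, hC1⟩ := (isCompact_Icc (a := α) (b := β)).exists_bound_of_continuousOn hF.continuousOn
    obtain ⟨C2, hC2⟩ := (isCompact_Icc (a := α) (b := β)).exists_bound_of_continuousOn hG.continuousOn
    have hmemF : MemLp (fun x => u x ^ (1/p)) (ENNReal.ofReal p) μ := by
      apply MemLp.of_bound hF.aestronglyMeasurable C1
      rw [hμ, ae_restrict_iff' measurableSet_Ioc]
      exact Filter.Eventually.of_forall fun x hx => hC1 x (hsub hx)
    have hmemG : MemLp (fun x => (u x * g x) ^ (1/q)) (ENNReal.ofReal q) μ := by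
      apply MemLp.of_bound hG.aestronglyMeasurable C2
      rw [hμ, ae_restrict_iff' measurableSet_Ioc]
      exact Filter.Eventually.of_forall fun x hx => hC2 x (hsub hx)
    have hae : ∀ᵐ x ∂μ, x ∈ Set.Ioc α β := by
      rw [hμ, ae_restrict_iff' measurableSet_Ioc]
      exact Filter.Eventually.of_forall fun x hx => hx
    have h := integral_mul_le_Lp_mul_Lq_of_nonneg (μ := μ) hpq
      (f := fun x => u x ^ (1/p)) (g := fun x => (u x * g x) ^ (1/q))
      (hae.mono fun x _ => Real.rpow_nonneg (hu0 x (hsub ‹_›)) _)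
      (hae.mono fun x hx => Real.rpow_nonneg (mul_nonneg (hu0 x (hsub hx)) (hg0 x (hsub hx))) _)
      hmemF hmemG
    have e1 : ∫ x, u x ^ (1/p) * (u x * g x) ^ (1/q) ∂μ = ∫ x in Set.Ioc α β, u x * g x ^ (1/q) := by
      rw [hμ]
      apply MeasureTheory.integral_congr_ae
      filter_upwards [hae] with x hx
      have hux := hu0 x (hsub hx)
      have hgx := hg0 x (hsub hx)
      have hone : 1/p + 1/q = 1 := by rw [hinvp]; ring
      rw [Real.mul_rpow hux hgx, ← mul_assoc, ← Real.rpow_add' hux (by rw [hone]; norm_num),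
        hone, Real.rpow_one]
    have e2 : ∫ x, (u x ^ (1/p)) ^ p ∂μ = ∫ x in Set.Ioc α β, u x := by
      rw [hμ]
      apply MeasureTheory.integral_congr_ae
      filter_upwards [hae] with x hx
      rw [← Real.rpow_mul (hu0 x (hsub hx)), one_div, inv_mul_cancel₀ hp0.ne', Real.rpow_one]
    have e3 : ∫ x, ((u x * g x) ^ (1/q)) ^ q ∂μ = ∫ x in Set.Ioc α β, u x * g x := by
      rw [hμ]
      apply MeasureTheory.integral_congr_ae
      filter_upwards [hae] with x hx
      rw [← Real.rpow_mul (mul_nonneg (hu0 x (hsub hx)) (hg0 x (hsub hx))), one_div,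
        inv_mul_cancel₀ hq0.ne', Real.rpow_one]
    rw [e1, e2, e3, hinvp] at h
    exact h
theorem phi_convex_midpoint_subadd (a c A B q : ℝ) (hc : 0 < c) (hq : 1 ≤ q)
    (hA : 0 ≤ A) (hB : 0 ≤ B) (f f' : ℝ → ℝ)
    (hf : ∀ x ∈ Set.Icc a (a + c), HasDerivAt f (f' x) x)
    (hint : IntervalIntegrable f' volume a (a + c))
    (hbound : ∀ t ∈ Set.Icc (0:ℝ) 1,
      |f' (a + t * c)| ^ q ≤ (1 - t) * A ^ q + t * B ^ q) :
    |(1 / c) * (∫ x in a..(a + c), f x) - f (a + c / 2)| ≤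
      (c / 8) * ((2 ^ (1 / q) + 1) / 3 ^ (1 / q)) * (A + B) := by
  have hq0 : (0:ℝ) < q := by linarith
  have hs0 : (0:ℝ) < 1/q := by positivity
  have hcne : c ≠ 0 := hc.ne'
  set b := a + c with hb
  set m := a + c / 2 with hm
  have hamb : a ≤ m := by rw [hm]; linarith
  have hmb : m ≤ b := by rw [hm, hb]; linarith
  have hab : a ≤ b := le_trans hamb hmb
  have hIam : Set.uIcc a m = Set.Icc a m := Set.uIcc_of_le hamb
  have hImb : Set.uIcc m b = Set.Icc m b := Set.uIcc_of_le hmb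
  have hIab : Set.uIcc a b = Set.Icc a b := Set.uIcc_of_le hab
  have hsub1 : Set.Icc a m ⊆ Set.Icc a b := Set.Icc_subset_Icc le_rfl hmb
  have hsub2 : Set.Icc m b ⊆ Set.Icc a b := Set.Icc_subset_Icc hamb le_rfl
  set G : ℝ → ℝ := fun x => ((b - x) * A ^ q + (x - a) * B ^ q) / c with hG
  have hGc : Continuous G := by
    rw [hG]; fun_prop
  have hG0 : ∀ x ∈ Set.Icc a b, 0 ≤ G x := by
    intro x hx
    have h1 : 0 ≤ b - x := by linarith [hx.2]
    have h2 : 0 ≤ x - a := by linarith [hx.1]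
    have h3 : 0 ≤ A ^ q := Real.rpow_nonneg hA q
    have h4 : 0 ≤ B ^ q := Real.rpow_nonneg hB q
    positivity
  -- pointwise bound on |f'|
  have hfd : ∀ x ∈ Set.Icc a b, |f' x| ≤ G x ^ (1/q) := by
    intro x hx
    have hx1 : a + ((x - a)/c) * c = x := by field_simp; ring
    have ht : (x - a)/c ∈ Set.Icc (0:ℝ) 1 := by
      constructor
      · apply div_nonneg _ hc.le; linarith [hx.1]
      · rw [div_le_one hc]
        have := hx.2; rw [hb] at this; linarith
    have h := hbound _ ht
    rw [hx1] at h
    have h2 : |f' x| = (|f' x| ^ q) ^ (1/q) := by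
      rw [← Real.rpow_mul (abs_nonneg _), mul_one_div, div_self hq0.ne', Real.rpow_one]
    have hGeq : (1 - (x - a)/c) * A ^ q + (x - a)/c * B ^ q = G x := by
      simp only [hG, hb]
      rw [eq_div_iff hcne]
      field_simp
      ring
    rw [h2]
    exact Real.rpow_le_rpow (Real.rpow_nonneg (abs_nonneg _) _)
      (le_trans h (le_of_eq hGeq)) hs0.le
  -- continuity and integrability
  have hfc : ContinuousOn f (Set.Icc a b) := fun x hx => (hf x hx).continuousAt.continuousWithinAt
  have hint1 : IntervalIntegrable f' volume a m := hint.mono_set (by rw [hIam, hIab]; exact hsub1)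
  have hint2 : IntervalIntegrable f' volume m b := hint.mono_set (by rw [hImb, hIab]; exact hsub2)
  have hfint1 : IntervalIntegrable f volume a m :=
    (hfc.mono (by rw [hIam]; exact hsub1)).intervalIntegrable
  have hfint2 : IntervalIntegrable f volume m b :=
    (hfc.mono (by rw [hImb]; exact hsub2)).intervalIntegrable
  have hu1int : IntervalIntegrable (fun x => (x - a) * f' x) volume a m :=
    hint1.continuousOn_mul (by fun_prop)
  have hu2int : IntervalIntegrable (fun x => (x - b) * f' x) volume m b :=
    hint2.continuousOn_mul (by fun_prop)
  set S1 := ∫ x in a..m, (x - a) * f' x with hS1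
  set S2 := ∫ x in m..b, (x - b) * f' x with hS2
  -- integration by parts identities
  have e1 := integral_eq_sub_of_hasDerivAt (f := fun y => (y - a) * f y)
      (f' := fun x => f x + (x - a) * f' x) (a := a) (b := m)
      (by
        intro x hx
        rw [hIam] at hx
        have := ((hasDerivAt_id x).sub_const a).mul (hf x (hsub1 hx))
        convert this using 1 <;> first | rfl | (funext y; simp only [Pi.mul_apply, id_eq]) |
          (simp only [id_eq]; ring))
      (hfint1.add hu1int)
  have e2 := integral_eq_sub_of_hasDerivAt (f := fun y => (y - b) * f y)
      (f' := fun x => f x + (x - b) * f' x) (a := m) (b := b)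
      (by
        intro x hx
        rw [hImb] at hx
        have := ((hasDerivAt_id x).sub_const b).mul (hf x (hsub2 hx))
        convert this using 1 <;> first | rfl | (funext y; simp only [Pi.mul_apply, id_eq]) |
          (simp only [id_eq]; ring))
      (hfint2.add hu2int)
  rw [intervalIntegral.integral_add hfint1 hu1int] at e1
  rw [intervalIntegral.integral_add hfint2 hu2int] at e2
  have hma1 : (m - a) * f m - (a - a) * f a = (c/2) * f m := by rw [hm]; ring
  have hmb2 : (b - b) * f b - (m - b) * f m = (c/2) * f m := by rw [hm, hb]; ring
  rw [hma1] at e1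
  rw [hmb2] at e2
  have key : (∫ x in a..b, f x) = c * f m - S1 - S2 := by
    rw [← intervalIntegral.integral_add_adjacent_intervals hfint1 hfint2]
    linear_combination e1 + e2
  -- bounds on |S1|, |S2| by weighted integrals
  have hGs : Continuous fun x => G x ^ (1/q) := hGc.rpow_const (fun x => Or.inr hs0.le)
  have bound1 : |S1| ≤ ∫ x in a..m, (x - a) * G x ^ (1/q) := by
    calc |S1| ≤ ∫ x in a..m, |(x - a) * f' x| :=
          intervalIntegral.abs_integral_le_integral_abs hamb
      _ = ∫ x in a..m, (x - a) * |f' x| := by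
          apply intervalIntegral.integral_congr
          intro x hx
          rw [hIam] at hx
          show |(x - a) * f' x| = (x - a) * |f' x|
          rw [abs_mul, abs_of_nonneg (by linarith [hx.1] : (0:ℝ) ≤ x - a)]
      _ ≤ ∫ x in a..m, (x - a) * G x ^ (1/q) := by
          apply intervalIntegral.integral_mono_on hamb
          · exact hint1.abs.continuousOn_mul (by fun_prop)
          · apply Continuous.intervalIntegrable
            exact (continuous_id.sub continuous_const).mul hGs
          · intro x hx
            exact mul_le_mul_of_nonneg_left (hfd x (hsub1 hx)) (by linarith [hx.1])
  have bound2 : |S2| ≤ ∫ x in m..b, (b - x) * G x ^ (1/q) := by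
    calc |S2| ≤ ∫ x in m..b, |(x - b) * f' x| :=
          intervalIntegral.abs_integral_le_integral_abs hmb
      _ = ∫ x in m..b, (b - x) * |f' x| := by
          apply intervalIntegral.integral_congr
          intro x hx
          rw [hImb] at hx
          show |(x - b) * f' x| = (b - x) * |f' x|
          rw [abs_mul, abs_sub_comm, abs_of_nonneg (by linarith [hx.2] : (0:ℝ) ≤ b - x)]
      _ ≤ ∫ x in m..b, (b - x) * G x ^ (1/q) := by
          apply intervalIntegral.integral_mono_on hmb
          · exact hint2.abs.continuousOn_mul (by fun_prop)
          · apply Continuous.intervalIntegrable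
            exact (continuous_const.sub continuous_id).mul hGs
          · intro x hx
            exact mul_le_mul_of_nonneg_left (hfd x (hsub2 hx)) (by linarith [hx.2])
  -- Hölder
  have hol1 := my_holder a m q hamb hq (fun x => x - a) G (by fun_prop) hGc
    (fun x hx => sub_nonneg.2 hx.1) (fun x hx => hG0 x (hsub1 hx))
  have hol2 := my_holder m b q hmb hq (fun x => b - x) G (by fun_prop) hGc
    (fun x hx => sub_nonneg.2 hx.2) (fun x hx => hG0 x (hsub2 hx))
  -- integral computations
  have J1 : ∫ x in a..m, (x - a) = c^2/8 := by
    have hpoly := my_poly_integral a 1 0 a m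
    rw [show (∫ x in a..m, (x - a)) = ∫ x in a..m, ((1:ℝ) * (x - a) + 0 * (x - a)^2) by
      apply intervalIntegral.integral_congr; intro x _; ring]
    rw [hpoly, hm]
    ring
  have J2 : ∫ x in a..m, (x - a) * G x = c^2 * (2 * A^q + B^q) / 24 := by
    have hpoly := my_poly_integral a (A^q) ((B^q - A^q)/c) a m
    rw [show (∫ x in a..m, (x - a) * G x)
        = ∫ x in a..m, (A^q * (x - a) + (B^q - A^q)/c * (x - a)^2) by
      apply intervalIntegral.integral_congr
      intro x _
      simp only [hG, hb]
      field_simp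
      ring]
    rw [hpoly, hm]
    field_simp
    ring
  have J3 : ∫ x in m..b, (b - x) = c^2/8 := by
    have hpoly := my_poly_integral b (-1) 0 m b
    rw [show (∫ x in m..b, (b - x)) = ∫ x in m..b, ((-1:ℝ) * (x - b) + 0 * (x - b)^2) by
      apply intervalIntegral.integral_congr; intro x _; ring]
    rw [hpoly, hm, hb]
    ring
  have J4 : ∫ x in m..b, (b - x) * G x = c^2 * (A^q + 2 * B^q) / 24 := by
    have hpoly := my_poly_integral b (-(B^q)) ((A^q - B^q)/c) m b
    rw [show (∫ x in m..b, (b - x) * G x)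
        = ∫ x in m..b, (-(B^q) * (x - b) + (A^q - B^q)/c * (x - b)^2) by
      apply intervalIntegral.integral_congr
      intro x _
      simp only [hG, hb]
      field_simp
      ring]
    rw [hpoly, hm, hb]
    field_simp
    ring
  rw [J1, J2] at hol1
  rw [J3, J4] at hol2
  -- scalar estimates
  have hc8 : (0:ℝ) < c^2/8 := by positivity
  have hAq : (A^q) ^ (1/q) = A := by
    rw [← Real.rpow_mul hA, mul_one_div, div_self hq0.ne', Real.rpow_one]
  have hBq : (B^q) ^ (1/q) = B := by
    rw [← Real.rpow_mul hB, mul_one_div, div_self hq0.ne', Real.rpow_one]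
  have hAq0 : 0 ≤ A ^ q := Real.rpow_nonneg hA q
  have hBq0 : 0 ≤ B ^ q := Real.rpow_nonneg hB q
  have h3pos : (0:ℝ) < 3 ^ (1/q) := Real.rpow_pos_of_pos (by norm_num) _
  have scal : ∀ X Y : ℝ, 0 ≤ X → 0 ≤ Y →
      (c^2/8) ^ (1 - 1/q) * (c^2 * (X + Y) / 24) ^ (1/q)
        ≤ (c^2/8) * ((X ^ (1/q) + Y ^ (1/q)) / 3 ^ (1/q)) := by
    intro X Y hX hY
    have h1 : c^2 * (X + Y) / 24 = (c^2/8) * ((X + Y) / 3) := by ring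
    have h2 : (c^2/8) ^ (1 - 1/q) * (c^2 * (X + Y) / 24) ^ (1/q)
        = (c^2/8) * ((X + Y) ^ (1/q) / 3 ^ (1/q)) := by
      rw [h1, Real.mul_rpow hc8.le (by positivity), ← mul_assoc,
        ← Real.rpow_add hc8, sub_add_cancel, Real.rpow_one,
        Real.div_rpow (by positivity) (by norm_num : (0:ℝ) ≤ 3)]
    rw [h2]
    gcongr
    exact my_rpow_subadd hX hY hq
  have hS1b : |S1| ≤ (c^2/8) * ((2 ^ (1/q) * A + B) / 3 ^ (1/q)) := by
    refine le_trans bound1 (le_trans hol1 (le_trans (scal (2 * A^q) (B^q)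
      (by positivity) hBq0) (le_of_eq ?_)))
    rw [Real.mul_rpow (by norm_num : (0:ℝ) ≤ 2) hAq0, hAq, hBq]
  have hS2b : |S2| ≤ (c^2/8) * ((A + 2 ^ (1/q) * B) / 3 ^ (1/q)) := by
    refine le_trans bound2 (le_trans hol2 (le_trans (scal (A^q) (2 * B^q)
      hAq0 (by positivity)) (le_of_eq ?_)))
    rw [Real.mul_rpow (by norm_num : (0:ℝ) ≤ 2) hBq0, hAq, hBq]
  -- final assembly
  have hfin : (1/c) * (∫ x in a..b, f x) - f m = -((S1 + S2)/c) := by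
    rw [key]
    field_simp
    ring
  rw [hfin, abs_neg, abs_div, abs_of_pos hc]
  calc |S1 + S2| / c ≤ (|S1| + |S2|) / c := by
        gcongr
        exact abs_add_le _ _
    _ ≤ ((c^2/8) * ((2 ^ (1/q) * A + B) / 3 ^ (1/q))
          + (c^2/8) * ((A + 2 ^ (1/q) * B) / 3 ^ (1/q))) / c := by
        gcongr
    _ = (c / 8) * ((2 ^ (1/q) + 1) / 3 ^ (1/q)) * (A + B) := by
        field_simp
        ring
end

section
/- Let c > 0, f differentiable on an open interval containing [a, a+c] with integrable derivative, and suppose M ≥ 0 satisfies |f'(a+tc)| ≤ M for all t ∈ [0,1]. Then |(1/c) ∫_a^{a+c} f(x) dx − (f(a)+f(a+c))/2| ≤ (c/4)·M. -/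
open MeasureTheory intervalIntegral

theorem quasi_phi_convex_trapezoid (a c M : ℝ) (hc : 0 < c) (hM : 0 ≤ M)
    (f f' : ℝ → ℝ)
    (hf : ∀ x ∈ Set.Icc a (a + c), HasDerivAt f (f' x) x)
    (hint : IntervalIntegrable f' volume a (a + c))
    (hbound : ∀ t ∈ Set.Icc (0:ℝ) 1, |f' (a + t * c)| ≤ M) :
    |(1 / c) * (∫ x in a..(a + c), f x) - (f a + f (a + c)) / 2| ≤ (c / 4) * M := by
  set b := a + c with hb
  have hab : a ≤ b := by rw [hb]; linarith
  set m := (a + b) / 2 with hm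
  have hfc : ContinuousOn f (Set.Icc a b) := fun x hx =>
    (hf x hx).continuousAt.continuousWithinAt
  have hfint : IntervalIntegrable f volume a b :=
    hfc.intervalIntegrable_of_Icc hab
  have hbound' : ∀ x ∈ Set.Icc a b, |f' x| ≤ M := by
    intro x hx
    have hx1 : (0:ℝ) ≤ (x - a) / c := by
      apply div_nonneg _ hc.le; linarith [hx.1]
    have hx2 : (x - a) / c ≤ 1 := by
      rw [div_le_one hc]
      have := hx.2; rw [hb] at this; linarith
    have := hbound ((x - a) / c) ⟨hx1, hx2⟩
    rwa [show a + (x - a) / c * c = x by field_simp; ring] at this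
  have hderiv : ∀ x ∈ Set.uIcc a b,
      HasDerivAt (fun y => (y - m) * f y) (f x + (x - m) * f' x) x := by
    intro x hx
    rw [Set.uIcc_of_le hab] at hx
    have h1 : HasDerivAt (fun y => y - m) 1 x := (hasDerivAt_id x).sub_const m
    have h2 := h1.mul (hf x hx)
    convert h2 using 1 <;> first | rfl | ring
  have hgint : IntervalIntegrable (fun x => (x - m) * f' x) volume a b :=
    hint.continuousOn_mul (by fun_prop)
  have key : ∫ x in a..b, (f x + (x - m) * f' x) = (b - m) * f b - (a - m) * f a :=
    intervalIntegral.integral_eq_sub_of_hasDerivAt hderiv (hfint.add hgint)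
  have split : (∫ x in a..b, f x) + (∫ x in a..b, (x - m) * f' x)
      = (b - m) * f b - (a - m) * f a := by
    rw [← intervalIntegral.integral_add hfint hgint]; exact key
  -- bound the kernel integral
  have habsint : IntervalIntegrable (fun x => M * |x - m|) volume a b := by
    apply ContinuousOn.intervalIntegrable; fun_prop
  have h1 : ‖∫ x in a..b, (x - m) * f' x‖ ≤ |(∫ x in a..b, M * |x - m|)| := by
    apply intervalIntegral.norm_integral_le_abs_of_norm_le _ habsint
    rw [MeasureTheory.ae_restrict_iff' measurableSet_uIoc]
    filter_upwards with t ht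
    rw [Set.uIoc_of_le hab] at ht
    have hbd := hbound' t ⟨ht.1.le, ht.2⟩
    rw [Real.norm_eq_abs, abs_mul, mul_comm]
    exact mul_le_mul hbd le_rfl (abs_nonneg _) hM
  have hcomp : ∫ x in a..b, M * |x - m| = M * (c ^ 2 / 4) := by
    rw [intervalIntegral.integral_const_mul]
    have ham : a ≤ m := by rw [hm, hb]; linarith
    have hmb : m ≤ b := by rw [hm, hb]; linarith
    have i1 : IntervalIntegrable (fun x => |x - m|) volume a m := by
      apply ContinuousOn.intervalIntegrable; fun_prop
    have i2 : IntervalIntegrable (fun x => |x - m|) volume m b := by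
      apply ContinuousOn.intervalIntegrable; fun_prop
    rw [← intervalIntegral.integral_add_adjacent_intervals i1 i2]
    have e1 : (∫ x in a..m, |x - m|) = ∫ x in a..m, (m - x) := by
      apply intervalIntegral.integral_congr
      intro x hx
      rw [Set.uIcc_of_le ham] at hx
      show |x - m| = m - x
      rw [abs_of_nonpos (by linarith [hx.2])]; ring
    have e2 : (∫ x in m..b, |x - m|) = ∫ x in m..b, (x - m) := by
      apply intervalIntegral.integral_congr
      intro x hx
      rw [Set.uIcc_of_le hmb] at hx
      show |x - m| = x - m
      exact abs_of_nonneg (by linarith [hx.1])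
    rw [e1, e2]
    have hma : m - a = c / 2 := by rw [hm, hb]; ring
    have hbm : b - m = c / 2 := by rw [hm, hb]; ring
    rw [intervalIntegral.integral_sub intervalIntegrable_const intervalIntegrable_id,
        intervalIntegral.integral_sub intervalIntegrable_id intervalIntegrable_const]
    simp only [intervalIntegral.integral_const, integral_id, smul_eq_mul]
    have : (m - a) * m - (m ^ 2 - a ^ 2) / 2 + ((b ^ 2 - m ^ 2) / 2 - (b - m) * m)
        = c ^ 2 / 4 := by
      linear_combination ((m - a) / 2 + c / 4) * hma + ((b - m) / 2 + c / 4) * hbm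
    rw [this]
  have hI : |∫ x in a..b, (x - m) * f' x| ≤ M * (c ^ 2 / 4) := by
    calc |∫ x in a..b, (x - m) * f' x| ≤ |(∫ x in a..b, M * |x - m|)| := h1
      _ = M * (c ^ 2 / 4) := by
          rw [hcomp, abs_of_nonneg (by positivity)]
  have heq : (1 / c) * (∫ x in a..b, f x) - (f a + f b) / 2
      = -(1 / c) * (∫ x in a..b, (x - m) * f' x) := by
    have hbm : (b - m) * f b - (a - m) * f a = (c / 2) * (f a + f b) := by
      rw [hm, hb]; ring
    rw [hbm] at split
    have hfe : (∫ x in a..b, f x)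
        = c / 2 * (f a + f b) - (∫ x in a..b, (x - m) * f' x) := by linarith
    rw [hfe]
    field_simp
    ring
  rw [heq, abs_mul, abs_neg, abs_of_nonneg (by positivity : (0:ℝ) ≤ 1 / c)]
  calc (1 / c) * |∫ x in a..b, (x - m) * f' x| ≤ (1 / c) * (M * (c ^ 2 / 4)) := by
        apply mul_le_mul_of_nonneg_left hI (by positivity)
    _ = (c / 4) * M := by field_simp
end

section
/- Let c > 0, f differentiable on an open interval containing [a, a+c] with integrable derivative, and suppose M ≥ 0 satisfies |f'(a+tc)| ≤ M for all t ∈ [0,1]. Then |(1/c) ∫_a^{a+c} f(x) dx − f(a + c/2)| ≤ (c/4)·M. -/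
open MeasureTheory intervalIntegral

theorem quasi_phi_convex_midpoint (a c M : ℝ) (hc : 0 < c) (hM : 0 ≤ M)
    (f f' : ℝ → ℝ)
    (hf : ∀ x ∈ Set.Icc a (a + c), HasDerivAt f (f' x) x)
    (hint : IntervalIntegrable f' volume a (a + c))
    (hbound : ∀ t ∈ Set.Icc (0:ℝ) 1, |f' (a + t * c)| ≤ M) :
    |(1 / c) * (∫ x in a..(a + c), f x) - f (a + c / 2)| ≤ (c / 4) * M := by
  set m := a + c / 2 with hm
  have hac : a ≤ a + c := by linarith
  have hmIcc : m ∈ Set.Icc a (a + c) := ⟨by simp [hm]; linarith, by simp [hm]; linarith⟩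
  -- bound on f' on the whole interval
  have hb : ∀ y ∈ Set.Icc a (a + c), |f' y| ≤ M := by
    intro y hy
    have ht : (y - a) / c ∈ Set.Icc (0:ℝ) 1 := by
      constructor
      · have : 0 ≤ y - a := by linarith [hy.1]
        positivity
      · rw [div_le_one hc]; linarith [hy.2]
    have h := hbound _ ht
    have hy' : a + (y - a) / c * c = y := by field_simp; ring
    rwa [hy'] at h
  have hfc : ContinuousOn f (Set.Icc a (a + c)) := fun x hx =>
    (hf x hx).continuousAt.continuousWithinAt
  have hfint : IntervalIntegrable f volume a (a + c) :=
    (hfc.mono (by rw [Set.uIcc_of_le hac])).intervalIntegrable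
  -- pointwise bound
  have key : ∀ x ∈ Set.Icc a (a + c), |f x - f m| ≤ M * |x - m| := by
    intro x hx
    have hsub : Set.uIcc m x ⊆ Set.Icc a (a + c) := Set.uIcc_subset_Icc hmIcc hx
    have hftc : f x - f m = ∫ t in m..x, f' t :=
      (intervalIntegral.integral_eq_sub_of_hasDerivAt (fun t ht => hf t (hsub ht))
        (hint.mono_set (by rw [Set.uIcc_of_le hac]; exact hsub))).symm
    rw [hftc]
    have h := intervalIntegral.norm_integral_le_of_norm_le_const (f := f') (a := m)
      (b := x) (C := M) (fun t ht => hb t (hsub (Set.uIoc_subset_uIcc ht)))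
    simpa using h
  -- integrability of the comparison function
  have hgint : IntervalIntegrable (fun x => M * |x - m|) volume a (a + c) :=
    Continuous.intervalIntegrable (by continuity) a (a + c)
  -- the main integral inequality
  have hI : |∫ x in a..(a + c), (f x - f m)| ≤ abs (∫ x in a..(a + c), M * |x - m|) := by
    have h := intervalIntegral.norm_integral_le_of_norm_le (μ := volume) (a := a)
      (b := a + c) (f := fun x => f x - f m) (g := fun x => M * |x - m|) hac ?_ hgint
    · exact (Real.norm_eq_abs _ ▸ h).trans (le_abs_self _)
    · refine (ae_of_all _ fun t ht => ?_)
      have ht' : t ∈ Set.Icc a (a + c) := by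
        exact Set.Ioc_subset_Icc_self ht
      simpa using key t ht'
  -- compute the comparison integral
  have habs : (∫ x in a..(a + c), |x - m|) = c ^ 2 / 4 := by
    have h1 : (∫ x in a..(a + c), |x - m|) = ∫ x in (a - m)..(a + c - m), |x| :=
      intervalIntegral.integral_comp_sub_right (fun u => |u|) m
    have h2 : a - m = -(c / 2) := by rw [hm]; ring
    have h3 : a + c - m = c / 2 := by rw [hm]; ring
    rw [h1, h2, h3]
    have hsplit : (∫ x in (-(c/2))..(c/2), |x|) =
        (∫ x in (-(c/2))..(0:ℝ), |x|) + ∫ x in (0:ℝ)..(c/2), |x| :=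
      (intervalIntegral.integral_add_adjacent_intervals
        (continuous_abs.intervalIntegrable _ _) (continuous_abs.intervalIntegrable _ _)).symm
    have e1 : (∫ x in (-(c/2))..(0:ℝ), |x|) = ∫ x in (-(c/2))..(0:ℝ), -x := by
      refine intervalIntegral.integral_congr fun x hx => ?_
      rw [Set.uIcc_of_le (by linarith)] at hx
      exact abs_of_nonpos hx.2
    have e2 : (∫ x in (0:ℝ)..(c/2), |x|) = ∫ x in (0:ℝ)..(c/2), x := by
      refine intervalIntegral.integral_congr fun x hx => ?_
      rw [Set.uIcc_of_le (by linarith)] at hx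
      exact abs_of_nonneg hx.1
    rw [hsplit, e1, e2, intervalIntegral.integral_neg, integral_id, integral_id]
    ring
  have hcomp : (∫ x in a..(a + c), M * |x - m|) = M * (c ^ 2 / 4) := by
    rw [intervalIntegral.integral_const_mul, habs]
  -- constant integral
  have hconst : (∫ _x in a..(a + c), f m) = c * f m := by
    simp [intervalIntegral.integral_const, smul_eq_mul]
  have hsub' : (∫ x in a..(a + c), (f x - f m)) =
      (∫ x in a..(a + c), f x) - c * f m := by
    rw [intervalIntegral.integral_sub hfint (intervalIntegrable_const), hconst]
  have hIle : |(∫ x in a..(a + c), f x) - c * f m| ≤ M * (c ^ 2 / 4) := by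
    rw [← hsub']
    calc |∫ x in a..(a + c), (f x - f m)| ≤ abs (∫ x in a..(a + c), M * |x - m|) := hI
      _ = M * (c ^ 2 / 4) := by rw [hcomp, abs_of_nonneg (by positivity)]
  have hrw : (1 / c) * (∫ x in a..(a + c), f x) - f m =
      (1 / c) * ((∫ x in a..(a + c), f x) - c * f m) := by
    field_simp
  rw [hrw, abs_mul, abs_of_nonneg (by positivity : (0:ℝ) ≤ 1 / c)]
  calc (1 / c) * |(∫ x in a..(a + c), f x) - c * f m| ≤ (1 / c) * (M * (c ^ 2 / 4)) := by
        exact mul_le_mul_of_nonneg_left hIle (by positivity)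
    _ = (c / 4) * M := by field_simp
end
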